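/- arXiv:2103.11858 — 7 statements merged into one kernel-verified Lean document; each statement's English description precedes it below -/
import Mathlib

section
/- Fix constants c > 0 and b < 0. If u : ℝ → ℝ is twice continuously differentiable, satisfies c·u(x) = (1 − b·u(x)²)·u''(x) for all x ∈ ℝ, and u(x) → 0 and u'(x) → 0 as |x| → ∞, then u is identically zero. In other words, the stationary equation c·u = (1 − b·u²)·u'' admits no nontrivial classical solitary wave solution when b < 0. -/
open Filter

/-- For c > 0 and b < 0, the stationary equation
`c·u = (1 − b·u²)·u''` admits no nontrivial classical solitary wave:
any C² solution decaying to zero (together with its derivative) at infinity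
is identically zero. -/
theorem no_solitary_wave_for_negative_b
    (c b : ℝ) (hc : 0 < c) (hb : b < 0) (u : ℝ → ℝ)
    (hu : ContDiff ℝ 2 u)
    (heq : ∀ x : ℝ, c * u x = (1 - b * u x ^ 2) * deriv (deriv u) x)
    (hdecay : Tendsto u (cocompact ℝ) (nhds 0))
    (hdecay' : Tendsto (deriv u) (cocompact ℝ) (nhds 0)) :
    ∀ x : ℝ, u x = 0 := by
  set k : ℝ := c / (-b) with hk
  have hkpos : 0 < k := div_pos hc (neg_pos.mpr hb)
  have hpos : ∀ x, 0 < 1 - b * u x ^ 2 := by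
    intro x; nlinarith [sq_nonneg (u x)]
  have hud : Differentiable ℝ u := hu.differentiable (by norm_num)
  have hud' : Differentiable ℝ (deriv u) := by
    have h2 : ContDiff ℝ (1 + 1) u := by norm_num; exact hu
    exact ((contDiff_succ_iff_deriv.mp h2).2.2).differentiable one_ne_zero
  set g : ℝ → ℝ := fun x => (deriv u x) ^ 2 - k * Real.log (1 - b * u x ^ 2) with hg
  have hgd : ∀ x, HasDerivAt g 0 x := by
    intro x
    have h1 : HasDerivAt u (deriv u x) x := (hud x).hasDerivAt
    have h2 : HasDerivAt (deriv u) (deriv (deriv u) x) x := (hud' x).hasDerivAt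
    have hv : HasDerivAt (fun y => 1 - b * u y ^ 2)
        (-(b * (2 * u x ^ 1 * deriv u x))) x := ((h1.pow 2).const_mul b).const_sub 1
    have hlog : HasDerivAt (fun y => Real.log (1 - b * u y ^ 2))
        ((-(b * (2 * u x ^ 1 * deriv u x))) / (1 - b * u x ^ 2)) x :=
      hv.log (hpos x).ne'
    have hsq : HasDerivAt (fun y => (deriv u y) ^ 2)
        (2 * deriv u x ^ 1 * deriv (deriv u) x) x := h2.pow 2
    have := hsq.sub (hlog.const_mul k)
    refine this.congr_deriv ?_
    symm
    have huu : deriv (deriv u) x = c * u x / (1 - b * u x ^ 2) := by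
      rw [eq_div_iff (hpos x).ne']
      linarith [heq x]
    rw [huu, hk]
    field_simp [hb.ne, (hpos x).ne']
    ring
  have hgdiff : Differentiable ℝ g := fun x => (hgd x).differentiableAt
  have hgc : ∀ x, g x = g 0 := fun x =>
    is_const_of_deriv_eq_zero hgdiff (fun y => (hgd y).deriv) x 0
  have hglim : Tendsto g (cocompact ℝ) (nhds 0) := by
    have hinner : Tendsto (fun x => 1 - b * u x ^ 2) (cocompact ℝ) (nhds 1) := by
      have := ((hdecay.pow 2).const_mul b).const_sub 1
      simpa using this
    have hlog : Tendsto (fun x => Real.log (1 - b * u x ^ 2)) (cocompact ℝ) (nhds 0) := by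
      have := (Real.continuousAt_log one_ne_zero).tendsto.comp hinner
      simpa [Function.comp_def] using this
    have := (hdecay'.pow 2).sub (hlog.const_mul k)
    simpa using this
  have hgconst : Tendsto g (cocompact ℝ) (nhds (g 0)) := by
    have : g = fun _ => g 0 := funext hgc
    rw [this]; exact tendsto_const_nhds
  have hg0 : g 0 = 0 := tendsto_nhds_unique hgconst hglim
  have hgz : ∀ x, g x = 0 := fun x => (hgc x).trans hg0
  -- main argument
  intro x
  by_contra hx
  have hux : 0 < |u x| := abs_pos.mpr hx
  have hev : ∀ᶠ y in cocompact ℝ, |u y| < |u x| := by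
    have : ∀ᶠ y in cocompact ℝ, u y ∈ Metric.ball (0 : ℝ) (|u x|) :=
      hdecay (Metric.ball_mem_nhds 0 hux)
    filter_upwards [this] with y hy
    simpa [Real.dist_eq] using hy
  obtain ⟨K, hK, hKs⟩ := hasBasis_cocompact.eventually_iff.mp hev
  have hxK : x ∈ K := by
    by_contra h
    exact absurd (hKs h) (lt_irrefl _)
  obtain ⟨z, hzK, hmax⟩ := hK.exists_isMaxOn ⟨x, hxK⟩
    ((hud.continuous.pow 2).continuousOn)
  have hglobal : ∀ y, u y ^ 2 ≤ u z ^ 2 := by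
    intro y
    by_cases hy : y ∈ K
    · exact hmax hy
    · have h1 : |u y| < |u x| := hKs hy
      have h2 : u x ^ 2 ≤ u z ^ 2 := hmax hxK
      nlinarith [sq_abs (u y), sq_abs (u x), abs_nonneg (u y)]
  have hloc : IsLocalMax (fun y => u y ^ 2) z := Filter.Eventually.of_forall hglobal
  have hdz : HasDerivAt (fun y => u y ^ 2) (2 * u z ^ 1 * deriv u z) z :=
    (hud z).hasDerivAt.pow 2
  have hderiv0 : 2 * u z ^ 1 * deriv u z = 0 := by
    rw [← hdz.deriv]; exact hloc.deriv_eq_zero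
  have huz : u z ≠ 0 := by
    intro h
    have := hglobal x
    rw [h] at this
    nlinarith [sq_abs (u x)]
  have hduz : deriv u z = 0 := by
    have h2 : u z ^ 1 ≠ 0 := by simpa using huz
    rcases mul_eq_zero.mp hderiv0 with h | h
    · rcases mul_eq_zero.mp h with h' | h'
      · norm_num at h'
      · exact absurd h' h2
    · exact h
  have hlogpos : 0 < Real.log (1 - b * u z ^ 2) := by
    apply Real.log_pos
    nlinarith [sq_nonneg (u z), pow_pos (abs_pos.mpr huz) 2, sq_abs (u z)]
  have := hgz z
  rw [hg] at this
  simp only [hduz] at this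
  nlinarith [mul_pos hkpos hlogpos]
end

section
/- For every real number C, the function ξ ↦ 1/√(2C − log(ξ² − 1)) is integrable on the interval (1, √(1 + e^{2C})); that is, the integral ℓ_C := ∫_1^{√(1+e^{2C})} dξ/√(2C − log(ξ² − 1)) is finite. -/
open MeasureTheory Set

/-- for every C ∈ ℝ, the function ξ ↦ 1/√(2C − log(ξ² − 1)) is
integrable on (1, √(1 + e^{2C})); the integral defines the half-width ℓ_C of
the head of the solitary wave u_C. -/
theorem family_head_integrand_integrable (C : ℝ) :
    IntegrableOn (fun ξ : ℝ => 1 / Real.sqrt (2 * C - Real.log (ξ ^ 2 - 1)))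
      (Ioo 1 (Real.sqrt (1 + Real.exp (2 * C)))) := by
  set b := Real.sqrt (1 + Real.exp (2 * C)) with hbdef
  have hE : (0:ℝ) < Real.exp (2*C) := Real.exp_pos _
  have hb2 : b ^ 2 = 1 + Real.exp (2*C) := Real.sq_sqrt (by positivity)
  have hb1 : 1 < b := by
    nlinarith [Real.sqrt_nonneg (1 + Real.exp (2 * C)), hb2, hE]
  set M : ℝ := Real.sqrt (Real.exp (2*C) / 2) with hMdef
  -- integrability of the dominating function
  have hg : IntegrableOn (fun ξ : ℝ => M * (b - ξ) ^ (-(1/2) : ℝ)) (Ioo 1 b) := by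
    have h1 : IntervalIntegrable (fun x : ℝ => x ^ (-(1/2):ℝ)) volume 0 (b - 1) :=
      intervalIntegral.intervalIntegrable_rpow' (by norm_num)
    have h2 := h1.comp_sub_left b
    have h3 : IntervalIntegrable (fun x : ℝ => (b - x) ^ (-(1/2):ℝ)) volume 1 b := by
      simpa using h2.symm
    have h4 : IntegrableOn (fun x : ℝ => (b - x) ^ (-(1/2):ℝ)) (Ioc 1 b) volume :=
      (intervalIntegrable_iff_integrableOn_Ioc_of_le hb1.le).mp h3
    exact (h4.mono_set Ioo_subset_Ioc_self).const_mul M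
  refine hg.mono' ?_ ?_
  · exact by
      have m1 : Measurable fun ξ : ℝ => Real.sqrt (2 * C - Real.log (ξ ^ 2 - 1)) :=
        Real.continuous_sqrt.measurable.comp
          (measurable_const.sub (Real.measurable_log.comp (by fun_prop)))
      exact ((measurable_const.div m1).aestronglyMeasurable).restrict
  · rw [ae_restrict_iff' measurableSet_Ioo]
    refine Filter.Eventually.of_forall fun ξ hξ => ?_
    obtain ⟨hξ1, hξb⟩ := hξ
    have hξpos : (0:ℝ) < ξ := lt_trans one_pos hξ1
    have hsq : (1:ℝ) < ξ ^ 2 := by nlinarith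
    have hsqb : ξ ^ 2 < b ^ 2 := by nlinarith
    -- key lower bound for the expression under the square root
    have hlog : Real.log ((ξ ^ 2 - 1) / Real.exp (2*C)) ≤ (ξ ^ 2 - 1) / Real.exp (2*C) - 1 :=
      Real.log_le_sub_one_of_pos (div_pos (by linarith) hE)
    have hlogdiv : Real.log ((ξ ^ 2 - 1) / Real.exp (2*C))
        = Real.log (ξ ^ 2 - 1) - 2*C := by
      rw [Real.log_div (by linarith) (ne_of_gt hE), Real.log_exp]
    have hkey : (b ^ 2 - ξ ^ 2) / Real.exp (2*C) ≤ 2 * C - Real.log (ξ ^ 2 - 1) := by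
      rw [hlogdiv] at hlog
      have : (b ^ 2 - ξ ^ 2) / Real.exp (2*C) = 1 - (ξ ^ 2 - 1) / Real.exp (2*C) := by
        field_simp
        linarith [hb2]
      rw [this]
      linarith
    have hbx : (0:ℝ) < b - ξ := by linarith
    have hc : 2 * (b - ξ) / Real.exp (2*C) ≤ (b ^ 2 - ξ ^ 2) / Real.exp (2*C) := by
      exact (div_le_div_iff_of_pos_right hE).mpr (by nlinarith)
    have ht0 : (0:ℝ) < 2 * (b - ξ) / Real.exp (2*C) := by positivity
    have ht : 2 * (b - ξ) / Real.exp (2*C) ≤ 2 * C - Real.log (ξ ^ 2 - 1) :=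
      le_trans hc hkey
    -- now the bound on the integrand
    have hsqrtpos : 0 < Real.sqrt (2 * (b - ξ) / Real.exp (2*C)) := Real.sqrt_pos.mpr ht0
    have hle : 1 / Real.sqrt (2 * C - Real.log (ξ ^ 2 - 1))
        ≤ 1 / Real.sqrt (2 * (b - ξ) / Real.exp (2*C)) :=
      one_div_le_one_div_of_le hsqrtpos (Real.sqrt_le_sqrt ht)
    have heq : 1 / Real.sqrt (2 * (b - ξ) / Real.exp (2*C)) = M * (b - ξ) ^ (-(1/2) : ℝ) := by
      rw [Real.rpow_neg hbx.le, ← Real.sqrt_eq_rpow, hMdef,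
        ← Real.sqrt_inv, ← Real.sqrt_mul (by positivity)]
      congr 1
      field_simp
      rw [← Real.sqrt_mul (x := 2 * (b - ξ) / Real.exp (2*C)) (by positivity), div_mul_div_comm,
        mul_comm (2 * (b - ξ)), div_self (ne_of_gt (mul_pos hE (mul_pos two_pos hbx))), Real.sqrt_one]
    rw [Real.norm_eq_abs, abs_of_nonneg (by positivity)]
    rw [← heq]
    exact hle
end

section
/- There exists a continuous even function u : ℝ → ℝ such that u(0) = 1, 0 < u(x) < 1 for all x ≠ 0, u(x) → 0 as |x| → ∞, u is twice continuously differentiable on ℝ \ {0}, u is strictly decreasing on (0, ∞), and for all x ≠ 0 it satisfies (1 − u(x)²)·u''(x) = u(x) together with the first-order invariant u'(x)² = −log(1 − u(x)²). -/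
open Filter Set Topology MeasureTheory intervalIntegral

namespace Cusped

noncomputable def L (v : ℝ) : ℝ := -Real.log (1 - v^2)
noncomputable def g (v : ℝ) : ℝ := Real.sqrt (L v)
noncomputable def hh (v : ℝ) : ℝ := (g v)⁻¹
noncomputable def F (y : ℝ) : ℝ := ∫ v in y..1, hh v

lemma L_pos {v : ℝ} (hv : v ∈ Ioo (0:ℝ) 1) : 0 < L v := by
  have h1 : 0 < 1 - v^2 := by nlinarith [hv.1, hv.2]
  have h2 : 1 - v^2 < 1 := by nlinarith [hv.1, hv.2]
  have := Real.log_neg h1 h2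
  simp [L]; linarith

lemma g_pos {v : ℝ} (hv : v ∈ Ioo (0:ℝ) 1) : 0 < g v := Real.sqrt_pos.2 (L_pos hv)

lemma hh_pos {v : ℝ} (hv : v ∈ Ioo (0:ℝ) 1) : 0 < hh v := inv_pos.2 (g_pos hv)

lemma g_sq {v : ℝ} (hv : v ∈ Ioo (0:ℝ) 1) : (g v)^2 = L v :=
  Real.sq_sqrt (L_pos hv).le

lemma L_contAt {v : ℝ} (hv : (1:ℝ) - v^2 ≠ 0) : ContinuousAt L v := by
  have h2 : ContinuousAt (fun v : ℝ => (1 - v^2)) v := by fun_prop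
  exact (h2.log hv).neg

lemma hh_contAt {v : ℝ} (hv : v ∈ Ioo (0:ℝ) 1) : ContinuousAt hh v := by
  have h1 : (1:ℝ) - v^2 ≠ 0 := by nlinarith [hv.1, hv.2]
  exact ((Real.continuous_sqrt.continuousAt.comp (L_contAt h1)).inv₀ (g_pos hv).ne')

lemma sqrt_atTop : Tendsto Real.sqrt atTop atTop := by
  apply tendsto_atTop_atTop.2
  intro b
  exact ⟨b^2, fun a ha => by
    rcases le_or_gt b 0 with hb | hb
    · exact hb.trans (Real.sqrt_nonneg a)
    · exact (Real.le_sqrt hb.le (by nlinarith)).2 ha⟩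

lemma hh_one : hh 1 = 0 := by simp [hh, g, L]

lemma hh_contWithin_one : ContinuousWithinAt hh (Ico (0:ℝ) 1) 1 := by
  rw [ContinuousWithinAt, hh_one]
  have h1 : Tendsto (fun v : ℝ => 1 - v^2) (𝓝[Ico (0:ℝ) 1] 1) (𝓝[>] 0) := by
    apply tendsto_nhdsWithin_of_tendsto_nhds_of_eventually_within
    · have : Tendsto (fun v : ℝ => 1 - v^2) (𝓝 1) (𝓝 (1 - 1^2)) :=
        ((continuous_const.sub (continuous_pow 2)).tendsto 1)
      simpa using this.mono_left nhdsWithin_le_nhds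
    · filter_upwards [self_mem_nhdsWithin] with v hv
      exact mem_Ioi.2 (by nlinarith [hv.1, hv.2])
  have h2 : Tendsto L (𝓝[Ico (0:ℝ) 1] 1) atTop := by
    have h := Real.tendsto_log_nhdsGT_zero.comp h1
    have : Tendsto (fun v : ℝ => -Real.log (1 - v^2)) (𝓝[Ico (0:ℝ) 1] 1) atTop :=
      tendsto_neg_atTop_iff.mpr h
    exact this
  have h3 : Tendsto g (𝓝[Ico (0:ℝ) 1] 1) atTop := sqrt_atTop.comp h2
  exact tendsto_inv_atTop_zero.comp h3
lemma hh_nonneg (v : ℝ) : 0 ≤ hh v := by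
  exact inv_nonneg.2 (Real.sqrt_nonneg _)

lemma hh_measurable : Measurable hh := by
  apply Measurable.inv
  exact Real.continuous_sqrt.measurable.comp
    ((Real.measurable_log.comp ((measurable_const.sub (measurable_id.pow_const 2)))).neg)

lemma hh_contOn {a : ℝ} (ha : a ∈ Ioo (0:ℝ) 1) : ContinuousOn hh (Icc a 1) := by
  intro v hv
  rcases lt_or_eq_of_le hv.2 with hv1 | hv1
  · exact (hh_contAt ⟨lt_of_lt_of_le ha.1 hv.1, hv1⟩).continuousWithinAt
  · subst hv1
    have h1 : ContinuousWithinAt hh (insert (1:ℝ) (Ico (0:ℝ) 1)) 1 := hh_contWithin_one.insert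
    rw [Ico_insert_right (by norm_num : (0:ℝ) ≤ 1)] at h1
    exact h1.mono (Icc_subset_Icc_left ha.1.le)

lemma hh_intble {y : ℝ} (hy : y ∈ Ioo (0:ℝ) 1) : IntervalIntegrable hh volume y 1 :=
  ContinuousOn.intervalIntegrable_of_Icc hy.2.le (hh_contOn hy)

lemma hasDerivAt_F {y : ℝ} (hy : y ∈ Ioo (0:ℝ) 1) : HasDerivAt F (-(hh y)) y := by
  have hmeas : StronglyMeasurableAtFilter hh (𝓝 y) :=
    ⟨univ, univ_mem, hh_measurable.stronglyMeasurable.aestronglyMeasurable⟩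
  have h := (integral_hasDerivAt_right (hh_intble hy).symm hmeas (hh_contAt hy)).neg
  have : F = fun t => -∫ v in (1:ℝ)..t, hh v := by
    funext t; exact integral_symm 1 t
  rw [this]; exact h

lemma F_pos {y : ℝ} (hy : y ∈ Ioo (0:ℝ) 1) : 0 < F y := by
  apply intervalIntegral_pos_of_pos_on (hh_intble hy)
    (fun x hx => hh_pos ⟨lt_trans hy.1 hx.1, hx.2⟩) hy.2

lemma F_strictAnti : StrictAntiOn F (Ioo (0:ℝ) 1) := by
  apply strictAntiOn_of_deriv_neg (convex_Ioo 0 1)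
  · exact fun y hy => ((hasDerivAt_F hy).continuousAt.continuousWithinAt)
  · intro y hy
    rw [interior_Ioo] at hy
    rw [(hasDerivAt_F hy).deriv]
    exact neg_neg_iff_pos.mpr (hh_pos hy)
lemma L_le {v : ℝ} (hv : v ∈ Icc (0:ℝ) (1/2)) : L v ≤ 2 * v^2 := by
  have h1 : 0 ≤ v := hv.1
  have h2 : v ≤ 1/2 := hv.2
  have hp : 0 < 1 - v^2 := by nlinarith
  have hexp : 2*v^2 + 1 ≤ Real.exp (2*v^2) := Real.add_one_le_exp _
  have key : Real.exp (-(2*v^2)) ≤ 1 - v^2 := by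
    rw [Real.exp_neg]
    rw [inv_le_comm₀ (Real.exp_pos _) hp]
    calc (1 - v^2)⁻¹ ≤ 1 + 2*v^2 := by
          rw [inv_eq_one_div, div_le_iff₀ hp]
          have hv2 : v^2 ≤ 1/4 := by nlinarith
          nlinarith [mul_nonneg (sq_nonneg v) (by linarith : (0:ℝ) ≤ 1 - 2*v^2)]
      _ ≤ Real.exp (2*v^2) := by linarith
  have := (Real.le_log_iff_exp_le hp).2 key
  simp only [L]; linarith

lemma hh_lower {v : ℝ} (hv : v ∈ Icc (0:ℝ) (1/2)) (hv0 : 0 < v) :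
    (Real.sqrt 2 * v)⁻¹ ≤ hh v := by
  have hg : g v ≤ Real.sqrt 2 * v := by
    have : g v ≤ Real.sqrt (2 * v^2) := Real.sqrt_le_sqrt (L_le hv)
    rwa [Real.sqrt_mul (by norm_num) _, Real.sqrt_sq hv.1] at this
  exact inv_anti₀ (g_pos ⟨hv0, by linarith [hv.2]⟩) hg

lemma F_small {x : ℝ} (hx : 0 < x) : ∃ b ∈ Ioo (0:ℝ) 1, F b < x := by
  obtain ⟨C, hC⟩ := (isCompact_Icc (a := (1/2:ℝ)) (b := 1)).exists_bound_of_continuousOn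
    (hh_contOn (by norm_num))
  set D := max C 1 with hD
  have hD1 : (1:ℝ) ≤ D := le_max_right _ _
  have hD0 : (0:ℝ) < D := by linarith
  set b := max (1/2) (1 - x/(2*D)) with hb
  have hb2 : b < 1 := by
    apply max_lt (by norm_num)
    have : 0 < x/(2*D) := by positivity
    linarith
  have hb1 : (1/2:ℝ) ≤ b := le_max_left _ _
  refine ⟨b, ⟨by linarith, hb2⟩, ?_⟩
  have hbound : ∀ v ∈ Set.uIoc b 1, ‖hh v‖ ≤ D := by
    intro v hv
    rw [uIoc_of_le hb2.le] at hv
    have := hC v ⟨by linarith [hv.1], hv.2⟩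
    calc ‖hh v‖ ≤ C := this
      _ ≤ D := le_max_left _ _
  have hnorm := intervalIntegral.norm_integral_le_of_norm_le_const hbound
  have h1b : |1 - b| = 1 - b := abs_of_nonneg (by linarith)
  have hFb : |F b| ≤ D * (1 - b) := by
    calc |F b| = ‖F b‖ := rfl
      _ ≤ D * |1 - b| := hnorm
      _ = D * (1 - b) := by rw [h1b]
  have h1mb : 1 - b ≤ x/(2*D) := by
    have := le_max_right (1/2:ℝ) (1 - x/(2*D)); linarith [this.trans_eq hb.symm]
  calc F b ≤ |F b| := le_abs_self _
    _ ≤ D * (1 - b) := hFb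
    _ ≤ D * (x/(2*D)) := by
        apply mul_le_mul_of_nonneg_left h1mb hD0.le
    _ = x/2 := by field_simp
    _ < x := by linarith

lemma F_big (x : ℝ) : ∃ a ∈ Ioo (0:ℝ) (1/2), x < F a := by
  set s2 := Real.sqrt 2 with hs2
  have hs2pos : 0 < s2 := Real.sqrt_pos.2 (by norm_num)
  set a := (1/2) * Real.exp (-(s2 * (|x|+1))) with ha
  have ha0 : 0 < a := by positivity
  have hexplt : Real.exp (-(s2 * (|x|+1))) < 1 := by
    rw [Real.exp_lt_one_iff]
    have : 0 < s2 * (|x|+1) := by positivity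
    linarith
  have ha12 : a < 1/2 := by
    rw [ha]; nlinarith [Real.exp_pos (-(s2 * (|x|+1)))]
  refine ⟨a, ⟨ha0, ha12⟩, ?_⟩
  -- split the integral
  have hint1 : IntervalIntegrable hh volume a (1/2) := by
    apply ContinuousOn.intervalIntegrable_of_Icc ha12.le
    exact (hh_contOn ⟨ha0, by linarith⟩).mono (Icc_subset_Icc le_rfl (by norm_num))
  have hint2 : IntervalIntegrable hh volume (1/2) 1 := hh_intble (by norm_num)
  have hsplit : (∫ v in a..(1/2), hh v) + (∫ v in (1/2:ℝ)..1, hh v) = F a :=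
    integral_add_adjacent_intervals hint1 hint2
  have h2nonneg : 0 ≤ ∫ v in (1/2:ℝ)..1, hh v :=
    intervalIntegral.integral_nonneg (by norm_num) (fun u _ => hh_nonneg u)
  -- lower bound the first piece
  have hmono : (∫ v in a..(1/2), (s2 * v)⁻¹) ≤ ∫ v in a..(1/2), hh v := by
    apply intervalIntegral.integral_mono_on ha12.le ?_ hint1
    · intro v hv
      exact hh_lower ⟨(ha0.trans_le hv.1).le, hv.2⟩ (ha0.trans_le hv.1)
    · apply ContinuousOn.intervalIntegrable_of_Icc ha12.le
      intro v hv
      have hvpos : 0 < v := ha0.trans_le hv.1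
      exact ((continuousAt_const.mul continuousAt_id).inv₀ (mul_pos hs2pos hvpos).ne').continuousWithinAt
  have hcompute : (∫ v in a..(1/2), (s2 * v)⁻¹) = |x| + 1 := by
    have : ∀ v : ℝ, (s2 * v)⁻¹ = s2⁻¹ * v⁻¹ := fun v => by rw [mul_inv]
    simp_rw [this]
    rw [intervalIntegral.integral_const_mul, integral_inv_of_pos ha0 (by norm_num : (0:ℝ) < 1/2)]
    rw [ha]
    rw [show (1/2 : ℝ) / ((1/2) * Real.exp (-(s2 * (|x|+1)))) = Real.exp (s2 * (|x|+1)) by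
      rw [Real.exp_neg]; field_simp]
    rw [Real.log_exp]
    field_simp
  have : x < |x| + 1 := by cases abs_cases x with
    | inl h => linarith [h.1]
    | inr h => linarith [h.1, abs_nonneg x]
  linarith [hmono, hcompute ▸ hmono]

lemma exF {x : ℝ} (hx : 0 < x) : ∃ y ∈ Ioo (0:ℝ) 1, F y = x := by
  obtain ⟨a, ha, hFa⟩ := F_big x
  obtain ⟨b, hb, hFb⟩ := F_small hx
  have ha1 : a ∈ Ioo (0:ℝ) 1 := ⟨ha.1, by linarith [ha.2]⟩
  have hab : a < b := by
    by_contra hab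
    push_neg at hab
    rcases lt_or_eq_of_le hab with h | h
    · have := F_strictAnti hb ha1 h; linarith
    · subst h; linarith
  have hcont : ContinuousOn F (Icc a b) := by
    intro y hy
    have : y ∈ Ioo (0:ℝ) 1 := ⟨lt_of_lt_of_le ha.1 hy.1, lt_of_le_of_lt hy.2 hb.2⟩
    exact (hasDerivAt_F this).continuousAt.continuousWithinAt
  have := intermediate_value_Icc' hab.le hcont
  obtain ⟨y, hy, hFy⟩ := this ⟨hFb.le, hFa.le⟩
  exact ⟨y, ⟨lt_of_lt_of_le ha.1 hy.1, lt_of_le_of_lt hy.2 hb.2⟩, hFy⟩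
noncomputable def U (x : ℝ) : ℝ := if hx : 0 < x then (exF hx).choose else 1

lemma U_spec {x : ℝ} (hx : 0 < x) : U x ∈ Ioo (0:ℝ) 1 ∧ F (U x) = x := by
  rw [U, dif_pos hx]
  exact ⟨(exF hx).choose_spec.1, (exF hx).choose_spec.2⟩

lemma U_zero : U 0 = 1 := by rw [U, dif_neg (lt_irrefl 0)]

lemma U_strictAnti : StrictAntiOn U (Ioi (0:ℝ)) := by
  intro x hx x' hx' hlt
  have h1 := U_spec (mem_Ioi.1 hx)
  have h2 := U_spec (mem_Ioi.1 hx')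
  by_contra hcon
  push_neg at hcon
  rcases lt_or_eq_of_le hcon with h | h
  · have := F_strictAnti h1.1 h2.1 h
    rw [h1.2, h2.2] at this; linarith
  · have : x = x' := by rw [← h1.2, ← h2.2, h]
    linarith

lemma U_continuousAt {x : ℝ} (hx : 0 < x) : ContinuousAt U x := by
  have hy0 := (U_spec hx).1
  have hFy0 := (U_spec hx).2
  rw [ContinuousAt]
  apply tendsto_order.2
  constructor
  · intro l hl
    set y1 := max l (U x / 2) with hy1def
    have hy1lt : y1 < U x := max_lt hl (by linarith [hy0.1])
    have hy1mem : y1 ∈ Ioo (0:ℝ) 1 :=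
      ⟨lt_of_lt_of_le (by linarith [hy0.1]) (le_max_right _ _), lt_trans hy1lt hy0.2⟩
    have hxF : x < F y1 := by
      rw [← hFy0]; exact F_strictAnti hy1mem hy0 hy1lt
    filter_upwards [Ioo_mem_nhds hx hxF] with z hz
    have hUz := U_spec hz.1
    have hkey : y1 < U z := by
      by_contra hcon
      push_neg at hcon
      rcases lt_or_eq_of_le hcon with h | h
      · have := F_strictAnti hUz.1 hy1mem h
        rw [hUz.2] at this; linarith [hz.2]
      · have : z = F y1 := by rw [← hUz.2, h]
        linarith [hz.2]
    exact lt_of_le_of_lt (le_max_left _ _) hkey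
  · intro u' hu'
    set y2 := min u' ((U x + 1)/2) with hy2def
    have hy2gt : U x < y2 := lt_min hu' (by linarith [hy0.2])
    have hy2mem : y2 ∈ Ioo (0:ℝ) 1 :=
      ⟨lt_trans hy0.1 hy2gt, lt_of_le_of_lt (min_le_right _ _) (by linarith [hy0.2])⟩
    have hxF : F y2 < x := by
      rw [← hFy0]; exact F_strictAnti hy0 hy2mem hy2gt
    filter_upwards [Ioi_mem_nhds hxF] with z hz
    have hz0 : 0 < z := lt_trans (F_pos hy2mem) hz
    have hUz := U_spec hz0
    have hkey : U z < y2 := by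
      by_contra hcon
      push_neg at hcon
      rcases lt_or_eq_of_le hcon with h | h
      · have := F_strictAnti hy2mem hUz.1 h
        rw [hUz.2] at this
        exact absurd (lt_trans hz this) (lt_irrefl _)
      · have : z = F y2 := by rw [← hUz.2, ← h]
        linarith [mem_Ioi.1 hz]
    exact lt_of_lt_of_le hkey (min_le_left _ _)

lemma hasDerivAt_U {x : ℝ} (hx : 0 < x) : HasDerivAt U (-(g (U x))) x := by
  have hU := U_spec hx
  have hF := hasDerivAt_F hU.1
  have hne : -(hh (U x)) ≠ 0 := neg_ne_zero.2 (hh_pos hU.1).ne'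
  have hev : ∀ᶠ z in 𝓝 x, F (U z) = z := by
    filter_upwards [Ioi_mem_nhds hx] with z hz
    exact (U_spec (mem_Ioi.1 hz)).2
  have h := HasDerivAt.of_local_left_inverse (U_continuousAt hx) hF hne hev
  have : (-(hh (U x)))⁻¹ = -(g (U x)) := by
    rw [hh, ← inv_neg, inv_inv]
  rwa [this] at h

lemma tendsto_U_zero : Tendsto U (𝓝[>] (0:ℝ)) (𝓝 1) := by
  apply tendsto_order.2
  constructor
  · intro l hl
    rcases le_or_gt l 0 with hl0 | hl0
    · filter_upwards [self_mem_nhdsWithin] with z hz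
      exact lt_of_le_of_lt hl0 (U_spec (mem_Ioi.1 hz)).1.1
    · have hlmem : l ∈ Ioo (0:ℝ) 1 := ⟨hl0, hl⟩
      filter_upwards [Ioo_mem_nhdsGT_of_mem (left_mem_Ico.2 (F_pos hlmem))] with z hz
      have hUz := U_spec hz.1
      by_contra hcon
      push_neg at hcon
      rcases lt_or_eq_of_le hcon with h | h
      · have := F_strictAnti hUz.1 hlmem h
        rw [hUz.2] at this; linarith [hz.2]
      · have : z = F l := by rw [← hUz.2, h]
        linarith [hz.2]
  · intro u' hu'
    filter_upwards [self_mem_nhdsWithin] with z hz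
    exact lt_trans (U_spec (mem_Ioi.1 hz)).1.2 hu'
lemma U_lt_of {e z : ℝ} (he : e ∈ Ioo (0:ℝ) 1) (hz : F e < z) : U z < e := by
  have hz0 : 0 < z := lt_trans (F_pos he) hz
  have hUz := U_spec hz0
  by_contra hcon
  push_neg at hcon
  rcases lt_or_eq_of_le hcon with h | h
  · have := F_strictAnti he hUz.1 h
    rw [hUz.2] at this; linarith
  · have : z = F e := by rw [← hUz.2, ← h]
    linarith

noncomputable def u (x : ℝ) : ℝ := U |x|

lemma u_zero : u 0 = 1 := by simp [u, U_zero]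

lemma u_even (x : ℝ) : u (-x) = u x := by simp [u]

lemma u_mem {x : ℝ} (hx : x ≠ 0) : u x ∈ Ioo (0:ℝ) 1 := (U_spec (abs_pos.2 hx)).1

lemma one_sub_sq_pos {x : ℝ} (hx : x ≠ 0) : 0 < 1 - (u x)^2 := by
  have := u_mem hx; nlinarith [this.1, this.2]

lemma u_continuous : Continuous u := by
  rw [continuous_iff_continuousAt]
  intro x
  rcases eq_or_ne x 0 with rfl | hx
  · rw [← continuousWithinAt_compl_self, ContinuousWithinAt]
    have habs : Tendsto (fun z : ℝ => |z|) (𝓝[≠] (0:ℝ)) (𝓝[>] 0) := by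
      apply tendsto_nhdsWithin_of_tendsto_nhds_of_eventually_within
      · have h0 : Tendsto (fun z : ℝ => |z|) (𝓝 (0:ℝ)) (𝓝 |(0:ℝ)|) :=
          continuous_abs.tendsto 0
        rw [abs_zero] at h0
        exact h0.mono_left nhdsWithin_le_nhds
      · filter_upwards [self_mem_nhdsWithin] with z hz
        exact mem_Ioi.2 (abs_pos.2 hz)
    have := tendsto_U_zero.comp habs
    rw [u_zero]; exact this
  · exact (U_continuousAt (abs_pos.2 hx)).comp continuous_abs.continuousAt

lemma u_strictAnti : StrictAntiOn u (Ioi (0:ℝ)) := by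
  intro x hx y hy hxy
  have h1 : |x| = x := abs_of_pos (mem_Ioi.1 hx)
  have h2 : |y| = y := abs_of_pos (mem_Ioi.1 hy)
  simpa only [u, h1, h2] using U_strictAnti hx hy hxy

lemma u_cocompact : Tendsto u (cocompact ℝ) (𝓝 0) := by
  rw [Metric.tendsto_nhds]
  intro ε hε
  set ε0 : ℝ := (min ε 1)/2 with hε0
  have hε0pos : 0 < ε0 := by
    have := lt_min hε zero_lt_one; positivity
  have hε0mem : ε0 ∈ Ioo (0:ℝ) 1 := ⟨hε0pos, by
    have : min ε 1 ≤ 1 := min_le_right _ _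
    rw [hε0]; linarith⟩
  rw [hasBasis_cocompact.eventually_iff]
  refine ⟨Icc (-(F ε0)) (F ε0), isCompact_Icc, fun x hx => ?_⟩
  have hFx : F ε0 < |x| := by
    by_contra hcon
    push_neg at hcon
    exact hx ⟨neg_le_of_abs_le hcon, le_of_abs_le hcon⟩
  have hU := U_lt_of hε0mem hFx
  have hx0 : x ≠ 0 := by
    intro h; rw [h] at hFx; simp at hFx; linarith [F_pos hε0mem]
  rw [Real.dist_eq, sub_zero, abs_of_pos (u_mem hx0).1]
  have : ε0 < ε := by
    have : min ε 1 ≤ ε := min_le_left _ _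
    rw [hε0]; linarith
  exact lt_trans hU this

lemma hasDerivAt_u_pos {x : ℝ} (hx : 0 < x) : HasDerivAt u (-(g (u x))) x := by
  have h := hasDerivAt_U hx
  have hev : u =ᶠ[𝓝 x] U := by
    filter_upwards [Ioi_mem_nhds hx] with z hz
    simp [u, abs_of_pos (mem_Ioi.1 hz)]
  have h2 := h.congr_of_eventuallyEq hev
  simpa [u, abs_of_pos hx] using h2

lemma hasDerivAt_u_neg {x : ℝ} (hx : x < 0) : HasDerivAt u (g (u x)) x := by
  have hpos : 0 < -x := neg_pos.2 hx
  have h1 := hasDerivAt_U hpos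
  have h2 : HasDerivAt (fun z : ℝ => U (-z)) (-(g (U (-x))) * (-1)) x :=
    h1.comp x (hasDerivAt_neg x)
  have hev : u =ᶠ[𝓝 x] (fun z : ℝ => U (-z)) := by
    filter_upwards [Iio_mem_nhds hx] with z hz
    simp [u, abs_of_neg (mem_Iio.1 hz)]
  have h3 := h2.congr_of_eventuallyEq hev
  have hval : -(g (U (-x))) * (-1) = g (u x) := by
    simp [u, abs_of_neg hx]
  rwa [hval] at h3

lemma hasDerivAt_g {y : ℝ} (hy : y ∈ Ioo (0:ℝ) 1) :
    HasDerivAt g (y / ((1 - y^2) * g y)) y := by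
  have hden : (1:ℝ) - y^2 ≠ 0 := by nlinarith [hy.1, hy.2]
  have h1 : HasDerivAt (fun y : ℝ => 1 - y^2) (-(2*y)) y := by
    simpa using ((hasDerivAt_pow 2 y).const_sub 1)
  have h2 := (Real.hasDerivAt_log hden).comp y h1
  have hL : HasDerivAt L (2*y / (1 - y^2)) y := by
    have h3 := h2.neg
    have : -((1 - y^2)⁻¹ * -(2*y)) = 2*y / (1 - y^2) := by field_simp
    rw [this] at h3
    exact h3
  have hgs := (Real.hasDerivAt_sqrt (L_pos hy).ne').comp y hL
  have hval : 1 / (2 * Real.sqrt (L y)) * (2*y / (1 - y^2)) = y / ((1 - y^2) * g y) := by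
    have hg := (g_pos hy).ne'
    rw [show Real.sqrt (L y) = g y from rfl]
    field_simp
  rw [hval] at hgs
  exact hgs

noncomputable def q (x : ℝ) : ℝ := u x / (1 - (u x)^2)

lemma deriv_u_eventually_pos {x : ℝ} (hx : 0 < x) :
    deriv u =ᶠ[𝓝 x] (fun z => -(g (u z))) := by
  filter_upwards [Ioi_mem_nhds hx] with z hz
  exact (hasDerivAt_u_pos (mem_Ioi.1 hz)).deriv

lemma deriv_u_eventually_neg {x : ℝ} (hx : x < 0) :
    deriv u =ᶠ[𝓝 x] (fun z => g (u z)) := by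
  filter_upwards [Iio_mem_nhds hx] with z hz
  exact (hasDerivAt_u_neg (mem_Iio.1 hz)).deriv

lemma hasDerivAt_deriv_u {x : ℝ} (hx : x ≠ 0) : HasDerivAt (deriv u) (q x) x := by
  rcases lt_or_gt_of_ne hx with hneg | hpos
  · have hmem := u_mem hx
    have hcomp := (hasDerivAt_g hmem).comp x (hasDerivAt_u_neg hneg)
    have hval : u x / ((1 - (u x)^2) * g (u x)) * g (u x) = q x := by
      have := (g_pos hmem).ne'
      have := (one_sub_sq_pos hx).ne'
      rw [q]; field_simp
    rw [hval] at hcomp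
    exact hcomp.congr_of_eventuallyEq (deriv_u_eventually_neg hneg)
  · have hmem := u_mem hx
    have hcomp := ((hasDerivAt_g hmem).comp x (hasDerivAt_u_pos hpos)).neg
    have hval : -(u x / ((1 - (u x)^2) * g (u x)) * -(g (u x))) = q x := by
      have := (g_pos hmem).ne'
      have := (one_sub_sq_pos hx).ne'
      rw [q]; field_simp
    rw [hval] at hcomp
    exact hcomp.congr_of_eventuallyEq (deriv_u_eventually_pos hpos)

lemma u_ode {x : ℝ} (hx : x ≠ 0) : (1 - u x ^ 2) * deriv (deriv u) x = u x := by
  rw [(hasDerivAt_deriv_u hx).deriv, q]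
  field_simp [(one_sub_sq_pos hx).ne']

lemma u_invariant {x : ℝ} (hx : x ≠ 0) : (deriv u x)^2 = -Real.log (1 - u x ^ 2) := by
  have hmem := u_mem hx
  have : (deriv u x)^2 = (g (u x))^2 := by
    rcases lt_or_gt_of_ne hx with hneg | hpos
    · rw [(hasDerivAt_u_neg hneg).deriv]
    · rw [(hasDerivAt_u_pos hpos).deriv]; ring
  rw [this, g_sq hmem, L]

lemma q_continuousOn : ContinuousOn q ({(0:ℝ)}ᶜ) := by
  apply ContinuousOn.div (u_continuous.continuousOn)
  · exact (continuous_const.sub (u_continuous.pow 2)).continuousOn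
  · intro x hx
    exact (one_sub_sq_pos (by simpa using hx)).ne'

lemma u_contDiffOn : ContDiffOn ℝ 2 u ({(0:ℝ)}ᶜ) := by
  have hopen : IsOpen ({(0:ℝ)}ᶜ) := isClosed_singleton.isOpen_compl
  rw [show (2 : WithTop ℕ∞) = 1 + 1 by norm_num, contDiffOn_succ_iff_deriv_of_isOpen hopen]
  refine ⟨?_, ?_, ?_⟩
  · intro x hx
    rcases lt_or_gt_of_ne (show x ≠ 0 by simpa using hx) with h | h
    · exact (hasDerivAt_u_neg h).differentiableAt.differentiableWithinAt
    · exact (hasDerivAt_u_pos h).differentiableAt.differentiableWithinAt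
  · intro h
    exact absurd h (by norm_num)
  · rw [show (1 : WithTop ℕ∞) = 0 + 1 by norm_num, contDiffOn_succ_iff_deriv_of_isOpen hopen]
    refine ⟨?_, ?_, ?_⟩
    · intro x hx
      exact (hasDerivAt_deriv_u (by simpa using hx)).differentiableAt.differentiableWithinAt
    · intro h
      exact absurd h (by norm_num)
    · rw [contDiffOn_zero]
      apply q_continuousOn.congr
      intro x hx
      exact (hasDerivAt_deriv_u (by simpa using hx)).deriv
end Cusped

open Filter Set

/-- existence of the cusped soliton of (1 − u²)u'' = u:
a continuous even function, equal to 1 at the origin, positive and below 1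
elsewhere, decaying at infinity, C² away from the origin, strictly decreasing
on (0,∞), satisfying the equation and the first-order invariant
u'² = −log(1 − u²) away from the origin. -/
theorem exists_cusped_soliton :
    ∃ u : ℝ → ℝ,
      Continuous u ∧
      (∀ x : ℝ, u (-x) = u x) ∧
      u 0 = 1 ∧
      (∀ x : ℝ, x ≠ 0 → 0 < u x ∧ u x < 1) ∧
      Tendsto u (cocompact ℝ) (nhds 0) ∧
      ContDiffOn ℝ 2 u {(0 : ℝ)}ᶜ ∧
      StrictAntiOn u (Ioi 0) ∧
      (∀ x : ℝ, x ≠ 0 → (1 - u x ^ 2) * deriv (deriv u) x = u x) ∧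
      (∀ x : ℝ, x ≠ 0 → (deriv u x) ^ 2 = -Real.log (1 - u x ^ 2)) := by
  exact ⟨Cusped.u, Cusped.u_continuous, Cusped.u_even, Cusped.u_zero,
    fun x hx => ⟨(Cusped.u_mem hx).1, (Cusped.u_mem hx).2⟩, Cusped.u_cocompact,
    Cusped.u_contDiffOn, Cusped.u_strictAnti,
    fun x hx => Cusped.u_ode hx, fun x hx => Cusped.u_invariant hx⟩
end

section
/- For every real number C, let ℓ_C = ∫_1^{√(1+e^{2C})} dξ/√(2C − log(ξ² − 1)). There exists a continuous even function u : ℝ → ℝ such that u(0) = √(1 + e^{2C}), u(ℓ_C) = u(−ℓ_C) = 1, 1 < u(x) ≤ √(1 + e^{2C}) for |x| < ℓ_C, 0 < u(x) < 1 for |x| > ℓ_C, u(x) → 0 as |x| → ∞, u is twice continuously differentiable on ℝ \ {−ℓ_C, ℓ_C}, satisfies (1 − u(x)²)·u''(x) = u(x) for all x ∉ {−ℓ_C, ℓ_C}, and satisfies the first-order invariants u'(x)² = 2C − log(u(x)² − 1) for 0 < |x| < ℓ_C and u'(x)² = −log(1 − u(x)²) for |x| > ℓ_C. -/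
open Filter Set
open MeasureTheory intervalIntegral Topology

noncomputable section SolitaryAux

namespace Solitary

variable (C : ℝ)

def bb : ℝ := Real.sqrt (1 + Real.exp (2*C))

def pp (ξ : ℝ) : ℝ := 1 / Real.sqrt (2*C - Real.log (ξ^2 - 1))

def qq (ξ : ℝ) : ℝ := 1 / Real.sqrt (-Real.log (1 - ξ^2))

def XX (v : ℝ) : ℝ := (∫ ξ in (max v 1)..(bb C), pp C ξ) + ∫ ξ in (min v 1)..1, qq ξ

lemma bb_sq : (bb C)^2 = 1 + Real.exp (2*C) :=
  Real.sq_sqrt (by positivity)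

lemma one_lt_bb : 1 < bb C := by
  have h : (1:ℝ)^2 < 1 + Real.exp (2*C) := by
    have := Real.exp_pos (2*C); nlinarith
  have := Real.lt_sqrt (x := 1) (y := 1 + Real.exp (2*C)) (by norm_num)
  rw [bb]; rw [this] at *; simpa using h

lemma bb_pos : 0 < bb C := lt_trans one_pos (one_lt_bb C)

lemma log_bb : Real.log ((bb C)^2 - 1) = 2*C := by
  rw [bb_sq]; simp [Real.log_exp]

lemma psi_pos {v : ℝ} (h1 : 1 < v) (h2 : v < bb C) :
    0 < 2*C - Real.log (v^2 - 1) := by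
  have hv : 0 < v^2 - 1 := by nlinarith
  have hlt : v^2 - 1 < (bb C)^2 - 1 := by nlinarith [bb_pos C]
  have := Real.log_lt_log hv hlt
  rw [log_bb] at this; linarith

lemma hh_pos {v : ℝ} (h1 : 0 < v) (h2 : v < 1) :
    0 < -Real.log (1 - v^2) := by
  have hv : 0 < 1 - v^2 := by nlinarith
  have hv1 : 1 - v^2 < 1 := by nlinarith
  have := Real.log_neg hv hv1
  linarith

lemma pp_nonneg (ξ : ℝ) : 0 ≤ pp C ξ := by
  unfold pp; positivity

lemma qq_nonneg (ξ : ℝ) : 0 ≤ qq ξ := by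
  unfold qq; positivity

lemma pp_pos {ξ : ℝ} (h1 : 1 < ξ) (h2 : ξ < bb C) : 0 < pp C ξ := by
  unfold pp
  have := psi_pos C h1 h2
  positivity

lemma qq_pos {ξ : ℝ} (h1 : 0 < ξ) (h2 : ξ < 1) : 0 < qq ξ := by
  unfold qq
  have := hh_pos h1 h2
  positivity

lemma pp_meas : Measurable (pp C) := by
  unfold pp
  have h1 : Measurable fun ξ : ℝ => 2*C - Real.log (ξ^2 - 1) :=
    measurable_const.sub (Real.measurable_log.comp ((measurable_id.pow_const 2).sub measurable_const))
  exact (measurable_const.div (h1.sqrt))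

lemma qq_meas : Measurable qq := by
  unfold qq
  have h1 : Measurable fun ξ : ℝ => -Real.log (1 - ξ^2) :=
    (Real.measurable_log.comp (measurable_const.sub (measurable_id.pow_const 2))).neg
  exact (measurable_const.div (h1.sqrt))

/-- key comparison: `ψ ξ ≥ (2/(b²-1)) (b-ξ)` on `(1,b)`. -/
lemma psi_lower {ξ : ℝ} (h1 : 1 < ξ) (h2 : ξ < bb C) :
    (2/((bb C)^2 - 1)) * (bb C - ξ) ≤ 2*C - Real.log (ξ^2 - 1) := by
  set b := bb C with hbdef
  have hb1 : 1 < b := one_lt_bb C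
  have hξ : 0 < ξ^2 - 1 := by nlinarith
  have hb : 0 < b^2 - 1 := by nlinarith
  have key : Real.log ((ξ^2-1)/(b^2-1)) ≤ (ξ^2-1)/(b^2-1) - 1 :=
    Real.log_le_sub_one_of_pos (by positivity)
  have hlog : Real.log ((ξ^2-1)/(b^2-1)) = Real.log (ξ^2-1) - Real.log (b^2-1) :=
    Real.log_div (by positivity) (by positivity)
  rw [hlog, log_bb C] at key
  -- key : log(ξ²-1) - 2C ≤ (ξ²-1)/(b²-1) - 1
  have h3 : (ξ^2-1)/(b^2-1) - 1 = -((b^2 - ξ^2)/(b^2-1)) := by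
    field_simp; ring
  rw [h3] at key
  have h5 : 2*(b-ξ) ≤ b^2 - ξ^2 := by nlinarith
  have h4 : (2/(b^2-1)) * (b - ξ) ≤ (b^2 - ξ^2)/(b^2-1) := by
    rw [div_mul_eq_mul_div]
    gcongr
  linarith

lemma pp_integrable : IntervalIntegrable (pp C) volume 1 (bb C) := by
  set b := bb C with hbdef
  have hb1 : 1 < b := one_lt_bb C
  have hb : 0 < b^2 - 1 := by nlinarith
  set K : ℝ := 2/(b^2-1) with hK
  have hKpos : 0 < K := by positivity
  -- dominating function
  set g : ℝ → ℝ := fun ξ => (Real.sqrt K)⁻¹ * ((b - ξ) ^ (-(1/2) : ℝ)) with hg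
  have hgint : IntervalIntegrable g volume 1 b := by
    have h0 : IntervalIntegrable (fun x : ℝ => x ^ (-(1/2):ℝ)) volume 0 (b-1) :=
      intervalIntegrable_rpow' (by norm_num)
    have h1 : IntervalIntegrable (fun x : ℝ => (b - x) ^ (-(1/2):ℝ)) volume (b-0) (b-(b-1)) :=
      h0.comp_sub_left b
    simp only [sub_zero, sub_sub_cancel] at h1
    exact (h1.symm).const_mul _
  refine hgint.mono_fun' ((pp_meas C).aestronglyMeasurable.restrict) ?_
  rw [Filter.EventuallyLE, ae_restrict_iff' measurableSet_uIoc]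
  refine Eventually.of_forall ?_
  intro ξ hξ
  rw [uIoc_of_le hb1.le] at hξ
  obtain ⟨hξ1, hξ2⟩ := hξ
  rcases eq_or_lt_of_le hξ2 with heq | hlt
  · have hpb : pp C ξ = 0 := by
      unfold pp
      rw [heq, show 2*C - Real.log (b^2-1) = 0 by rw [hbdef, log_bb C]; ring]
      simp
    have hgb : g ξ = 0 := by
      rw [hg, heq]
      simp only [sub_self]
      rw [Real.zero_rpow (by norm_num)]
      ring
    rw [Real.norm_eq_abs, hpb, abs_zero, hgb]
  · have hψ : K * (b - ξ) ≤ 2*C - Real.log (ξ^2-1) := psi_lower C hξ1 hlt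
    have hbξ : 0 < b - ξ := by linarith
    have hψpos : 0 < K * (b - ξ) := by positivity
    have hsq : Real.sqrt (K * (b-ξ)) ≤ Real.sqrt (2*C - Real.log (ξ^2-1)) :=
      Real.sqrt_le_sqrt hψ
    have hsqpos : 0 < Real.sqrt (K * (b-ξ)) := Real.sqrt_pos.2 hψpos
    have hle : pp C ξ ≤ (Real.sqrt (K * (b-ξ)))⁻¹ := by
      unfold pp
      rw [one_div]
      exact inv_anti₀ hsqpos hsq
    have h2 : (Real.sqrt (K * (b-ξ)))⁻¹ = g ξ := by
      rw [hg, Real.sqrt_mul hKpos.le, mul_inv]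
      congr 1
      rw [Real.rpow_neg hbξ.le, ← Real.sqrt_eq_rpow]
    rw [Real.norm_eq_abs, abs_of_nonneg (pp_nonneg C ξ)]
    rw [h2] at hle
    exact hle


lemma qq_integrable {v : ℝ} (h0 : 0 < v) (hv : v < 1) : IntervalIntegrable qq volume v 1 := by
  have hhv : 0 < -Real.log (1 - v^2) := hh_pos h0 hv
  set M : ℝ := 1 / Real.sqrt (-Real.log (1 - v^2)) with hM
  have hMconst : IntervalIntegrable (fun _ : ℝ => M) volume v 1 := intervalIntegrable_const
  refine hMconst.mono_fun' (qq_meas.aestronglyMeasurable.restrict) ?_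
  rw [Filter.EventuallyLE, ae_restrict_iff' measurableSet_uIoc]
  refine Eventually.of_forall ?_
  intro ξ hξ
  rw [uIoc_of_le hv.le] at hξ
  obtain ⟨hξ1, hξ2⟩ := hξ
  rcases eq_or_lt_of_le hξ2 with heq | hlt
  · have : qq ξ = 0 := by
      unfold qq; rw [heq]; norm_num
    rw [Real.norm_eq_abs, this, abs_zero, hM]; positivity
  · have hmono : -Real.log (1 - v^2) ≤ -Real.log (1 - ξ^2) := by
      have h1 : 0 < 1 - ξ^2 := by nlinarith
      have h2 : 1 - ξ^2 ≤ 1 - v^2 := by nlinarith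
      have := Real.log_le_log h1 h2
      linarith
    have hsq : Real.sqrt (-Real.log (1 - v^2)) ≤ Real.sqrt (-Real.log (1 - ξ^2)) :=
      Real.sqrt_le_sqrt hmono
    have hsp : 0 < Real.sqrt (-Real.log (1 - v^2)) := Real.sqrt_pos.2 hhv
    rw [Real.norm_eq_abs, abs_of_nonneg (qq_nonneg ξ)]
    unfold qq; rw [hM, one_div, one_div]
    exact inv_anti₀ hsp hsq

lemma pp_integrable' {v w : ℝ} (h1 : 1 ≤ v) (hvw : v ≤ w) (hw : w ≤ bb C) :
    IntervalIntegrable (pp C) volume v w :=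
  (pp_integrable C).mono_set (by
    rw [uIcc_of_le (one_lt_bb C).le]
    exact uIcc_subset_Icc ⟨h1, le_trans hvw hw⟩ ⟨le_trans h1 hvw, hw⟩)

lemma qq_integrable' {v w : ℝ} (h0 : 0 < v) (hv : v ≤ w) (hw : w ≤ 1) :
    IntervalIntegrable qq volume v w := by
  rcases lt_or_ge v 1 with hlt | hge
  · exact (qq_integrable h0 hlt).mono_set
      (by rw [uIcc_of_le hv, uIcc_of_le hlt.le]; exact Icc_subset_Icc le_rfl hw)
  · have hv1 : v = 1 := le_antisymm (hv.trans hw) hge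
    have hw1 : w = 1 := le_antisymm hw (hv1 ▸ hv)
    rw [hv1, hw1]

lemma XX_of_ge {v : ℝ} (h : 1 ≤ v) : XX C v = ∫ ξ in v..(bb C), pp C ξ := by
  unfold XX
  rw [max_eq_left h, min_eq_right h]
  simp

lemma XX_of_le {v : ℝ} (h : v ≤ 1) :
    XX C v = (∫ ξ in (1:ℝ)..(bb C), pp C ξ) + ∫ ξ in v..1, qq ξ := by
  unfold XX
  rw [max_eq_right h, min_eq_left h]

lemma XX_bb : XX C (bb C) = 0 := by
  rw [XX_of_ge C (one_lt_bb C).le]; simp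

lemma XX_one : XX C 1 = ∫ ξ in (1:ℝ)..(bb C), pp C ξ := by
  rw [XX_of_ge C le_rfl]

lemma XX_inner_pos {v w : ℝ} (h1 : 1 ≤ v) (hvw : v < w) (hw : w ≤ bb C) :
    0 < ∫ ξ in v..w, pp C ξ := by
  refine intervalIntegral_pos_of_pos_on (pp_integrable' C h1 hvw.le hw) ?_ hvw
  intro x hx
  exact pp_pos C (lt_of_le_of_lt h1 hx.1) (lt_of_lt_of_le hx.2 hw)

lemma XX_outer_pos {v w : ℝ} (h0 : 0 < v) (hvw : v < w) (hw : w ≤ 1) :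
    0 < ∫ ξ in v..w, qq ξ := by
  refine intervalIntegral_pos_of_pos_on (qq_integrable' h0 hvw.le hw) ?_ hvw
  intro x hx
  exact qq_pos (lt_trans h0 hx.1) (lt_of_lt_of_le hx.2 hw)

lemma XX_anti_inner {v w : ℝ} (h1 : 1 ≤ v) (hvw : v < w) (hw : w ≤ bb C) :
    XX C w < XX C v := by
  rw [XX_of_ge C h1, XX_of_ge C (h1.trans hvw.le)]
  have hsplit := integral_add_adjacent_intervals (μ := volume) (f := pp C)
    (pp_integrable' C h1 hvw.le hw) (pp_integrable' C (h1.trans hvw.le) hw le_rfl)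
  have hpos := XX_inner_pos C h1 hvw hw
  linarith

lemma XX_strictAntiOn : StrictAntiOn (XX C) (Ioc 0 (bb C)) := by
  intro v hv w hw hvw
  rcases le_or_gt 1 v with h1v | h1v
  · exact XX_anti_inner C h1v hvw hw.2
  · rcases le_or_gt w 1 with hw1 | hw1
    · -- both ≤ 1
      rw [XX_of_le C (le_of_lt h1v), XX_of_le C hw1]
      have hsplit := integral_add_adjacent_intervals (μ := volume) (f := qq)
        (qq_integrable' hv.1 hvw.le hw1) (qq_integrable' (lt_trans hv.1 hvw) hw1 le_rfl)
      have hpos := XX_outer_pos hv.1 hvw hw1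
      linarith
    · -- v < 1 < w
      have hXv : XX C 1 < XX C v := by
        rw [XX_of_le C (le_of_lt h1v), XX_one C]
        have hpos := XX_outer_pos hv.1 h1v le_rfl
        linarith
      have hXw : XX C w ≤ XX C 1 := le_of_lt (XX_anti_inner C le_rfl hw1 hw.2)
      linarith


lemma XX_contOn : ContinuousOn (XX C) (Ioc 0 (bb C)) := by
  have hb1 : (1:ℝ) ≤ bb C := (one_lt_bb C).le
  have hFint : IntegrableOn (pp C) (uIcc 1 (bb C)) volume := by
    rw [uIcc_of_le hb1, integrableOn_Icc_iff_integrableOn_Ioc]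
    exact (intervalIntegrable_iff_integrableOn_Ioc_of_le hb1).mp (pp_integrable C)
  have hF : ContinuousOn (fun w => ∫ ξ in w..(bb C), pp C ξ) (Icc 1 (bb C)) := by
    have := intervalIntegral.continuousOn_primitive_interval_left hFint
    rwa [uIcc_of_le hb1] at this
  have hG : ∀ w₀ ∈ Ioc (0:ℝ) 1, ContinuousWithinAt (fun w => ∫ ξ in w..1, qq ξ) (Ioc 0 1) w₀ := by
    intro w₀ hw₀
    have hv₀ : 0 < w₀/2 := by linarith [hw₀.1]
    have hv₀1 : w₀/2 < 1 := by linarith [hw₀.2]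
    have hGint : IntegrableOn qq (uIcc (w₀/2) 1) volume := by
      rw [uIcc_of_le hv₀1.le, integrableOn_Icc_iff_integrableOn_Ioc]
      exact (intervalIntegrable_iff_integrableOn_Ioc_of_le hv₀1.le).mp (qq_integrable hv₀ hv₀1)
    have hcont : ContinuousOn (fun w => ∫ ξ in w..1, qq ξ) (Icc (w₀/2) 1) := by
      have := intervalIntegral.continuousOn_primitive_interval_left hGint
      rwa [uIcc_of_le hv₀1.le] at this
    have hmem : w₀ ∈ Icc (w₀/2) 1 := ⟨by linarith [hw₀.1], hw₀.2⟩
    refine (hcont w₀ hmem).mono_of_mem_nhdsWithin ?_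
    have h1 : Ioi (w₀/2) ∈ 𝓝 w₀ := Ioi_mem_nhds (by linarith [hw₀.1])
    have h2 : Ioc (0:ℝ) 1 ∩ Ioi (w₀/2) ⊆ Icc (w₀/2) 1 := fun x hx => ⟨le_of_lt hx.2, hx.1.2⟩
    exact Filter.mem_of_superset (inter_mem_nhdsWithin _ h1) h2
  have hFcomp : ContinuousOn (fun v => ∫ ξ in (max v 1)..(bb C), pp C ξ) (Ioc 0 (bb C)) := by
    refine hF.comp ((continuous_id.max continuous_const).continuousOn) ?_
    intro v hv
    exact ⟨le_max_right _ _, max_le hv.2 hb1⟩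
  have hGcomp : ContinuousOn (fun v => ∫ ξ in (min v 1)..1, qq ξ) (Ioc 0 (bb C)) := by
    intro v hv
    have hmem : min v 1 ∈ Ioc (0:ℝ) 1 := ⟨lt_min hv.1 one_pos, min_le_right _ _⟩
    exact ContinuousWithinAt.comp (g := fun w => ∫ ξ in w..1, qq ξ)
      (f := fun v : ℝ => min v 1) (hG _ hmem)
      ((continuous_id.min continuous_const).continuousWithinAt)
      (fun x hx => ⟨lt_min hx.1 one_pos, min_le_right _ _⟩)
  exact hFcomp.add hGcomp

lemma XX_nonneg {v : ℝ} (hv : v ∈ Ioc 0 (bb C)) : 0 ≤ XX C v := by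
  rcases eq_or_lt_of_le hv.2 with heq | hlt
  · rw [heq, XX_bb]
  · have := XX_strictAntiOn C hv (right_mem_Ioc.2 (bb_pos C)) hlt
    rw [XX_bb] at this
    linarith

/-- the time-map is unbounded as `v → 0⁺`. -/
lemma XX_large (y : ℝ) : ∃ v : ℝ, v ∈ Ioc 0 (bb C) ∧ y ≤ XX C v := by
  set v : ℝ := min (1/2) (Real.exp (-(Real.sqrt 2 * (|y|+1)))) with hvdef
  have hv0 : 0 < v := lt_min (by norm_num) (Real.exp_pos _)
  have hv2 : v ≤ 1/2 := min_le_left _ _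
  have hv1 : v < 1 := lt_of_le_of_lt hv2 (by norm_num)
  refine ⟨v, ⟨hv0, le_trans hv1.le (one_lt_bb C).le⟩, ?_⟩
  rw [XX_of_le C hv1.le]
  have hfirst : 0 ≤ ∫ ξ in (1:ℝ)..(bb C), pp C ξ :=
    intervalIntegral.integral_nonneg (one_lt_bb C).le (fun u _ => pp_nonneg C u)
  have hsplit := integral_add_adjacent_intervals (μ := volume) (f := qq)
    (qq_integrable' hv0 hv2 (by norm_num)) (qq_integrable' (by norm_num) (by norm_num) le_rfl)
  have hsecond : 0 ≤ ∫ ξ in (1/2 : ℝ)..1, qq ξ :=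
    intervalIntegral.integral_nonneg (by norm_num) (fun u _ => qq_nonneg u)
  -- lower bound on ∫ v..1/2 by comparison with c/ξ
  have hcomp : (∫ ξ in v..(1/2:ℝ), (Real.sqrt 2)⁻¹ * ξ⁻¹) ≤ ∫ ξ in v..(1/2:ℝ), qq ξ := by
    refine intervalIntegral.integral_mono_on hv2 ?_ (qq_integrable' hv0 hv2 (by norm_num)) ?_
    · apply IntervalIntegrable.const_mul
      refine ContinuousOn.intervalIntegrable ?_
      refine ContinuousOn.inv₀ continuousOn_id ?_
      intro x hx
      rw [uIcc_of_le hv2] at hx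
      exact ne_of_gt (lt_of_lt_of_le hv0 hx.1)
    · intro x hx
      have hx0 : 0 < x := lt_of_lt_of_le hv0 hx.1
      have hx2 : x ≤ 1/2 := hx.2
      have hlog : -Real.log (1 - x^2) ≤ 2 * x^2 := by
        have h1 : (0:ℝ) < 1 - x^2 := by nlinarith
        have key : Real.log ((1 - x^2)⁻¹) ≤ (1 - x^2)⁻¹ - 1 :=
          Real.log_le_sub_one_of_pos (by positivity)
        rw [Real.log_inv] at key
        have h2 : (1 - x^2)⁻¹ - 1 = x^2 / (1 - x^2) := by field_simp; ring
        rw [h2] at key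
        have hx4 : x^2 ≤ 1/4 := by nlinarith
        have h3 : x^2 / (1 - x^2) ≤ 2 * x^2 := by
          rw [div_le_iff₀ h1]
          nlinarith
        linarith
      have hsq : Real.sqrt (-Real.log (1 - x^2)) ≤ Real.sqrt 2 * x := by
        have : Real.sqrt (-Real.log (1 - x^2)) ≤ Real.sqrt (2 * x^2) := Real.sqrt_le_sqrt hlog
        rwa [Real.sqrt_mul (by norm_num), Real.sqrt_sq hx0.le] at this
      unfold qq
      rw [one_div]
      rw [← mul_inv]
      have h0 : 0 < Real.sqrt (-Real.log (1 - x^2)) :=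
        Real.sqrt_pos.2 (hh_pos hx0 (by linarith))
      exact inv_anti₀ h0 hsq
  have hval : (∫ ξ in v..(1/2:ℝ), (Real.sqrt 2)⁻¹ * ξ⁻¹)
      = (Real.sqrt 2)⁻¹ * (Real.log ((1/2)/v)) := by
    rw [intervalIntegral.integral_const_mul]
    congr 1
    apply integral_inv
    rw [uIcc_of_le hv2]
    intro h0
    exact absurd h0.1 (not_le.2 hv0)
  have hlogv : Real.log v ≤ -(Real.sqrt 2 * (|y|+1)) := by
    calc Real.log v ≤ Real.log (Real.exp (-(Real.sqrt 2 * (|y|+1)))) := by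
          apply Real.log_le_log hv0 (min_le_right _ _)
      _ = -(Real.sqrt 2 * (|y|+1)) := Real.log_exp _
  have hs2 : (1:ℝ) ≤ Real.sqrt 2 := by
    rw [show (1:ℝ) = Real.sqrt 1 by simp]
    exact Real.sqrt_le_sqrt (by norm_num)
  have hs2pos : 0 < Real.sqrt 2 := by linarith
  have hlarge : y ≤ (Real.sqrt 2)⁻¹ * (Real.log ((1/2)/v)) := by
    rw [Real.log_div (by norm_num) (ne_of_gt hv0)]
    have hlog2 : Real.log (1/2) ≥ -1 := by
      rw [one_div, Real.log_inv]
      have : Real.log 2 ≤ 1 := by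
        have := Real.log_le_sub_one_of_pos (by norm_num : (0:ℝ) < 2)
        linarith
      linarith
    have h1 : Real.log (1/2) - Real.log v ≥ -1 + Real.sqrt 2 * (|y|+1) := by linarith
    have h2 : (Real.sqrt 2)⁻¹ * (Real.log (1/2) - Real.log v)
        ≥ (Real.sqrt 2)⁻¹ * (-1 + Real.sqrt 2 * (|y|+1)) := by
      apply mul_le_mul_of_nonneg_left h1 (by positivity)
    have h3 : (Real.sqrt 2)⁻¹ * (-1 + Real.sqrt 2 * (|y|+1)) = |y| + 1 - (Real.sqrt 2)⁻¹ := by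
      field_simp
      ring
    have h4 : (Real.sqrt 2)⁻¹ ≤ 1 := by
      rw [inv_le_one_iff₀]
      right; exact hs2
    have h5 : y ≤ |y| := le_abs_self y
    linarith
  linarith

lemma XX_surj {y : ℝ} (hy : 0 ≤ y) : ∃ v ∈ Ioc 0 (bb C), XX C v = y := by
  obtain ⟨v₀, hv₀, hv₀y⟩ := XX_large C y
  have hsub : Icc v₀ (bb C) ⊆ Ioc 0 (bb C) := fun x hx => ⟨lt_of_lt_of_le hv₀.1 hx.1, hx.2⟩
  have hcont : ContinuousOn (XX C) (Icc v₀ (bb C)) := (XX_contOn C).mono hsub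
  have hIVT := intermediate_value_Icc' hv₀.2 hcont
  rw [XX_bb] at hIVT
  have hymem : y ∈ Icc 0 (XX C v₀) := ⟨hy, hv₀y⟩
  obtain ⟨v, hvmem, hv⟩ := hIVT hymem
  exact ⟨v, hsub hvmem, hv⟩


def uu (x : ℝ) : ℝ := Function.invFunOn (XX C) (Ioc 0 (bb C)) |x|

lemma uu_even (x : ℝ) : uu C (-x) = uu C x := by unfold uu; rw [abs_neg]

lemma uu_mem (x : ℝ) : uu C x ∈ Ioc 0 (bb C) := by
  obtain ⟨v, hv, hXv⟩ := XX_surj C (abs_nonneg x)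
  exact Function.invFunOn_mem ⟨v, hv, hXv⟩

lemma uu_pos (x : ℝ) : 0 < uu C x := (uu_mem C x).1

lemma uu_le (x : ℝ) : uu C x ≤ bb C := (uu_mem C x).2

lemma XX_uu (x : ℝ) : XX C (uu C x) = |x| := by
  obtain ⟨v, hv, hXv⟩ := XX_surj C (abs_nonneg x)
  exact Function.invFunOn_eq ⟨v, hv, hXv⟩

lemma uu_XX {v : ℝ} (hv : v ∈ Ioc 0 (bb C)) : uu C (XX C v) = v := by
  have h1 : |XX C v| = XX C v := abs_of_nonneg (XX_nonneg C hv)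
  have h2 : XX C (uu C (XX C v)) = |XX C v| := XX_uu C (XX C v)
  rw [h1] at h2
  exact (XX_strictAntiOn C).injOn (by rw [uu]; rw [h1]; exact Function.invFunOn_mem ⟨v, hv, rfl⟩) hv h2

lemma uu_zero : uu C 0 = bb C := by
  have := uu_XX C (right_mem_Ioc.2 (bb_pos C))
  rwa [XX_bb C] at this

lemma uu_strictAntiOn : StrictAntiOn (uu C) (Ici 0) := by
  intro x hx y hy hxy
  have hXx : XX C (uu C x) = x := by rw [XX_uu, abs_of_nonneg hx]
  have hXy : XX C (uu C y) = y := by rw [XX_uu, abs_of_nonneg hy]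
  rcases lt_trichotomy (uu C y) (uu C x) with h | h | h
  · exact h
  · exfalso; rw [← hXx, ← hXy, h] at hxy; exact lt_irrefl _ hxy
  · exfalso
    have := XX_strictAntiOn C (uu_mem C x) (uu_mem C y) h
    rw [hXx, hXy] at this
    exact absurd hxy (not_lt.2 this.le)

lemma uu_gt_one {x : ℝ} (hx : |x| < XX C 1) : 1 < uu C x := by
  by_contra h
  push_neg at h
  have h1 : (1:ℝ) ∈ Ioc 0 (bb C) := ⟨one_pos, (one_lt_bb C).le⟩
  rcases eq_or_lt_of_le h with heq | hlt
  · rw [← XX_uu C x, heq] at hx; exact lt_irrefl _ hx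
  · have := XX_strictAntiOn C (uu_mem C x) h1 hlt
    rw [XX_uu C x] at this
    exact absurd hx (not_lt.2 this.le)

lemma uu_lt_one {x : ℝ} (hx : XX C 1 < |x|) : uu C x < 1 := by
  by_contra h
  push_neg at h
  have h1 : (1:ℝ) ∈ Ioc 0 (bb C) := ⟨one_pos, (one_lt_bb C).le⟩
  rcases eq_or_lt_of_le h with heq | hlt
  · rw [← XX_uu C x, ← heq] at hx; exact lt_irrefl _ hx
  · have := XX_strictAntiOn C h1 (uu_mem C x) hlt
    rw [XX_uu C x] at this
    exact absurd hx (not_lt.2 this.le)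

lemma uu_contAt_zero : ContinuousAt (uu C) 0 := by
  rw [ContinuousAt, tendsto_order]
  constructor
  · intro c hc
    rw [uu_zero C] at hc
    rcases le_or_gt c 0 with hc0 | hc0
    · exact Eventually.of_forall (fun x => lt_of_le_of_lt hc0 (uu_pos C x))
    · set v : ℝ := (c + bb C)/2 with hv
      have hvc : c < v := by rw [hv]; linarith
      have hvb : v < bb C := by rw [hv]; linarith
      have hvS : v ∈ Ioc 0 (bb C) := ⟨by linarith, hvb.le⟩
      have hXv : 0 < XX C v := by
        have := XX_strictAntiOn C hvS (right_mem_Ioc.2 (bb_pos C)) hvb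
        rwa [XX_bb C] at this
      filter_upwards [Ioo_mem_nhds (by linarith : -(XX C v) < 0) hXv] with x hx
      have habs : |x| < XX C v := abs_lt.2 ⟨hx.1, hx.2⟩
      by_contra h
      push_neg at h
      have h2 := XX_strictAntiOn C (uu_mem C x) hvS (lt_of_le_of_lt h hvc)
      rw [XX_uu C x] at h2
      exact absurd habs (not_lt.2 h2.le)
  · intro c hc
    rw [uu_zero C] at hc
    exact Eventually.of_forall (fun x => lt_of_le_of_lt (uu_le C x) hc)

lemma uu_contAt_pos {a : ℝ} (ha : 0 < a) : ContinuousAt (uu C) a := by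
  rw [ContinuousAt, tendsto_order]
  constructor
  · intro c hc
    rcases le_or_gt c 0 with hc0 | hc0
    · exact Eventually.of_forall (fun x => lt_of_le_of_lt hc0 (uu_pos C x))
    · set v : ℝ := (c + uu C a)/2 with hv
      have hvc : c < v := by rw [hv]; linarith
      have hvu : v < uu C a := by rw [hv]; linarith
      have hvS : v ∈ Ioc 0 (bb C) := ⟨by linarith, le_trans hvu.le (uu_le C a)⟩
      have hXv : a < XX C v := by
        have := XX_strictAntiOn C hvS (uu_mem C a) hvu
        rwa [XX_uu C a, abs_of_nonneg ha.le] at this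
      filter_upwards [Ioo_mem_nhds (by linarith : -(XX C v) < a) hXv] with x hx
      have habs : |x| < XX C v := abs_lt.2 ⟨hx.1, hx.2⟩
      by_contra h
      push_neg at h
      have h2 := XX_strictAntiOn C (uu_mem C x) hvS (lt_of_le_of_lt h hvc)
      rw [XX_uu C x] at h2
      exact absurd habs (not_lt.2 h2.le)
  · intro c hc
    rcases lt_or_ge (bb C) c with hcb | hcb
    · exact Eventually.of_forall (fun x => lt_of_le_of_lt (uu_le C x) hcb)
    · set v : ℝ := (uu C a + c)/2 with hv
      have hvc : v < c := by rw [hv]; linarith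
      have hvu : uu C a < v := by rw [hv]; linarith
      have hvS : v ∈ Ioc 0 (bb C) := ⟨lt_trans (uu_pos C a) hvu, by linarith⟩
      have hXv : XX C v < a := by
        have := XX_strictAntiOn C (uu_mem C a) hvS hvu
        rwa [XX_uu C a, abs_of_nonneg ha.le] at this
      filter_upwards [Ioi_mem_nhds hXv] with x hx
      have hx0 : 0 < x := lt_of_le_of_lt (XX_nonneg C hvS) hx
      by_contra h
      push_neg at h
      have h2 := XX_strictAntiOn C hvS (uu_mem C x) (lt_of_lt_of_le hvc h)
      rw [XX_uu C x, abs_of_nonneg hx0.le] at h2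
      exact absurd hx (not_lt.2 h2.le)

lemma uu_cont : Continuous (uu C) := by
  rw [continuous_iff_continuousAt]
  intro a
  rcases lt_trichotomy a 0 with ha | ha | ha
  · have h1 : ContinuousAt (fun x => uu C (-x)) a :=
      (uu_contAt_pos C (by linarith : 0 < -a)).comp (continuous_neg.continuousAt)
    have h2 : (fun x => uu C (-x)) = uu C := funext (uu_even C)
    rwa [h2] at h1
  · rw [ha]; exact uu_contAt_zero C
  · exact uu_contAt_pos C ha


lemma uu_tendsto_atTop : Tendsto (uu C) atTop (𝓝 0) := by
  rw [tendsto_order]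
  constructor
  · intro c hc
    exact Eventually.of_forall (fun x => lt_trans hc (uu_pos C x))
  · intro c hc
    set v : ℝ := (min c (bb C))/2 with hv
    have hv0 : 0 < v := by
      rw [hv]; have := bb_pos C; rcases min_cases c (bb C) with ⟨h,_⟩|⟨h,_⟩ <;> rw [h] <;> linarith
    have hvb : v ≤ bb C := by
      rw [hv]; have h := min_le_right c (bb C); have := bb_pos C; linarith
    have hvc : v < c := by
      rw [hv]; have h := min_le_left c (bb C); have := bb_pos C
      rcases min_cases c (bb C) with ⟨h2,_⟩|⟨h2,h3⟩ <;> rw [h2] <;> linarith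
    have hvS : v ∈ Ioc 0 (bb C) := ⟨hv0, hvb⟩
    filter_upwards [eventually_gt_atTop (XX C v)] with x hx
    have hx0 : 0 < x := lt_of_le_of_lt (XX_nonneg C hvS) hx
    by_contra h
    push_neg at h
    have h2 := XX_strictAntiOn C hvS (uu_mem C x) (lt_of_lt_of_le hvc h)
    rw [XX_uu C x, abs_of_nonneg hx0.le] at h2
    exact absurd hx (not_lt.2 h2.le)

lemma uu_tendsto_cocompact : Tendsto (uu C) (cocompact ℝ) (𝓝 0) := by
  rw [cocompact_eq_atBot_atTop]
  rw [tendsto_sup]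
  constructor
  · have h1 : Tendsto (fun x => uu C (-x)) atBot (𝓝 0) :=
      (uu_tendsto_atTop C).comp tendsto_neg_atBot_atTop
    have h2 : (fun x => uu C (-x)) = uu C := funext (uu_even C)
    rwa [h2] at h1
  · exact uu_tendsto_atTop C

lemma pp_contAt {v : ℝ} (h1 : 1 < v) (h2 : v < bb C) : ContinuousAt (pp C) v := by
  have hsub : ContinuousAt (fun ξ : ℝ => ξ^2 - 1) v := by fun_prop
  have hlog : ContinuousAt (fun ξ : ℝ => Real.log (ξ^2-1)) v :=
    (Real.continuousAt_log (by nlinarith)).comp hsub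
  have hψ : ContinuousAt (fun ξ : ℝ => 2*C - Real.log (ξ^2-1)) v :=
    continuousAt_const.sub hlog
  have hs : ContinuousAt (fun ξ : ℝ => Real.sqrt (2*C - Real.log (ξ^2-1))) v :=
    Real.continuous_sqrt.continuousAt.comp hψ
  have hne : Real.sqrt (2*C - Real.log (v^2-1)) ≠ 0 :=
    ne_of_gt (Real.sqrt_pos.2 (psi_pos C h1 h2))
  exact continuousAt_const.div hs hne

lemma qq_contAt {v : ℝ} (h0 : 0 < v) (h1 : v < 1) : ContinuousAt qq v := by
  have hsub : ContinuousAt (fun ξ : ℝ => 1 - ξ^2) v := by fun_prop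
  have hlog : ContinuousAt (fun ξ : ℝ => -Real.log (1 - ξ^2)) v :=
    ((Real.continuousAt_log (by nlinarith)).comp hsub).neg
  have hs : ContinuousAt (fun ξ : ℝ => Real.sqrt (-Real.log (1 - ξ^2))) v :=
    Real.continuous_sqrt.continuousAt.comp hlog
  have hne : Real.sqrt (-Real.log (1 - v^2)) ≠ 0 :=
    ne_of_gt (Real.sqrt_pos.2 (hh_pos h0 h1))
  exact continuousAt_const.div hs hne

lemma XX_hasDerivAt_inner {v : ℝ} (h1 : 1 < v) (h2 : v < bb C) :
    HasDerivAt (XX C) (-(pp C v)) v := by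
  have hev : XX C =ᶠ[𝓝 v] fun w => ∫ ξ in w..(bb C), pp C ξ := by
    filter_upwards [Ioi_mem_nhds h1] with w hw
    exact XX_of_ge C (le_of_lt hw)
  have hd : HasDerivAt (fun w => ∫ ξ in w..(bb C), pp C ξ) (-(pp C v)) v :=
    intervalIntegral.integral_hasDerivAt_left (pp_integrable' C h1.le h2.le le_rfl)
      ((pp_meas C).stronglyMeasurable.stronglyMeasurableAtFilter)
      (pp_contAt C h1 h2)
  exact hd.congr_of_eventuallyEq hev

lemma XX_hasDerivAt_outer {v : ℝ} (h0 : 0 < v) (h1 : v < 1) :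
    HasDerivAt (XX C) (-(qq v)) v := by
  have hev : XX C =ᶠ[𝓝 v] fun w => (∫ ξ in (1:ℝ)..(bb C), pp C ξ) + ∫ ξ in w..1, qq ξ := by
    filter_upwards [Iio_mem_nhds h1] with w hw
    exact XX_of_le C (le_of_lt hw)
  have hd0 : HasDerivAt (fun w => ∫ ξ in w..(1:ℝ), qq ξ) (-(qq v)) v :=
    intervalIntegral.integral_hasDerivAt_left (qq_integrable h0 h1)
      (qq_meas.stronglyMeasurable.stronglyMeasurableAtFilter)
      (qq_contAt h0 h1)
  have hd : HasDerivAt (fun w => (∫ ξ in (1:ℝ)..(bb C), pp C ξ) + ∫ ξ in w..1, qq ξ)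
      (-(qq v)) v := hd0.const_add _
  exact hd.congr_of_eventuallyEq hev

lemma uu_abs (x : ℝ) : uu C |x| = uu C x := by
  unfold uu; rw [abs_abs]

lemma uu_lt_bb {x : ℝ} (hx : 0 < |x|) : uu C x < bb C := by
  have h0 : (0:ℝ) ∈ Ici (0:ℝ) := self_mem_Ici
  have := uu_strictAntiOn C h0 (abs_nonneg x) hx
  rw [uu_zero C, uu_abs C x] at this
  exact this

lemma uu_hasDeriv_inner {x : ℝ} (hx0 : 0 < x) (hx : x < XX C 1) :
    HasDerivAt (uu C) (-Real.sqrt (2*C - Real.log ((uu C x)^2 - 1))) x := by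
  set v := uu C x with hvdef
  have habs : |x| = x := abs_of_pos hx0
  have hv1 : 1 < v := uu_gt_one C (by rw [habs]; exact hx)
  have hvb : v < bb C := uu_lt_bb C (by rw [habs]; exact hx0)
  have hψ : 0 < 2*C - Real.log (v^2 - 1) := psi_pos C hv1 hvb
  have hXd : HasDerivAt (XX C) (-(pp C v)) v := XX_hasDerivAt_inner C hv1 hvb
  have hne : -(pp C v) ≠ 0 := neg_ne_zero.2 (ne_of_gt (pp_pos C hv1 hvb))
  have hfg : ∀ᶠ y in 𝓝 x, XX C (uu C y) = y := by
    filter_upwards [Ioi_mem_nhds hx0] with y hy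
    rw [XX_uu C y, abs_of_pos hy]
  have hinv := HasDerivAt.of_local_left_inverse ((uu_cont C).continuousAt) hXd hne hfg
  have hval : (-(pp C v))⁻¹ = -Real.sqrt (2*C - Real.log (v^2-1)) := by
    unfold pp
    rw [one_div, inv_neg, inv_inv]
  rwa [hval] at hinv

lemma uu_hasDeriv_outer {x : ℝ} (hx : XX C 1 < x) :
    HasDerivAt (uu C) (-Real.sqrt (-Real.log (1 - (uu C x)^2))) x := by
  set v := uu C x with hvdef
  have hx0 : 0 < x := lt_of_le_of_lt (XX_nonneg C ⟨one_pos, (one_lt_bb C).le⟩) hx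
  have habs : |x| = x := abs_of_pos hx0
  have hv1 : v < 1 := uu_lt_one C (by rw [habs]; exact hx)
  have hv0 : 0 < v := uu_pos C x
  have hh : 0 < -Real.log (1 - v^2) := hh_pos hv0 hv1
  have hXd : HasDerivAt (XX C) (-(qq v)) v := XX_hasDerivAt_outer C hv0 hv1
  have hne : -(qq v) ≠ 0 := neg_ne_zero.2 (ne_of_gt (qq_pos hv0 hv1))
  have hfg : ∀ᶠ y in 𝓝 x, XX C (uu C y) = y := by
    filter_upwards [Ioi_mem_nhds hx0] with y hy
    rw [XX_uu C y, abs_of_pos hy]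
  have hinv := HasDerivAt.of_local_left_inverse ((uu_cont C).continuousAt) hXd hne hfg
  have hval : (-(qq v))⁻¹ = -Real.sqrt (-Real.log (1 - v^2)) := by
    unfold qq
    rw [one_div, inv_neg, inv_inv]
  rwa [hval] at hinv


lemma XX_one_pos : 0 < XX C 1 := by
  have := XX_strictAntiOn C ⟨one_pos, (one_lt_bb C).le⟩ (right_mem_Ioc.2 (bb_pos C)) (one_lt_bb C)
  rwa [XX_bb C] at this

lemma uu_hasDeriv2_inner {x : ℝ} (hx0 : 0 < x) (hx : x < XX C 1) :
    HasDerivAt (deriv (uu C)) (uu C x / (1 - (uu C x)^2)) x := by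
  set v := uu C x with hvdef
  have habs : |x| = x := abs_of_pos hx0
  have hv1 : 1 < v := uu_gt_one C (by rw [habs]; exact hx)
  have hvb : v < bb C := uu_lt_bb C (by rw [habs]; exact hx0)
  have hψ : 0 < 2*C - Real.log (v^2 - 1) := psi_pos C hv1 hvb
  have hu : HasDerivAt (uu C) (-Real.sqrt (2*C - Real.log (v^2 - 1))) x :=
    uu_hasDeriv_inner C hx0 hx
  set u' : ℝ := -Real.sqrt (2*C - Real.log (v^2-1)) with hu'def
  have hsq : HasDerivAt (fun y => (uu C y)^2 - 1) (2 * v * u') x := by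
    have h := (hu.pow 2).sub_const 1
    refine h.congr_deriv ?_
    simp [hvdef]
  have hlog : HasDerivAt (fun y => Real.log ((uu C y)^2 - 1)) ((2*v*u') / (v^2-1)) x :=
    hsq.log (by nlinarith : v^2 - 1 ≠ 0)
  have hψd : HasDerivAt (fun y => 2*C - Real.log ((uu C y)^2-1)) (-((2*v*u')/(v^2-1))) x :=
    hlog.const_sub (2*C)
  have hsqrt := hψd.sqrt (ne_of_gt hψ)
  have hD := hsqrt.neg
  have hev : deriv (uu C) =ᶠ[𝓝 x] fun y => -Real.sqrt (2*C - Real.log ((uu C y)^2-1)) := by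
    filter_upwards [Ioo_mem_nhds hx0 hx] with y hy
    exact (uu_hasDeriv_inner C hy.1 hy.2).deriv
  have hfinal := hD.congr_of_eventuallyEq hev
  refine hfinal.congr_deriv ?_
  rw [hu'def, ← hvdef]
  have hs : 0 < Real.sqrt (2*C - Real.log (v^2-1)) := Real.sqrt_pos.2 hψ
  have hv2 : v^2 - 1 ≠ 0 := by nlinarith
  have hv2' : 1 - v^2 ≠ 0 := by nlinarith
  field_simp
  ring

lemma uu_hasDeriv2_outer {x : ℝ} (hx : XX C 1 < x) :
    HasDerivAt (deriv (uu C)) (uu C x / (1 - (uu C x)^2)) x := by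
  set v := uu C x with hvdef
  have hx0 : 0 < x := lt_of_le_of_lt (XX_one_pos C).le hx
  have habs : |x| = x := abs_of_pos hx0
  have hv1 : v < 1 := uu_lt_one C (by rw [habs]; exact hx)
  have hv0 : 0 < v := uu_pos C x
  have hh : 0 < -Real.log (1 - v^2) := hh_pos hv0 hv1
  have hu : HasDerivAt (uu C) (-Real.sqrt (-Real.log (1 - v^2))) x :=
    uu_hasDeriv_outer C hx
  set u' : ℝ := -Real.sqrt (-Real.log (1 - v^2)) with hu'def
  have hsq : HasDerivAt (fun y => 1 - (uu C y)^2) (-(2 * v * u')) x := by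
    have h := (hu.pow 2).const_sub 1
    refine h.congr_deriv ?_
    simp [hvdef]
  have hlog : HasDerivAt (fun y => -Real.log (1 - (uu C y)^2)) (-((-(2*v*u')) / (1-v^2))) x :=
    (hsq.log (by nlinarith : 1 - v^2 ≠ 0)).neg
  have hsqrt := hlog.sqrt (ne_of_gt hh)
  have hD := hsqrt.neg
  have hev : deriv (uu C) =ᶠ[𝓝 x] fun y => -Real.sqrt (-Real.log (1 - (uu C y)^2)) := by
    filter_upwards [Ioi_mem_nhds hx] with y hy
    exact (uu_hasDeriv_outer C hy).deriv
  have hfinal := hD.congr_of_eventuallyEq hev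
  refine hfinal.congr_deriv ?_
  rw [hu'def, ← hvdef]
  have hs : 0 < Real.sqrt (-Real.log (1 - v^2)) := Real.sqrt_pos.2 hh
  have hv2' : 1 - v^2 ≠ 0 := by nlinarith
  field_simp

lemma deriv_uu_tendsto_zero : Tendsto (deriv (uu C)) (𝓝[>] (0:ℝ)) (𝓝 0) := by
  have hev : ∀ᶠ y in 𝓝[>] (0:ℝ), deriv (uu C) y
      = -Real.sqrt (2*C - Real.log ((uu C y)^2-1)) := by
    have hmem : Ioo (0:ℝ) (XX C 1) ∈ 𝓝[>] (0:ℝ) :=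
      Ioo_mem_nhdsGT_of_mem ⟨le_rfl, XX_one_pos C⟩
    filter_upwards [hmem] with y hy
    exact (uu_hasDeriv_inner C hy.1 hy.2).deriv
  have hlim : Tendsto (fun y => -Real.sqrt (2*C - Real.log ((uu C y)^2-1))) (𝓝[>] (0:ℝ)) (𝓝 0) := by
    have h1 : ContinuousAt (fun v : ℝ => -Real.sqrt (2*C - Real.log (v^2-1))) (bb C) := by
      have hb2 : (0:ℝ) < (bb C)^2 - 1 := by
        have := one_lt_bb C; nlinarith
      have hsub : ContinuousAt (fun v : ℝ => v^2 - 1) (bb C) := by fun_prop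
      have hlog : ContinuousAt (fun v : ℝ => Real.log (v^2 - 1)) (bb C) :=
        ContinuousAt.comp (x := bb C) (g := Real.log) (Real.continuousAt_log (ne_of_gt hb2)) hsub
      exact (Real.continuous_sqrt.continuousAt.comp (continuousAt_const.sub hlog)).neg
    have h2 : Tendsto (uu C) (𝓝[>] (0:ℝ)) (𝓝 (bb C)) := by
      have := ((uu_cont C).continuousAt (x := 0)).tendsto
      rw [uu_zero C] at this
      exact this.mono_left nhdsWithin_le_nhds
    have h3 := h1.tendsto.comp h2
    have hval : -Real.sqrt (2*C - Real.log ((bb C)^2-1)) = 0 := by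
      rw [log_bb C]; simp
    rwa [hval] at h3
  exact Tendsto.congr' (hev.mono fun y hy => hy.symm) hlim

lemma uu_hasDeriv_zero : HasDerivAt (uu C) 0 0 := by
  have hdiff : DifferentiableOn ℝ (uu C) (Ioo 0 (XX C 1)) := fun y hy =>
    (uu_hasDeriv_inner C hy.1 hy.2).differentiableAt.differentiableWithinAt
  have hs : Ioo (0:ℝ) (XX C 1) ∈ 𝓝[>] (0:ℝ) :=
    Ioo_mem_nhdsGT_of_mem ⟨le_rfl, XX_one_pos C⟩
  have hlim : ContinuousWithinAt (uu C) (Ioo 0 (XX C 1)) 0 :=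
    ((uu_cont C).continuousAt).continuousWithinAt
  have hr : HasDerivWithinAt (uu C) 0 (Ici 0) 0 :=
    hasDerivWithinAt_Ici_of_tendsto_deriv hdiff hlim hs (deriv_uu_tendsto_zero C)
  have hl : HasDerivWithinAt (uu C) 0 (Iic 0) 0 := by
    have hneg : HasDerivWithinAt (fun y : ℝ => -y) (-1) (Iic 0) 0 :=
      (hasDerivAt_neg (0:ℝ)).hasDerivWithinAt
    have hmaps : MapsTo (fun y : ℝ => -y) (Iic 0) (Ici 0) := fun y hy => by
      simp only [mem_Ici]; simp only [mem_Iic] at hy; linarith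
    have hr' : HasDerivWithinAt (uu C) 0 (Ici 0) (-(0:ℝ)) := by rw [neg_zero]; exact hr
    have hcomp : HasDerivWithinAt (uu C ∘ fun y : ℝ => -y) (0 * (-1)) (Iic 0) 0 :=
      HasDerivWithinAt.comp (0:ℝ) hr' hneg hmaps
    have heq : uu C ∘ (fun y : ℝ => -y) = uu C := funext fun y => uu_even C y
    rw [heq] at hcomp
    simpa using hcomp
  have hu := hr.union hl
  rw [union_comm, Iic_union_Ici] at hu
  rw [← hasDerivWithinAt_univ]
  exact hu


lemma uu_deriv_odd (x : ℝ) : deriv (uu C) (-x) = -deriv (uu C) x := by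
  have heq : (fun y => uu C (-y)) = uu C := funext (uu_even C)
  have h := deriv_comp_neg (f := uu C) (x := x)
  rw [heq] at h
  linarith

lemma deriv2_tendsto : Tendsto (deriv (deriv (uu C))) (𝓝[>] (0:ℝ))
    (𝓝 (bb C / (1 - (bb C)^2))) := by
  have hev : ∀ᶠ y in 𝓝[>] (0:ℝ), deriv (deriv (uu C)) y = uu C y / (1 - (uu C y)^2) := by
    filter_upwards [Ioo_mem_nhdsGT_of_mem ⟨le_rfl, XX_one_pos C⟩] with y hy
    exact (uu_hasDeriv2_inner C hy.1 hy.2).deriv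
  have h1 : ContinuousAt (fun v : ℝ => v / (1 - v^2)) (bb C) := by
    have hb2 : 1 - (bb C)^2 ≠ 0 := by
      have := one_lt_bb C; nlinarith
    exact ContinuousAt.div (by fun_prop) (by fun_prop) hb2
  have h2 : Tendsto (uu C) (𝓝[>] (0:ℝ)) (𝓝 (bb C)) := by
    have := ((uu_cont C).continuousAt (x := 0)).tendsto
    rw [uu_zero C] at this
    exact this.mono_left nhdsWithin_le_nhds
  have h3 := h1.tendsto.comp h2
  exact Tendsto.congr' (hev.mono fun y hy => hy.symm) h3

lemma uu_hasDeriv2_zero : HasDerivAt (deriv (uu C)) (bb C / (1 - (bb C)^2)) 0 := by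
  have hdiff : DifferentiableOn ℝ (deriv (uu C)) (Ioo 0 (XX C 1)) := fun y hy =>
    (uu_hasDeriv2_inner C hy.1 hy.2).differentiableAt.differentiableWithinAt
  have hs : Ioo (0:ℝ) (XX C 1) ∈ 𝓝[>] (0:ℝ) :=
    Ioo_mem_nhdsGT_of_mem ⟨le_rfl, XX_one_pos C⟩
  have hlim : ContinuousWithinAt (deriv (uu C)) (Ioo 0 (XX C 1)) 0 := by
    unfold ContinuousWithinAt
    rw [(uu_hasDeriv_zero C).deriv]
    exact (deriv_uu_tendsto_zero C).mono_left (nhdsWithin_mono _ Ioo_subset_Ioi_self)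
  have hr : HasDerivWithinAt (deriv (uu C)) (bb C / (1 - (bb C)^2)) (Ici 0) 0 :=
    hasDerivWithinAt_Ici_of_tendsto_deriv hdiff hlim hs (deriv2_tendsto C)
  have hl : HasDerivWithinAt (deriv (uu C)) (bb C / (1 - (bb C)^2)) (Iic 0) 0 := by
    have hneg : HasDerivWithinAt (fun y : ℝ => -y) (-1) (Iic 0) 0 :=
      (hasDerivAt_neg (0:ℝ)).hasDerivWithinAt
    have hmaps : MapsTo (fun y : ℝ => -y) (Iic 0) (Ici 0) := fun y hy => by
      simp only [mem_Ici]; simp only [mem_Iic] at hy; linarith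
    have hr' : HasDerivWithinAt (deriv (uu C)) (bb C / (1 - (bb C)^2)) (Ici 0) (-(0:ℝ)) := by
      rw [neg_zero]; exact hr
    have hcomp : HasDerivWithinAt (deriv (uu C) ∘ fun y : ℝ => -y)
        ((bb C / (1 - (bb C)^2)) * (-1)) (Iic 0) 0 :=
      HasDerivWithinAt.comp (0:ℝ) hr' hneg hmaps
    have hcomp2 := hcomp.neg
    have heq : (fun y => -(deriv (uu C) ∘ fun y : ℝ => -y) y) = deriv (uu C) := by
      funext y
      simp only [Function.comp]
      rw [uu_deriv_odd C y]
      ring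
    rw [show (-(deriv (uu C) ∘ fun y : ℝ => -y)) = deriv (uu C) from heq] at hcomp2
    refine hcomp2.congr_deriv ?_
    ring
  have hu := hr.union hl
  rw [union_comm, Iic_union_Ici] at hu
  rw [← hasDerivWithinAt_univ]
  exact hu

lemma diffAt_of_neg {x : ℝ} (h : DifferentiableAt ℝ (uu C) (-x)) :
    DifferentiableAt ℝ (uu C) x := by
  have h1 : DifferentiableAt ℝ (fun y => uu C (-y)) x :=
    h.comp x (differentiable_neg.differentiableAt)
  have heq : (fun y => uu C (-y)) = uu C := funext (uu_even C)
  rwa [heq] at h1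

lemma uu_diffAt {x : ℝ} (h1 : x ≠ XX C 1) (h2 : x ≠ -(XX C 1)) :
    DifferentiableAt ℝ (uu C) x := by
  rcases lt_trichotomy x 0 with hneg | h0 | hpos
  · apply diffAt_of_neg C
    rcases lt_trichotomy (-x) (XX C 1) with ha | ha | ha
    · exact (uu_hasDeriv_inner C (by linarith) ha).differentiableAt
    · exact absurd (by linarith : x = -(XX C 1)) h2
    · exact (uu_hasDeriv_outer C ha).differentiableAt
  · rw [h0]; exact (uu_hasDeriv_zero C).differentiableAt
  · rcases lt_trichotomy x (XX C 1) with ha | ha | ha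
    · exact (uu_hasDeriv_inner C hpos ha).differentiableAt
    · exact absurd ha h1
    · exact (uu_hasDeriv_outer C ha).differentiableAt

lemma uu_hasDeriv2_all {x : ℝ} (h1 : x ≠ XX C 1) (h2 : x ≠ -(XX C 1)) :
    HasDerivAt (deriv (uu C)) (uu C x / (1 - (uu C x)^2)) x := by
  rcases lt_trichotomy x 0 with hneg | h0 | hpos
  · have hx' : -x ≠ XX C 1 := fun h => h2 (by linarith)
    have h : HasDerivAt (deriv (uu C)) (uu C (-x) / (1 - (uu C (-x))^2)) (-x) := by
      rcases lt_trichotomy (-x) (XX C 1) with ha | ha | ha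
      · exact uu_hasDeriv2_inner C (by linarith) ha
      · exact absurd ha hx'
      · exact uu_hasDeriv2_outer C ha
    have hcomp : HasDerivAt (deriv (uu C) ∘ fun y : ℝ => -y)
        ((uu C (-x) / (1 - (uu C (-x))^2)) * (-1)) x :=
      HasDerivAt.comp x h (hasDerivAt_neg x)
    have hcomp2 := hcomp.neg
    have heq : (fun y => -(deriv (uu C) ∘ fun y : ℝ => -y) y) = deriv (uu C) := by
      funext y
      simp only [Function.comp]
      rw [uu_deriv_odd C y]
      ring
    rw [show (-(deriv (uu C) ∘ fun y : ℝ => -y)) = deriv (uu C) from heq] at hcomp2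
    rw [uu_even C x] at hcomp2
    refine hcomp2.congr_deriv ?_
    ring
  · rw [h0]
    rw [show uu C 0 = bb C from uu_zero C]
    exact uu_hasDeriv2_zero C
  · rcases lt_trichotomy x (XX C 1) with ha | ha | ha
    · exact uu_hasDeriv2_inner C hpos ha
    · exact absurd ha h1
    · exact uu_hasDeriv2_outer C ha

lemma uu_ne_one {x : ℝ} (h1 : x ≠ XX C 1) (h2 : x ≠ -(XX C 1)) : uu C x ≠ 1 := by
  intro h
  have hX := XX_uu C x
  rw [h] at hX
  have habs : |x| = XX C 1 := hX.symm
  rcases abs_eq (XX_one_pos C).le |>.mp habs with h | h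
  · exact h1 h
  · exact h2 h

lemma one_sub_uu_sq_ne {x : ℝ} (h1 : x ≠ XX C 1) (h2 : x ≠ -(XX C 1)) :
    1 - (uu C x)^2 ≠ 0 := by
  have hne := uu_ne_one C h1 h2
  have hpos := uu_pos C x
  intro h
  have : uu C x = 1 ∨ uu C x = -1 := by
    have : (uu C x - 1) * (uu C x + 1) = 0 := by nlinarith
    rcases mul_eq_zero.mp this with h | h
    · left; linarith
    · right; linarith
  rcases this with h | h
  · exact hne h
  · linarith


end Solitary

end SolitaryAux

open Solitary

/-- existence of the one-parameter family u_C of positive,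
single-humped solitary wave solutions of (1 − u²)u'' = u, with half-width
ℓ_C = ∫_1^{√(1+e^{2C})} dξ/√(2C − log(ξ² − 1)), maximum √(1+e^{2C}),
singular points ±ℓ_C where u = 1, and the two first-order invariants
u'² = 2C − log(u² − 1) inside and u'² = −log(1 − u²) outside. -/
theorem exists_solitary_wave_family
    (C lC : ℝ)
    (hlC : lC = ∫ ξ in (1 : ℝ)..Real.sqrt (1 + Real.exp (2 * C)),
      1 / Real.sqrt (2 * C - Real.log (ξ ^ 2 - 1))) :
    ∃ u : ℝ → ℝ,
      Continuous u ∧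
      (∀ x : ℝ, u (-x) = u x) ∧
      u 0 = Real.sqrt (1 + Real.exp (2 * C)) ∧
      u lC = 1 ∧ u (-lC) = 1 ∧
      (∀ x : ℝ, |x| < lC → 1 < u x ∧ u x ≤ Real.sqrt (1 + Real.exp (2 * C))) ∧
      (∀ x : ℝ, lC < |x| → 0 < u x ∧ u x < 1) ∧
      Tendsto u (cocompact ℝ) (nhds 0) ∧
      ContDiffOn ℝ 2 u ({-lC, lC} : Set ℝ)ᶜ ∧
      (∀ x : ℝ, x ∉ ({-lC, lC} : Set ℝ) → (1 - u x ^ 2) * deriv (deriv u) x = u x) ∧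
      (∀ x : ℝ, 0 < |x| → |x| < lC →
        (deriv u x) ^ 2 = 2 * C - Real.log (u x ^ 2 - 1)) ∧
      (∀ x : ℝ, lC < |x| →
        (deriv u x) ^ 2 = -Real.log (1 - u x ^ 2)) := by
  have hl : lC = XX C 1 := by
    rw [hlC, XX_one C]
    simp only [pp, bb]
  refine ⟨uu C, uu_cont C, uu_even C, ?_, ?_, ?_, ?_, ?_, uu_tendsto_cocompact C, ?_, ?_, ?_, ?_⟩
  · rw [uu_zero C]; rfl
  · rw [hl]
    exact uu_XX C ⟨one_pos, (one_lt_bb C).le⟩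
  · rw [uu_even C lC, hl]
    exact uu_XX C ⟨one_pos, (one_lt_bb C).le⟩
  · intro x hx
    rw [hl] at hx
    exact ⟨uu_gt_one C hx, uu_le C x⟩
  · intro x hx
    rw [hl] at hx
    exact ⟨uu_pos C x, uu_lt_one C hx⟩
  · -- ContDiffOn
    have hΩ : IsOpen (({-lC, lC} : Set ℝ)ᶜ) := by
      apply isOpen_compl_iff.mpr
      exact ((finite_singleton lC).insert (-lC)).isClosed
    have hne : ∀ x ∈ ({-lC, lC} : Set ℝ)ᶜ, x ≠ XX C 1 ∧ x ≠ -(XX C 1) := by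
      intro x hx
      simp only [mem_compl_iff, mem_insert_iff, mem_singleton_iff, not_or] at hx
      exact ⟨by rw [← hl]; exact hx.2, by rw [← hl]; exact hx.1⟩
    rw [show (2 : WithTop ℕ∞) = 1 + 1 by norm_num, contDiffOn_succ_iff_deriv_of_isOpen hΩ]
    refine ⟨fun x hx => (uu_diffAt C (hne x hx).1 (hne x hx).2).differentiableWithinAt, ?_, ?_⟩
    · intro h; exact absurd h (by norm_num)
    · rw [show (1 : WithTop ℕ∞) = 0 + 1 by norm_num, contDiffOn_succ_iff_deriv_of_isOpen hΩ]
      refine ⟨fun x hx =>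
        (uu_hasDeriv2_all C (hne x hx).1 (hne x hx).2).differentiableAt.differentiableWithinAt,
        ?_, ?_⟩
      · intro h; exact absurd h (by norm_num)
      · rw [contDiffOn_zero]
        have hcongr : ∀ x ∈ ({-lC, lC} : Set ℝ)ᶜ,
            deriv (deriv (uu C)) x = uu C x / (1 - (uu C x)^2) :=
          fun x hx => (uu_hasDeriv2_all C (hne x hx).1 (hne x hx).2).deriv
        refine ContinuousOn.congr ?_ hcongr
        refine ContinuousOn.div ((uu_cont C).continuousOn) ?_ ?_
        · exact (continuous_const.sub ((uu_cont C).pow 2)).continuousOn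
        · exact fun x hx => one_sub_uu_sq_ne C (hne x hx).1 (hne x hx).2
  · -- ODE
    intro x hx
    simp only [mem_insert_iff, mem_singleton_iff, not_or] at hx
    have h1 : x ≠ XX C 1 := by rw [← hl]; exact hx.2
    have h2 : x ≠ -(XX C 1) := by rw [← hl]; exact hx.1
    rw [(uu_hasDeriv2_all C h1 h2).deriv]
    field_simp [one_sub_uu_sq_ne C h1 h2]
  · -- inner invariant
    intro x hx0 hx
    rw [hl] at hx
    rcases lt_trichotomy x 0 with hneg | h0 | hpos
    · have hx' : 0 < -x := by linarith
      have hxl : -x < XX C 1 := by rwa [abs_of_neg hneg] at hx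
      have hd : deriv (uu C) x = -deriv (uu C) (-x) := by
        have := uu_deriv_odd C (-x)
        rwa [neg_neg] at this
      have hder := (uu_hasDeriv_inner C hx' hxl).deriv
      have habs : |(-x)| = -x := abs_of_pos hx'
      have hv1 : 1 < uu C (-x) := uu_gt_one C (by rw [habs]; exact hxl)
      have hvb : uu C (-x) < bb C := uu_lt_bb C (by rw [habs]; exact hx')
      rw [hd, neg_sq, hder, neg_sq, uu_even C x] at *
      exact Real.sq_sqrt (psi_pos C hv1 hvb).le
    · exfalso; rw [h0] at hx0; simp at hx0
    · have hxl : x < XX C 1 := by rwa [abs_of_pos hpos] at hx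
      have hder := (uu_hasDeriv_inner C hpos hxl).deriv
      have habs : |x| = x := abs_of_pos hpos
      have hv1 : 1 < uu C x := uu_gt_one C (by rw [habs]; exact hxl)
      have hvb : uu C x < bb C := uu_lt_bb C (by rw [habs]; exact hpos)
      rw [hder, neg_sq]
      exact Real.sq_sqrt (psi_pos C hv1 hvb).le
  · -- outer invariant
    intro x hx
    rw [hl] at hx
    rcases lt_trichotomy x 0 with hneg | h0 | hpos
    · have hx' : XX C 1 < -x := by rwa [abs_of_neg hneg] at hx
      have hd : deriv (uu C) x = -deriv (uu C) (-x) := by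
        have := uu_deriv_odd C (-x)
        rwa [neg_neg] at this
      have hder := (uu_hasDeriv_outer C hx').deriv
      have hx0' : 0 < -x := lt_of_le_of_lt (XX_one_pos C).le hx'
      have habs : |(-x)| = -x := abs_of_pos hx0'
      have hv1 : uu C (-x) < 1 := uu_lt_one C (by rw [habs]; exact hx')
      have hv0 : 0 < uu C (-x) := uu_pos C (-x)
      rw [hd, neg_sq, hder, neg_sq, uu_even C x] at *
      exact Real.sq_sqrt (hh_pos hv0 hv1).le
    · exfalso; rw [h0] at hx; simp at hx
      exact absurd hx (not_lt.2 (XX_one_pos C).le)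
    · have hx' : XX C 1 < x := by rwa [abs_of_pos hpos] at hx
      have hder := (uu_hasDeriv_outer C hx').deriv
      have habs : |x| = x := abs_of_pos hpos
      have hv1 : uu C x < 1 := uu_lt_one C (by rw [habs]; exact hx')
      have hv0 : 0 < uu C x := uu_pos C x
      rw [hder, neg_sq]
      exact Real.sq_sqrt (hh_pos hv0 hv1).le
end

section
/- Let u : ℝ → ℝ be the cusped soliton: a continuous even function with u(0) = 1, 0 < u(x) < 1 for x ≠ 0, u(x) → 0 as |x| → ∞, twice continuously differentiable on ℝ \ {0}, satisfying (1 − u(x)²)·u''(x) = u(x) and u'(x)² = −log(1 − u(x)²) for all x ≠ 0. Then there exist constants K > 0 and δ ∈ (0, 1/e) such that for all x with 0 < |x| < δ, the inequality |1 − u(x) − |x|·√(log(1/|x|))| ≤ K·|x|·√(log(1/|x|))·(log(log(1/|x|))/log(1/|x|)) holds. In particular, u(x) = 1 − |x|√(log(1/|x|))·(1 + O(log log(1/|x|)/log(1/|x|))) as |x| → 0. -/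
open Filter Set


lemma aux_sqrt_sub_lower {a b : ℝ} (hb : 0 ≤ b) (hba : b ≤ a) :
    Real.sqrt a - b / Real.sqrt a ≤ Real.sqrt (a - b) := by
  rcases eq_or_lt_of_le (hb.trans hba) with h | ha
  · have hb0 : b = 0 := le_antisymm (hba.trans h.symm.le) hb
    simp [← h, hb0]
  · rcases le_or_gt (Real.sqrt a - b / Real.sqrt a) 0 with h | h
    · exact h.trans (Real.sqrt_nonneg _)
    · rw [show Real.sqrt a - b / Real.sqrt a = (Real.sqrt a - b / Real.sqrt a) from rfl]
      rw [← Real.sqrt_sq h.le] -- √((√a - b/√a)^2)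
      apply Real.sqrt_le_sqrt
      have hs : Real.sqrt a > 0 := Real.sqrt_pos.mpr ha
      have hsq : Real.sqrt a ^ 2 = a := Real.sq_sqrt ha.le
      have hdiv : b / Real.sqrt a * Real.sqrt a = b := div_mul_cancel₀ b hs.ne'
      have h2 : (b / Real.sqrt a) ^ 2 = b ^ 2 / a := by rw [div_pow, hsq]
      have h3 : b ^ 2 / a ≤ b := by
        rw [div_le_iff₀ ha]
        nlinarith
      nlinarith

lemma aux_nonneg_of_deriv {f f' : ℝ → ℝ} {b : ℝ}
    (hder : ∀ t ∈ Ioo (0:ℝ) b, HasDerivAt f (f' t) t)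
    (hpos : ∀ t ∈ Ioo (0:ℝ) b, 0 ≤ f' t)
    (hlim : Tendsto f (nhdsWithin 0 (Ioi 0)) (nhds 0)) :
    ∀ x ∈ Ioo (0:ℝ) b, 0 ≤ f x := by
  intro x hx
  have key : ∀ ε ∈ Ioo (0:ℝ) x, f ε ≤ f x := by
    intro ε hε
    have hsub : Icc ε x ⊆ Ioo 0 b := fun t ht =>
      ⟨lt_of_lt_of_le hε.1 ht.1, lt_of_le_of_lt ht.2 hx.2⟩
    have hmono : MonotoneOn f (Icc ε x) := by
      apply monotoneOn_of_deriv_nonneg (convex_Icc ε x)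
      · exact fun t ht => (hder t (hsub ht)).continuousAt.continuousWithinAt
      · intro t ht
        rw [interior_Icc] at ht
        exact (hder t (hsub (Ioo_subset_Icc_self ht))).differentiableAt.differentiableWithinAt
      · intro t ht
        rw [interior_Icc] at ht
        rw [(hder t (hsub (Ioo_subset_Icc_self ht))).deriv]
        exact hpos t (hsub (Ioo_subset_Icc_self ht))
    exact hmono ⟨le_refl ε, hε.2.le⟩ ⟨hε.2.le, le_refl x⟩ hε.2.le
  have hev : ∀ᶠ ε in nhdsWithin (0:ℝ) (Ioi 0), f ε ≤ f x := by
    filter_upwards [Ioo_mem_nhdsGT_of_mem (left_mem_Ico.mpr hx.1)] with ε hε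
    exact key ε hε
  exact le_of_tendsto hlim hev

lemma aux_deriv_sqrtL {t : ℝ} (ht : 0 < t) (hL : 0 < -Real.log t) :
    HasDerivAt (fun t => Real.sqrt (-Real.log t))
      (-(1 / (2 * t * Real.sqrt (-Real.log t)))) t := by
  have hnl : HasDerivAt (fun t : ℝ => -Real.log t) (-t⁻¹) t :=
    (Real.hasDerivAt_log ht.ne').neg
  have h := (Real.hasDerivAt_sqrt hL.ne').comp t hnl
  refine h.congr_deriv ?_
  have hs : 0 < Real.sqrt (-Real.log t) := Real.sqrt_pos.mpr hL
  field_simp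

lemma aux_deriv_A {t : ℝ} (ht : 0 < t) (hL : 0 < -Real.log t) :
    HasDerivAt (fun t => t * Real.sqrt (-Real.log t))
      (Real.sqrt (-Real.log t) - 1 / (2 * Real.sqrt (-Real.log t))) t := by
  have h := (hasDerivAt_id t).mul (aux_deriv_sqrtL ht hL)
  refine h.congr_deriv ?_
  have hs : 0 < Real.sqrt (-Real.log t) := Real.sqrt_pos.mpr hL
  simp only [id_eq]
  field_simp
  ring

lemma aux_deriv_B {t : ℝ} (ht : 0 < t) (hL : 0 < -Real.log t) :
    HasDerivAt (fun t => t / (2 * Real.sqrt (-Real.log t)))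
      (1 / (2 * Real.sqrt (-Real.log t)) +
        1 / (4 * (-Real.log t) * Real.sqrt (-Real.log t))) t := by
  have hs : 0 < Real.sqrt (-Real.log t) := Real.sqrt_pos.mpr hL
  have hd : HasDerivAt (fun t => 2 * Real.sqrt (-Real.log t))
      (2 * -(1 / (2 * t * Real.sqrt (-Real.log t)))) t :=
    (aux_deriv_sqrtL ht hL).const_mul 2
  have h := (hasDerivAt_id t).div hd (by positivity)
  refine h.congr_deriv ?_
  have hss : Real.sqrt (-Real.log t) * Real.sqrt (-Real.log t) = -Real.log t :=
    Real.mul_self_sqrt hL.le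
  set s := Real.sqrt (-Real.log t) with hsdef
  have hlog : -Real.log t = s * s := hss.symm
  rw [hlog]
  simp only [id_eq]
  field_simp
  ring

lemma aux_deriv_C {t : ℝ} (ht : 0 < t) (hL : 0 < -Real.log t) :
    HasDerivAt (fun t => 2 * (t * Real.log (-Real.log t) / Real.sqrt (-Real.log t)))
      (2 * Real.log (-Real.log t) / Real.sqrt (-Real.log t) +
        (Real.log (-Real.log t) - 2) / ((-Real.log t) * Real.sqrt (-Real.log t))) t := by
  have hs : 0 < Real.sqrt (-Real.log t) := Real.sqrt_pos.mpr hL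
  have hnl : HasDerivAt (fun t : ℝ => -Real.log t) (-t⁻¹) t :=
    (Real.hasDerivAt_log ht.ne').neg
  have hlogL : HasDerivAt (fun t : ℝ => Real.log (-Real.log t))
      ((-Real.log t)⁻¹ * -t⁻¹) t := by
    have := (Real.hasDerivAt_log hL.ne').comp t hnl; exact this
  have hN : HasDerivAt (fun t : ℝ => t * Real.log (-Real.log t))
      (1 * Real.log (-Real.log t) + t * ((-Real.log t)⁻¹ * -t⁻¹)) t :=
    (hasDerivAt_id t).mul hlogL
  have h := (hN.div (aux_deriv_sqrtL ht hL) hs.ne').const_mul 2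
  refine h.congr_deriv ?_
  have hss : Real.sqrt (-Real.log t) * Real.sqrt (-Real.log t) = -Real.log t :=
    Real.mul_self_sqrt hL.le
  set s := Real.sqrt (-Real.log t) with hsdef
  have hlog : -Real.log t = s * s := hss.symm
  rw [hlog]
  field_simp
  ring

lemma aux_basic_bounds {t : ℝ} (ht : t ∈ Ioo (0:ℝ) (Real.exp (-8))) :
    8 < -Real.log t ∧ 2 ≤ Real.sqrt (-Real.log t) ∧
      t * (-Real.log t) ≤ 2 * Real.sqrt t := by
  have hL : 8 < -Real.log t := by
    have := Real.log_lt_log ht.1 ht.2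
    rw [Real.log_exp] at this
    linarith
  refine ⟨hL, ?_, ?_⟩
  · rw [show (2:ℝ) = Real.sqrt 4 by
      rw [show (4:ℝ) = 2^2 by norm_num, Real.sqrt_sq (by norm_num)]]
    exact Real.sqrt_le_sqrt (by linarith)
  · have hst : 0 < Real.sqrt t := Real.sqrt_pos.mpr ht.1
    have h1 : -Real.log t = 2 * Real.log (Real.sqrt t)⁻¹ := by
      rw [Real.log_inv, Real.log_sqrt ht.1.le]; ring
    have h2 : Real.log (Real.sqrt t)⁻¹ ≤ (Real.sqrt t)⁻¹ := by
      have := Real.log_le_sub_one_of_pos (inv_pos.mpr hst)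
      linarith
    have h3 : -Real.log t ≤ 2 * (Real.sqrt t)⁻¹ := by rw [h1]; linarith
    have h4 : t * (2 * (Real.sqrt t)⁻¹) = 2 * Real.sqrt t := by
      field_simp
      nlinarith [Real.mul_self_sqrt ht.1.le]
    calc t * (-Real.log t) ≤ t * (2 * (Real.sqrt t)⁻¹) := by
          exact mul_le_mul_of_nonneg_left h3 ht.1.le
      _ = 2 * Real.sqrt t := h4

lemma aux_tendsto_sqrt4 :
    Tendsto (fun t : ℝ => 4 * Real.sqrt t) (nhdsWithin 0 (Ioi 0)) (nhds 0) := by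
  have h : Tendsto (fun t : ℝ => Real.sqrt t) (nhds 0) (nhds 0) := by
    simpa using Real.continuous_sqrt.tendsto 0
  simpa using (h.const_mul 4).mono_left nhdsWithin_le_nhds

lemma aux_mem_small : Ioo (0:ℝ) (Real.exp (-8)) ∈ nhdsWithin (0:ℝ) (Ioi 0) :=
  Ioo_mem_nhdsGT_of_mem (left_mem_Ico.mpr (Real.exp_pos _))

lemma aux_limit_A :
    Tendsto (fun t : ℝ => t * Real.sqrt (-Real.log t)) (nhdsWithin 0 (Ioi 0)) (nhds 0) := by
  refine squeeze_zero' ?_ ?_ aux_tendsto_sqrt4 <;> filter_upwards [aux_mem_small] with t ht <;>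
    obtain ⟨hL, hs, hb⟩ := aux_basic_bounds ht
  · exact mul_nonneg ht.1.le (Real.sqrt_nonneg _)
  · have hsle : Real.sqrt (-Real.log t) ≤ -Real.log t := by
      nlinarith [Real.sq_sqrt (by linarith : (0:ℝ) ≤ -Real.log t)]
    nlinarith [Real.sqrt_nonneg t, ht.1]

lemma aux_limit_B :
    Tendsto (fun t : ℝ => t / (2 * Real.sqrt (-Real.log t))) (nhdsWithin 0 (Ioi 0)) (nhds 0) := by
  refine squeeze_zero' ?_ ?_ aux_tendsto_sqrt4 <;> filter_upwards [aux_mem_small] with t ht <;>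
    obtain ⟨hL, hs, hb⟩ := aux_basic_bounds ht
  · exact div_nonneg ht.1.le (by positivity)
  · have ht1 : t < 1 := lt_trans ht.2 (by
      calc Real.exp (-8) < Real.exp 0 := Real.exp_lt_exp.mpr (by norm_num)
        _ = 1 := Real.exp_zero)
    have h5 : t ≤ Real.sqrt t := by
      nlinarith [Real.sq_sqrt ht.1.le, Real.sqrt_nonneg t,
        Real.sqrt_le_sqrt ht1.le, Real.sqrt_one]
    have h6 : t / (2 * Real.sqrt (-Real.log t)) ≤ t / 4 := by
      apply div_le_div_of_nonneg_left ht.1.le (by norm_num) (by linarith)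
    nlinarith [Real.sqrt_nonneg t]

lemma aux_limit_C :
    Tendsto (fun t : ℝ => 2 * (t * Real.log (-Real.log t) / Real.sqrt (-Real.log t)))
      (nhdsWithin 0 (Ioi 0)) (nhds 0) := by
  refine squeeze_zero' ?_ ?_ aux_tendsto_sqrt4 <;> filter_upwards [aux_mem_small] with t ht <;>
    obtain ⟨hL, hs, hb⟩ := aux_basic_bounds ht <;>
    have hm : 0 ≤ Real.log (-Real.log t) := Real.log_nonneg (by linarith)
  · exact mul_nonneg (by norm_num)
      (div_nonneg (mul_nonneg ht.1.le hm) (Real.sqrt_nonneg _))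
  · have hmL : Real.log (-Real.log t) ≤ -Real.log t :=
      (Real.log_le_sub_one_of_pos (by linarith)).trans (by linarith)
    have hs0 : (0:ℝ) < Real.sqrt (-Real.log t) := by linarith
    have key : t * Real.log (-Real.log t) / Real.sqrt (-Real.log t)
        ≤ t * (-Real.log t) / 2 := by
      apply div_le_div₀ (by nlinarith [ht.1.le]) ?_ (by norm_num) hs
      exact mul_le_mul_of_nonneg_left hmL ht.1.le
    nlinarith [Real.sqrt_nonneg t]
/-- singular behavior of the cusped soliton near the origin:
u(x) = 1 − |x|√(log(1/|x|))·(1 + O(log log(1/|x|)/log(1/|x|))) as |x| → 0. -/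
theorem cusped_soliton_asymptotics
    (u : ℝ → ℝ)
    (hcont : Continuous u)
    (heven : ∀ x : ℝ, u (-x) = u x)
    (h0 : u 0 = 1)
    (hrange : ∀ x : ℝ, x ≠ 0 → 0 < u x ∧ u x < 1)
    (hdecay : Tendsto u (cocompact ℝ) (nhds 0))
    (hsmooth : ContDiffOn ℝ 2 u {(0 : ℝ)}ᶜ)
    (heq : ∀ x : ℝ, x ≠ 0 → (1 - u x ^ 2) * deriv (deriv u) x = u x)
    (hinv : ∀ x : ℝ, x ≠ 0 → (deriv u x) ^ 2 = -Real.log (1 - u x ^ 2)) :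
    ∃ K : ℝ, 0 < K ∧ ∃ δ : ℝ, δ ∈ Ioo (0 : ℝ) (1 / Real.exp 1) ∧
      ∀ x : ℝ, 0 < |x| → |x| < δ →
        |1 - u x - |x| * Real.sqrt (Real.log (1 / |x|))| ≤
          K * |x| * Real.sqrt (Real.log (1 / |x|)) *
            (Real.log (Real.log (1 / |x|)) / Real.log (1 / |x|)) := by
  have hopen : IsOpen ({(0:ℝ)}ᶜ) := isOpen_compl_singleton
  have hdiff : ∀ t : ℝ, t ≠ 0 → HasDerivAt u (deriv u t) t := by
    intro t ht
    have h1 : ContDiffAt ℝ 2 u t := hsmooth.contDiffAt (hopen.mem_nhds ht)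
    exact (h1.differentiableAt (by norm_num)).hasDerivAt
  have hcont_du : ContinuousOn (deriv u) {(0:ℝ)}ᶜ :=
    hsmooth.continuousOn_deriv_of_isOpen hopen (by norm_num)
  have hsq_pos : ∀ t : ℝ, t ≠ 0 → 0 < (deriv u t)^2 := by
    intro t ht
    rw [hinv t ht]
    obtain ⟨h1, h2⟩ := hrange t ht
    have hp : 0 < 1 - (u t)^2 := by nlinarith
    have hlt : 1 - (u t)^2 < 1 := by nlinarith
    have := Real.log_neg hp hlt
    linarith
  have hneg : ∀ t : ℝ, 0 < t → deriv u t < 0 := by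
    intro t ht
    by_contra hge
    push_neg at hge
    have hne : deriv u t ≠ 0 := by
      intro h
      have := hsq_pos t ht.ne'
      rw [h] at this
      simp at this
    have hpos_t : 0 < deriv u t := lt_of_le_of_ne hge (Ne.symm hne)
    have hall : ∀ b : ℝ, 0 < b → 0 < deriv u b := by
      intro b hb
      rcases lt_trichotomy (deriv u b) 0 with h | h | h
      · exfalso
        have hsub : uIcc t b ⊆ {(0:ℝ)}ᶜ := by
          intro z hz
          simp only [mem_compl_iff, mem_singleton_iff]
          have h1 : min t b ≤ z := hz.1
          exact (lt_of_lt_of_le (lt_min ht hb) h1).ne'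
        have hc : ContinuousOn (deriv u) (uIcc t b) := hcont_du.mono hsub
        have h0mem : (0:ℝ) ∈ uIcc (deriv u t) (deriv u b) := by
          rw [mem_uIcc]
          right
          exact ⟨h.le, hpos_t.le⟩
        obtain ⟨c, hc1, hc2⟩ := intermediate_value_uIcc hc h0mem
        have hcpos := hsq_pos c (hsub hc1)
        rw [hc2] at hcpos
        simp at hcpos
      · exfalso
        have := hsq_pos b hb.ne'
        rw [h] at this
        simp at this
      · exact h
    have hmono : StrictMonoOn u (Ioi (0:ℝ)) := by
      apply strictMonoOn_of_deriv_pos (convex_Ioi 0) hcont.continuousOn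
      intro z hz
      rw [interior_Ioi] at hz
      exact hall z hz
    have hatTop : Tendsto u atTop (nhds 0) := by
      apply hdecay.mono_left
      rw [cocompact_eq_atBot_atTop]
      exact le_sup_right
    have hu1 : 0 < u 1 := (hrange 1 one_ne_zero).1
    have hev : ∀ᶠ z in atTop, u z < u 1 := hatTop.eventually_lt_const hu1
    obtain ⟨z, hz1, hz2⟩ := (hev.and (eventually_gt_atTop 1)).exists
    have := hmono (mem_Ioi.mpr one_pos) (mem_Ioi.mpr (lt_trans one_pos hz2)) hz2
    linarith
  -- derivative of 1 - u
  have hvder : ∀ t : ℝ, 0 < t →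
      HasDerivAt (fun t => 1 - u t) (Real.sqrt (-Real.log (1 - (u t)^2))) t := by
    intro t ht
    have h1 : HasDerivAt (fun t => 1 - u t) (-(deriv u t)) t := (hdiff t ht.ne').const_sub 1
    convert h1 using 1
    rw [← hinv t ht.ne', Real.sqrt_sq_eq_abs, abs_of_neg (hneg t ht)]
  -- small neighborhood where 1 - u < (2e)⁻¹
  obtain ⟨δ₁, hδ₁pos, hδ₁⟩ : ∃ δ₁ > 0, ∀ t : ℝ, dist t 0 < δ₁ →
      dist (u t) 1 < (2*Real.exp 1)⁻¹ := by
    have h1 : Tendsto u (nhds 0) (nhds 1) := by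
      rw [← h0]
      exact hcont.tendsto 0
    have h2 := Metric.tendsto_nhds_nhds.mp h1 (ε := (2*Real.exp 1)⁻¹) (by positivity)
    obtain ⟨δ₁, hp, hd⟩ := h2
    exact ⟨δ₁, hp, fun t ht => hd ht⟩
  set δ : ℝ := min δ₁ (Real.exp (-8)) with hδdef
  have hδpos : 0 < δ := lt_min hδ₁pos (Real.exp_pos _)
  have hδe8 : δ ≤ Real.exp (-8) := min_le_right _ _
  have hδsub : ∀ t, t ∈ Ioo (0:ℝ) δ → t ∈ Ioo (0:ℝ) (Real.exp (-8)) :=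
    fun t ht => ⟨ht.1, lt_of_lt_of_le ht.2 hδe8⟩
  -- v := 1 - u facts
  have hvpos : ∀ t ∈ Ioo (0:ℝ) δ, 0 < 1 - u t ∧ 1 - u t < (2*Real.exp 1)⁻¹ := by
    intro t ht
    obtain ⟨h1, h2⟩ := hrange t ht.1.ne'
    refine ⟨by linarith, ?_⟩
    have hd := hδ₁ t (by
      rw [Real.dist_eq, sub_zero, abs_of_pos ht.1]
      exact lt_of_lt_of_le ht.2 (min_le_left _ _))
    rw [Real.dist_eq] at hd
    have := abs_lt.mp hd
    linarith [this.1]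
  have h1u2 : ∀ t ∈ Ioo (0:ℝ) δ, 0 < 1 - (u t)^2 ∧ 1 - (u t)^2 ≤ 2 * (1 - u t) ∧
      (1 - u t) ≤ 1 - (u t)^2 := by
    intro t ht
    obtain ⟨h1, h2⟩ := hrange t ht.1.ne'
    exact ⟨by nlinarith, by nlinarith, by nlinarith⟩
  have hv0 : Tendsto (fun t => 1 - u t) (nhdsWithin 0 (Ioi 0)) (nhds 0) := by
    have h1 : Tendsto (fun t => 1 - u t) (nhds 0) (nhds (1 - u 0)) :=
      (continuous_const.sub hcont).tendsto 0
    rw [h0] at h1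
    simpa using h1.mono_left nhdsWithin_le_nhds
  have hLfacts : ∀ t ∈ Ioo (0:ℝ) δ, 8 < -Real.log t ∧ 2 ≤ Real.sqrt (-Real.log t) := by
    intro t ht
    have := aux_basic_bounds (hδsub t ht)
    exact ⟨this.1, this.2.1⟩
  have hm2 : ∀ t ∈ Ioo (0:ℝ) δ, 2 < Real.log (-Real.log t) := by
    intro t ht
    obtain ⟨hL8, _⟩ := hLfacts t ht
    rw [Real.lt_log_iff_exp_lt (by linarith)]
    have he : Real.exp 1 < 2.7182818286 := Real.exp_one_lt_d9
    have h2 : Real.exp 2 = Real.exp 1 * Real.exp 1 := by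
      rw [← Real.exp_add]; norm_num
    nlinarith [Real.exp_pos 1]
  -- step 1 : 1 ≤ w on Ioo 0 δ
  have hw1 : ∀ t ∈ Ioo (0:ℝ) δ, 1 ≤ Real.sqrt (-Real.log (1 - (u t)^2)) := by
    intro t ht
    obtain ⟨hb1, hb2⟩ := hvpos t ht
    obtain ⟨hq1, hq2, hq3⟩ := h1u2 t ht
    have h1 : 1 - (u t)^2 < Real.exp (-1) := by
      have h2 : 2 * (2*Real.exp 1)⁻¹ = (Real.exp 1)⁻¹ := by
        field_simp
      have h3 : Real.exp (-1) = (Real.exp 1)⁻¹ := Real.exp_neg 1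
      nlinarith [Real.exp_pos 1]
    have h2 : Real.log (1 - (u t)^2) < -1 := by
      calc Real.log (1 - (u t)^2) < Real.log (Real.exp (-1)) := Real.log_lt_log hq1 h1
        _ = -1 := Real.log_exp _
    rw [show (1:ℝ) = Real.sqrt 1 from Real.sqrt_one.symm]
    exact Real.sqrt_le_sqrt (by rw [Real.sqrt_one]; linarith)
  -- step 1' : t ≤ 1 - u t
  have hstep1 : ∀ x ∈ Ioo (0:ℝ) δ, x ≤ 1 - u x := by
    have key := aux_nonneg_of_deriv (f := fun t => (1 - u t) - t)
      (f' := fun t => Real.sqrt (-Real.log (1 - (u t)^2)) - 1)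
      (b := δ)
      (fun t ht => (hvder t ht.1).sub (hasDerivAt_id t))
      (fun t ht => by
        have h := hw1 t ht
        show (0:ℝ) ≤ Real.sqrt (-Real.log (1 - (u t)^2)) - 1
        linarith)
      (by simpa using hv0.sub ((continuous_id.tendsto (0:ℝ)).mono_left nhdsWithin_le_nhds))
    intro x hx
    have h := key x hx
    linarith
  -- w t ≤ √(-log t)
  have hwup : ∀ t ∈ Ioo (0:ℝ) δ,
      Real.sqrt (-Real.log (1 - (u t)^2)) ≤ Real.sqrt (-Real.log t) := by
    intro t ht
    apply Real.sqrt_le_sqrt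
    have h1 : t ≤ 1 - (u t)^2 := le_trans (hstep1 t ht) (h1u2 t ht).2.2
    have := Real.log_le_log ht.1 h1
    linarith
  -- step 2 : upper barrier
  have hstep2 : ∀ x ∈ Ioo (0:ℝ) δ,
      1 - u x ≤ x * Real.sqrt (-Real.log x) + x / (2*Real.sqrt (-Real.log x)) := by
    have key := aux_nonneg_of_deriv
      (f := fun t => (t * Real.sqrt (-Real.log t) + t / (2*Real.sqrt (-Real.log t))) - (1 - u t))
      (f' := fun t => ((Real.sqrt (-Real.log t) - 1/(2*Real.sqrt (-Real.log t))) +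
          (1/(2*Real.sqrt (-Real.log t)) + 1/(4*(-Real.log t)*Real.sqrt (-Real.log t)))) -
          Real.sqrt (-Real.log (1 - (u t)^2)))
      (b := δ)
      (fun t ht => by
        obtain ⟨hL8, hs2⟩ := hLfacts t ht
        exact ((aux_deriv_A ht.1 (by linarith)).add (aux_deriv_B ht.1 (by linarith))).sub
          (hvder t ht.1))
      (fun t ht => by
        obtain ⟨hL8, hs2⟩ := hLfacts t ht
        have h1 := hwup t ht
        have hs0 : (0:ℝ) < Real.sqrt (-Real.log t) := by linarith
        have h2 : 0 < 1/(4*(-Real.log t)*Real.sqrt (-Real.log t)) := by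
          have hL0 : (0:ℝ) < -Real.log t := by linarith
          positivity
        show (0:ℝ) ≤ ((Real.sqrt (-Real.log t) - 1/(2*Real.sqrt (-Real.log t))) +
          (1/(2*Real.sqrt (-Real.log t)) + 1/(4*(-Real.log t)*Real.sqrt (-Real.log t)))) -
          Real.sqrt (-Real.log (1 - (u t)^2))
        linarith)
      (by simpa using (aux_limit_A.add aux_limit_B).sub hv0)
    intro x hx
    have h := key x hx
    linarith
  -- step 3 : 1 - u x ≤ x * (-log x)
  have hstep3 : ∀ x ∈ Ioo (0:ℝ) δ, 1 - u x ≤ x * (-Real.log x) := by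
    intro x hx
    obtain ⟨hL8, hs2⟩ := hLfacts x hx
    have h2 := hstep2 x hx
    have hs0 : 0 < Real.sqrt (-Real.log x) := by linarith
    have hss : Real.sqrt (-Real.log x) * Real.sqrt (-Real.log x) = -Real.log x :=
      Real.mul_self_sqrt (by linarith)
    have hb : x / (2*Real.sqrt (-Real.log x)) ≤ x := by
      rw [div_le_iff₀ (by linarith)]
      nlinarith [hx.1]
    have h7 : Real.sqrt (-Real.log x) + 1 ≤ -Real.log x := by
      nlinarith [mul_self_nonneg (Real.sqrt (-Real.log x) - 2)]
    have h8 : x * (Real.sqrt (-Real.log x) + 1) ≤ x * (-Real.log x) :=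
      mul_le_mul_of_nonneg_left h7 hx.1.le
    nlinarith [hb, h2, h8]
  -- step 4 : lower barrier
  have hstep4 : ∀ x ∈ Ioo (0:ℝ) δ,
      x * Real.sqrt (-Real.log x) -
        2*(x * Real.log (-Real.log x) / Real.sqrt (-Real.log x)) ≤ 1 - u x := by
    have key := aux_nonneg_of_deriv
      (f := fun t => (1 - u t) - (t * Real.sqrt (-Real.log t) -
        2*(t * Real.log (-Real.log t) / Real.sqrt (-Real.log t))))
      (f' := fun t => Real.sqrt (-Real.log (1 - (u t)^2)) -
        ((Real.sqrt (-Real.log t) - 1/(2*Real.sqrt (-Real.log t))) -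
          (2 * Real.log (-Real.log t) / Real.sqrt (-Real.log t) +
            (Real.log (-Real.log t) - 2) / ((-Real.log t) * Real.sqrt (-Real.log t)))))
      (b := δ)
      (fun t ht => by
        obtain ⟨hL8, hs2⟩ := hLfacts t ht
        exact (hvder t ht.1).sub
          ((aux_deriv_A ht.1 (by linarith)).sub (aux_deriv_C ht.1 (by linarith))))
      (fun t ht => by
        obtain ⟨hL8, hs2⟩ := hLfacts t ht
        have hm := hm2 t ht
        have hs0 : (0:ℝ) < Real.sqrt (-Real.log t) := by linarith
        have hL0 : (0:ℝ) < -Real.log t := by linarith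
        have hss : Real.sqrt (-Real.log t) * Real.sqrt (-Real.log t) = -Real.log t :=
          Real.mul_self_sqrt hL0.le
        have hlog2 : Real.log 2 ≤ 1 := by
          have := Real.log_le_sub_one_of_pos (by norm_num : (0:ℝ) < 2)
          linarith
        have hlog2pos : 0 < Real.log 2 := Real.log_pos (by norm_num)
        have hmle : Real.log (-Real.log t) ≤ -Real.log t - 1 :=
          Real.log_le_sub_one_of_pos hL0
        -- lower bound for w t
        have hvle : 1 - u t ≤ t * (-Real.log t) := hstep3 t ht
        have hq := h1u2 t ht
        have h1u : 1 - (u t)^2 ≤ 2*(t*(-Real.log t)) := by linarith [hq.2.1]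
        have hlog1u : Real.log (1 - (u t)^2) ≤
            Real.log 2 + Real.log t + Real.log (-Real.log t) := by
          calc Real.log (1 - (u t)^2) ≤ Real.log (2*(t*(-Real.log t))) :=
                Real.log_le_log hq.1 h1u
            _ = Real.log 2 + (Real.log t + Real.log (-Real.log t)) := by
                rw [Real.log_mul (by norm_num) (mul_pos ht.1 hL0).ne',
                  Real.log_mul ht.1.ne' (by linarith)]
            _ = Real.log 2 + Real.log t + Real.log (-Real.log t) := by ring
        have hwlow : Real.sqrt ((-Real.log t) - (Real.log (-Real.log t) + Real.log 2)) ≤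
            Real.sqrt (-Real.log (1 - (u t)^2)) := by
          apply Real.sqrt_le_sqrt
          linarith
        have hKey := aux_sqrt_sub_lower
          (b := Real.log (-Real.log t) + Real.log 2) (a := -Real.log t)
          (by linarith) (by linarith)
        -- algebra: A' - C' ≤ s - (m + log 2)/s
        have hfrac : 0 ≤ (Real.log (-Real.log t) - 2) /
            ((-Real.log t) * Real.sqrt (-Real.log t)) :=
          div_nonneg (by linarith) (by positivity)
        have h1 : (Real.log (-Real.log t) + Real.log 2)/Real.sqrt (-Real.log t) ≤
            (1/2 + 2*Real.log (-Real.log t))/Real.sqrt (-Real.log t) := by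
          rw [div_le_div_iff₀ hs0 hs0]
          nlinarith [hs0.le]
        have h2 : (1/2 + 2*Real.log (-Real.log t))/Real.sqrt (-Real.log t) =
            1/(2*Real.sqrt (-Real.log t)) +
              2*Real.log (-Real.log t)/Real.sqrt (-Real.log t) := by
          field_simp
        show (0:ℝ) ≤ Real.sqrt (-Real.log (1 - (u t)^2)) -
          ((Real.sqrt (-Real.log t) - 1/(2*Real.sqrt (-Real.log t))) -
            (2 * Real.log (-Real.log t) / Real.sqrt (-Real.log t) +
              (Real.log (-Real.log t) - 2) / ((-Real.log t) * Real.sqrt (-Real.log t))))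
        linarith [hKey, hwlow])
      (by simpa using hv0.sub (aux_limit_A.sub aux_limit_C))
    intro x hx
    have h := key x hx
    linarith
  -- main estimate on the positive side
  have main : ∀ y ∈ Ioo (0:ℝ) δ,
      |1 - u y - y * Real.sqrt (-Real.log y)| ≤
        2 * y * Real.sqrt (-Real.log y) *
          (Real.log (-Real.log y) / (-Real.log y)) := by
    intro y hy
    obtain ⟨hL8, hs2⟩ := hLfacts y hy
    have hm := hm2 y hy
    have hs0 : (0:ℝ) < Real.sqrt (-Real.log y) := by linarith
    have hss : Real.sqrt (-Real.log y) * Real.sqrt (-Real.log y) = -Real.log y :=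
      Real.mul_self_sqrt (by linarith)
    have h2 := hstep2 y hy
    have h4 := hstep4 y hy
    have hRHS : 2 * y * Real.sqrt (-Real.log y) *
        (Real.log (-Real.log y) / (-Real.log y)) =
        2*(y * Real.log (-Real.log y) / Real.sqrt (-Real.log y)) := by
      have hL0 : (0:ℝ) < -Real.log y := by linarith
      have hLne : Real.log y ≠ 0 := by linarith
      field_simp
      first
      | linear_combination (2 * y * Real.log (Real.log y)) * hss
      | linear_combination (-(2 * y * Real.log (Real.log y))) * hss
      | linear_combination (2 * y * Real.log (-Real.log y)) * hss
      | linear_combination (-(2 * y * Real.log (-Real.log y))) * hss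
      | linear_combination (-y) * hss
    rw [abs_le, hRHS]
    constructor
    · linarith
    · have h5 : y/(2*Real.sqrt (-Real.log y)) ≤
          2*(y * Real.log (-Real.log y) / Real.sqrt (-Real.log y)) := by
        have e : 2*(y * Real.log (-Real.log y) / Real.sqrt (-Real.log y)) =
            (4*(y * Real.log (-Real.log y)))/(2*Real.sqrt (-Real.log y)) := by
          field_simp
          ring
        rw [e, div_le_div_iff₀ (by linarith) (by linarith)]
        nlinarith [mul_le_mul_of_nonneg_right hm.le (mul_pos hy.1 hs0).le,
          mul_pos hy.1 hs0]
      linarith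
  refine ⟨2, by norm_num, δ, ⟨hδpos, ?_⟩, ?_⟩
  · calc δ ≤ Real.exp (-8) := hδe8
      _ < Real.exp (-1) := Real.exp_lt_exp.mpr (by norm_num)
      _ = 1/Real.exp 1 := by rw [Real.exp_neg, one_div]
  · intro x hx0 hxδ
    have hy : |x| ∈ Ioo (0:ℝ) δ := ⟨hx0, hxδ⟩
    have hux : u x = u |x| := by
      rcases abs_cases x with ⟨h1, _⟩ | ⟨h1, _⟩
      · rw [h1]
      · rw [h1]
        exact (heven x).symm
    rw [show Real.log (1/|x|) = -Real.log |x| by rw [one_div, Real.log_inv], hux]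
    exact main |x| hy
end

section
/- The identity ∫_0^1 [ξ²/√(−log(1 − ξ²)) + √(−log(1 − ξ²))] dξ = 3·∫_0^1 ξ²·√(−log(1 − ξ²)) dξ holds, all three integrals being finite. -/
open MeasureTheory Set

namespace PohozaevAux

noncomputable def L (ξ : ℝ) : ℝ := -Real.log (1 - ξ ^ 2)
noncomputable def g (ξ : ℝ) : ℝ := Real.sqrt (L ξ)
noncomputable def F (ξ : ℝ) : ℝ := (ξ - ξ ^ 3) * g ξ

lemma hu_pos {ξ : ℝ} (hξ : ξ ∈ Ioo (0:ℝ) 1) : 0 < 1 - ξ ^ 2 := by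
  obtain ⟨h0, h1⟩ := hξ; nlinarith

lemma hL_pos {ξ : ℝ} (hξ : ξ ∈ Ioo (0:ℝ) 1) : 0 < L ξ := by
  obtain ⟨h0, h1⟩ := hξ
  have hu := hu_pos ⟨h0, h1⟩
  have : Real.log (1 - ξ ^ 2) < 0 := Real.log_neg hu (by nlinarith)
  simp only [L]; linarith

lemma hL_ge {ξ : ℝ} (hξ : ξ ∈ Ioo (0:ℝ) 1) : ξ ^ 2 ≤ L ξ := by
  have hu := hu_pos hξ
  have := Real.log_le_sub_one_of_pos hu
  simp only [L]; linarith

lemma hL_le {ξ : ℝ} (hξ : ξ ∈ Ioo (0:ℝ) 1) : L ξ ≤ (1 - ξ)⁻¹ := by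
  have hu := hu_pos hξ
  have hui : 0 < (1 - ξ^2)⁻¹ := inv_pos.2 hu
  have h := Real.log_le_sub_one_of_pos hui
  rw [Real.log_inv] at h
  have h2 : L ξ ≤ (1 - ξ^2)⁻¹ := by simp only [L]; linarith
  refine h2.trans ?_
  have h3 : (0:ℝ) < 1 - ξ := by obtain ⟨_, h1⟩ := hξ; linarith
  apply inv_anti₀ h3
  nlinarith [hξ.1]

lemma g_le {ξ : ℝ} (hξ : ξ ∈ Ioo (0:ℝ) 1) : g ξ ≤ (1 - ξ) ^ (-(1/2) : ℝ) := by
  have h3 : (0:ℝ) < 1 - ξ := by obtain ⟨_, h1⟩ := hξ; linarith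
  have : g ξ ≤ Real.sqrt ((1 - ξ)⁻¹) := Real.sqrt_le_sqrt (hL_le hξ)
  refine this.trans_eq ?_
  rw [Real.sqrt_eq_rpow, ← Real.rpow_neg_one (1 - ξ), ← Real.rpow_mul h3.le]
  norm_num

lemma bound_integrable :
    IntegrableOn (fun ξ : ℝ => (1 - ξ) ^ (-(1/2) : ℝ)) (Ioo 0 1) := by
  have h : IntervalIntegrable (fun x : ℝ => x ^ (-(1/2) : ℝ)) volume 0 1 :=
    intervalIntegral.intervalIntegrable_rpow' (by norm_num)
  have h2 := h.comp_sub_left 1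
  simp only [sub_self, sub_zero] at h2
  exact (intervalIntegrable_iff_integrableOn_Ioo_of_le (by norm_num)).1 h2.symm

lemma meas1 : AEStronglyMeasurable
    (fun ξ : ℝ => ξ ^ 2 / Real.sqrt (-Real.log (1 - ξ ^ 2)))
    (volume.restrict (Ioo (0:ℝ) 1)) := by
  have m : Measurable fun ξ : ℝ => Real.sqrt (-Real.log (1 - ξ ^ 2)) :=
    Real.continuous_sqrt.measurable.comp ((Real.measurable_log.comp (by fun_prop)).neg)
  exact ((measurable_id.pow_const 2).div m).aestronglyMeasurable

lemma meas2 : AEStronglyMeasurable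
    (fun ξ : ℝ => Real.sqrt (-Real.log (1 - ξ ^ 2)))
    (volume.restrict (Ioo (0:ℝ) 1)) :=
  (Real.continuous_sqrt.measurable.comp
    ((Real.measurable_log.comp (by fun_prop)).neg)).aestronglyMeasurable

lemma meas3 : AEStronglyMeasurable
    (fun ξ : ℝ => ξ ^ 2 * Real.sqrt (-Real.log (1 - ξ ^ 2)))
    (volume.restrict (Ioo (0:ℝ) 1)) := by
  have m : Measurable fun ξ : ℝ => Real.sqrt (-Real.log (1 - ξ ^ 2)) :=
    Real.continuous_sqrt.measurable.comp ((Real.measurable_log.comp (by fun_prop)).neg)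
  exact ((measurable_id.pow_const 2).mul m).aestronglyMeasurable

lemma int1 : IntegrableOn
    (fun ξ : ℝ => ξ ^ 2 / Real.sqrt (-Real.log (1 - ξ ^ 2))) (Ioo 0 1) := by
  refine Integrable.mono' (integrable_const 1) meas1 ?_
  filter_upwards [ae_restrict_mem measurableSet_Ioo] with ξ hξ
  obtain ⟨h0, h1⟩ := hξ
  have hg : ξ ≤ g ξ := by
    have := hL_ge ⟨h0, h1⟩
    calc ξ = Real.sqrt (ξ^2) := by rw [Real.sqrt_sq h0.le]
    _ ≤ g ξ := Real.sqrt_le_sqrt this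
  have hgpos : 0 < g ξ := lt_of_lt_of_le h0 hg
  rw [Real.norm_of_nonneg (by positivity)]
  show ξ ^ 2 / g ξ ≤ 1
  rw [div_le_one hgpos]
  calc ξ ^ 2 ≤ ξ := by nlinarith
  _ ≤ g ξ := hg

lemma int2 : IntegrableOn
    (fun ξ : ℝ => Real.sqrt (-Real.log (1 - ξ ^ 2))) (Ioo 0 1) := by
  refine Integrable.mono' bound_integrable meas2 ?_
  filter_upwards [ae_restrict_mem measurableSet_Ioo] with ξ hξ
  rw [Real.norm_of_nonneg (Real.sqrt_nonneg _)]
  exact g_le hξ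

lemma int3 : IntegrableOn
    (fun ξ : ℝ => ξ ^ 2 * Real.sqrt (-Real.log (1 - ξ ^ 2))) (Ioo 0 1) := by
  refine Integrable.mono' bound_integrable meas3 ?_
  filter_upwards [ae_restrict_mem measurableSet_Ioo] with ξ hξ
  obtain ⟨h0, h1⟩ := hξ
  rw [Real.norm_of_nonneg (by positivity)]
  calc ξ ^ 2 * g ξ ≤ 1 * g ξ := by
        apply mul_le_mul_of_nonneg_right (by nlinarith) (Real.sqrt_nonneg _)
  _ = g ξ := one_mul _
  _ ≤ _ := g_le ⟨h0, h1⟩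

lemma hderiv {ξ : ℝ} (hξ : ξ ∈ Ioo (0:ℝ) 1) :
    HasDerivAt F (ξ ^ 2 / g ξ + g ξ - 3 * (ξ ^ 2 * g ξ)) ξ := by
  obtain ⟨h0, h1⟩ := hξ
  have hu := hu_pos ⟨h0, h1⟩
  have hLpos := hL_pos ⟨h0, h1⟩
  have hgpos : 0 < g ξ := Real.sqrt_pos.2 hLpos
  have hpoly : HasDerivAt (fun ξ : ℝ => ξ - ξ ^ 3) (1 - 3 * ξ ^ 2) ξ := by
    have := (hasDerivAt_id' ξ).sub (hasDerivAt_pow 3 ξ)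
    simp at this
    exact this
  have hbase : HasDerivAt (fun ξ : ℝ => 1 - ξ ^ 2) (-(2 * ξ)) ξ := by
    have := (hasDerivAt_pow 2 ξ).const_sub 1
    simpa using this
  have hLd : HasDerivAt L (2 * ξ / (1 - ξ ^ 2)) ξ := by
    have := (hbase.log (ne_of_gt hu)).neg
    refine this.congr_deriv ?_
    ring
  have hgd : HasDerivAt g (2 * ξ / (1 - ξ ^ 2) / (2 * g ξ)) ξ :=
    hLd.sqrt (ne_of_gt hLpos)
  have := hpoly.mul hgd
  refine this.congr_deriv ?_
  have hune : (1 : ℝ) - ξ ^ 2 ≠ 0 := ne_of_gt hu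
  have hgne : g ξ ≠ 0 := ne_of_gt hgpos
  field_simp
  ring

lemma tendsto0 : Filter.Tendsto F (nhdsWithin 0 (Ioi 0)) (nhds 0) := by
  have hc : ContinuousAt F 0 := by
    have hlog : ContinuousAt (fun ξ : ℝ => Real.log (1 - ξ ^ 2)) 0 :=
      ContinuousAt.log (by fun_prop) (by norm_num)
    exact ContinuousAt.mul (by fun_prop) hlog.neg.sqrt
  have h0 : F 0 = 0 := by simp [F, g, L]
  simpa [h0] using (hc.continuousWithinAt (s := Ioi 0)).tendsto

lemma tendsto1 : Filter.Tendsto F (nhdsWithin 1 (Iio 1)) (nhds 0) := by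
  have hmem : Ioo (0:ℝ) 1 ∈ nhdsWithin (1:ℝ) (Iio 1) :=
    Ioo_mem_nhdsLT_of_mem (by constructor <;> norm_num)
  have hub : Filter.Tendsto (fun ξ : ℝ => Real.sqrt (1 - ξ ^ 2))
      (nhdsWithin 1 (Iio 1)) (nhds 0) := by
    have hc : ContinuousAt (fun ξ : ℝ => Real.sqrt (1 - ξ ^ 2)) 1 := by
      apply Real.continuous_sqrt.continuousAt.comp; fun_prop
    have : (fun ξ : ℝ => Real.sqrt (1 - ξ ^ 2)) 1 = 0 := by norm_num
    rw [← this]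
    exact hc.continuousWithinAt.tendsto
  refine tendsto_of_tendsto_of_tendsto_of_le_of_le' tendsto_const_nhds hub ?_ ?_
  · filter_upwards [hmem] with ξ hξ
    obtain ⟨h0, h1⟩ := hξ
    have hgn : 0 ≤ g ξ := Real.sqrt_nonneg _
    have hq : 0 ≤ ξ * (1 - ξ ^ 2) := mul_nonneg h0.le (by nlinarith)
    have hp : 0 ≤ ξ - ξ ^ 3 := by nlinarith
    exact mul_nonneg hp hgn
  · filter_upwards [hmem] with ξ hξ
    obtain ⟨h0, h1⟩ := hξ
    have hu := hu_pos ⟨h0, h1⟩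
    have hb : g ξ ≤ Real.sqrt ((1 - ξ^2)⁻¹) := by
      apply Real.sqrt_le_sqrt
      have hui : 0 < (1 - ξ^2)⁻¹ := inv_pos.2 hu
      have h := Real.log_le_sub_one_of_pos hui
      rw [Real.log_inv] at h
      simp only [L]; linarith
    have hsq : (1 - ξ^2) * Real.sqrt ((1 - ξ^2)⁻¹) = Real.sqrt (1 - ξ^2) := by
      rw [Real.sqrt_inv]
      rw [← Real.sqrt_mul_self hu.le]
      field_simp
      rw [Real.sq_sqrt (Real.sqrt_nonneg _)]
    have hq : 0 ≤ ξ * (1 - ξ ^ 2) := mul_nonneg h0.le (by nlinarith)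
    have hp : 0 ≤ ξ - ξ ^ 3 := by nlinarith
    calc F ξ = (ξ - ξ^3) * g ξ := rfl
    _ ≤ (ξ - ξ^3) * Real.sqrt ((1 - ξ^2)⁻¹) := mul_le_mul_of_nonneg_left hb hp
    _ = ξ * ((1 - ξ^2) * Real.sqrt ((1 - ξ^2)⁻¹)) := by ring
    _ = ξ * Real.sqrt (1 - ξ^2) := by rw [hsq]
    _ ≤ 1 * Real.sqrt (1 - ξ^2) :=
        mul_le_mul_of_nonneg_right h1.le (Real.sqrt_nonneg _)
    _ = Real.sqrt (1 - ξ^2) := one_mul _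

end PohozaevAux

open PohozaevAux

/-- the Pohozaev-type identity
∫_0^1 [ξ²/√(−log(1 − ξ²)) + √(−log(1 − ξ²))] dξ
  = 3·∫_0^1 ξ²·√(−log(1 − ξ²)) dξ, all three integrals being finite. -/
theorem pohozaev_identity_cusped :
    IntegrableOn (fun ξ : ℝ => ξ ^ 2 / Real.sqrt (-Real.log (1 - ξ ^ 2))) (Ioo 0 1) ∧
    IntegrableOn (fun ξ : ℝ => Real.sqrt (-Real.log (1 - ξ ^ 2))) (Ioo 0 1) ∧
    IntegrableOn (fun ξ : ℝ => ξ ^ 2 * Real.sqrt (-Real.log (1 - ξ ^ 2))) (Ioo 0 1) ∧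
    (∫ ξ in (0 : ℝ)..1,
        (ξ ^ 2 / Real.sqrt (-Real.log (1 - ξ ^ 2)) + Real.sqrt (-Real.log (1 - ξ ^ 2)))) =
      3 * ∫ ξ in (0 : ℝ)..1, ξ ^ 2 * Real.sqrt (-Real.log (1 - ξ ^ 2)) := by
  have h1 := int1
  have h2 := int2
  have h3 := int3
  refine ⟨h1, h2, h3, ?_⟩
  have i1 : IntervalIntegrable
      (fun ξ : ℝ => ξ ^ 2 / Real.sqrt (-Real.log (1 - ξ ^ 2))) volume 0 1 :=
    (intervalIntegrable_iff_integrableOn_Ioo_of_le (by norm_num)).2 h1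
  have i2 : IntervalIntegrable
      (fun ξ : ℝ => Real.sqrt (-Real.log (1 - ξ ^ 2))) volume 0 1 :=
    (intervalIntegrable_iff_integrableOn_Ioo_of_le (by norm_num)).2 h2
  have i3 : IntervalIntegrable
      (fun ξ : ℝ => ξ ^ 2 * Real.sqrt (-Real.log (1 - ξ ^ 2))) volume 0 1 :=
    (intervalIntegrable_iff_integrableOn_Ioo_of_le (by norm_num)).2 h3
  have hint : IntervalIntegrable
      (fun ξ : ℝ => ξ ^ 2 / g ξ + g ξ - 3 * (ξ ^ 2 * g ξ)) volume 0 1 := by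
    have := (i1.add i2).sub (i3.const_mul 3)
    exact this
  have key : (∫ ξ in (0:ℝ)..1, (ξ ^ 2 / g ξ + g ξ - 3 * (ξ ^ 2 * g ξ))) = 0 := by
    have := intervalIntegral.integral_eq_sub_of_hasDerivAt_of_tendsto
      (f := F) (f' := fun ξ => ξ ^ 2 / g ξ + g ξ - 3 * (ξ ^ 2 * g ξ))
      (by norm_num : (0:ℝ) < 1) (fun x hx => hderiv hx) hint tendsto0 tendsto1
    simpa using this
  have hsplit : (∫ ξ in (0:ℝ)..1, (ξ ^ 2 / g ξ + g ξ - 3 * (ξ ^ 2 * g ξ)))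
      = (∫ ξ in (0:ℝ)..1, (ξ ^ 2 / g ξ + g ξ))
        - ∫ ξ in (0:ℝ)..1, 3 * (ξ ^ 2 * g ξ) := by
    exact intervalIntegral.integral_sub (i1.add i2) (i3.const_mul 3)
  have hmul : (∫ ξ in (0:ℝ)..1, 3 * (ξ ^ 2 * g ξ))
      = 3 * ∫ ξ in (0:ℝ)..1, ξ ^ 2 * g ξ :=
    intervalIntegral.integral_const_mul 3 _
  rw [hsplit, hmul] at key
  have : (∫ ξ in (0:ℝ)..1, (ξ ^ 2 / g ξ + g ξ))
      = (∫ ξ in (0:ℝ)..1,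
        (ξ ^ 2 / Real.sqrt (-Real.log (1 - ξ ^ 2)) + Real.sqrt (-Real.log (1 - ξ ^ 2)))) := rfl
  have h4 : (∫ ξ in (0:ℝ)..1, ξ ^ 2 * g ξ)
      = ∫ ξ in (0:ℝ)..1, ξ ^ 2 * Real.sqrt (-Real.log (1 - ξ ^ 2)) := rfl
  linarith [key]
end

section
/- Fix C ∈ ℝ and let u : ℝ → ℝ be the solitary wave u_C: a continuous even function with u(0) = √(1+e^{2C}), u(±ℓ_C) = 1 where ℓ_C = ∫_1^{√(1+e^{2C})} dξ/√(2C − log(ξ² − 1)), with 1 < u(x) ≤ √(1+e^{2C}) for |x| < ℓ_C, 0 < u(x) < 1 for |x| > ℓ_C, u(x) → 0 as |x| → ∞, twice continuously differentiable on ℝ \ {−ℓ_C, ℓ_C}, satisfying (1 − u²)u'' = u off the singular points, u'(x)² = 2C − log(u(x)² − 1) for 0 < |x| < ℓ_C, and u'(x)² = −log(1 − u(x)²) for |x| > ℓ_C. Then ∫_ℝ u'(x)² dx = 2∫_0^1 √(−log(1 − ξ²)) dξ + 2∫_1^{√(1+e^{2C})} √(2C − log(ξ² − 1)) dξ. In particular,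 ∫_ℝ u'(x)² dx ≥ 2∫_0^1 √(−log(1 − ξ²)) dξ, which equals the energy ∫_ℝ (u_cusp')² dx of the cusped soliton; hence the cusped soliton is the lowest energy state in the family. -/
open MeasureTheory Filter Set Topology

namespace EnergyAux

/-- sqrt subadditivity -/
lemma sqrt_add_le (a b : ℝ) (ha : 0 ≤ a) (hb : 0 ≤ b) :
    Real.sqrt (a + b) ≤ Real.sqrt a + Real.sqrt b := by
  have h1 := Real.sq_sqrt ha
  have h2 := Real.sq_sqrt hb
  have h3 := Real.sqrt_nonneg a
  have h4 := Real.sqrt_nonneg b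
  have : a + b ≤ (Real.sqrt a + Real.sqrt b) ^ 2 := by nlinarith
  calc Real.sqrt (a + b) ≤ Real.sqrt ((Real.sqrt a + Real.sqrt b) ^ 2) :=
        Real.sqrt_le_sqrt this
    _ = Real.sqrt a + Real.sqrt b := Real.sqrt_sq (by linarith)

lemma rpow_half (t : ℝ) (ht : 0 < t) :
    t ^ (-(1/2) : ℝ) = Real.sqrt t⁻¹ := by
  rw [Real.rpow_neg ht.le, ← Real.sqrt_eq_rpow, Real.sqrt_inv]

/-- the outer profile integrand -/
noncomputable def gO (ξ : ℝ) : ℝ := Real.sqrt (-Real.log (1 - ξ ^ 2))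

lemma gO_nonneg (ξ : ℝ) : 0 ≤ gO ξ := Real.sqrt_nonneg _

lemma gO_contAt {ξ : ℝ} (h : 1 - ξ ^ 2 ≠ 0) : ContinuousAt gO ξ := by
  unfold gO
  have hc : ContinuousAt (fun ξ : ℝ => 1 - ξ ^ 2) ξ := by fun_prop
  exact ((hc.log h).neg).sqrt

lemma gO_meas : Measurable gO := by
  unfold gO
  exact Real.continuous_sqrt.measurable.comp
    ((Real.measurable_log.comp (by fun_prop)).neg)

lemma gO_int : IntegrableOn gO (Icc (0:ℝ) 1) := by
  have h1 : IntervalIntegrable (fun x : ℝ => x ^ (-(1/2) : ℝ)) volume 0 1 :=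
    intervalIntegral.intervalIntegrable_rpow' (by norm_num)
  have h2 := (h1.comp_sub_left 1).symm
  have h3 : IntervalIntegrable (fun x : ℝ => (1 - x) ^ (-(1/2) : ℝ)) volume 0 1 := by
    simpa using h2
  rw [intervalIntegrable_iff_integrableOn_Icc_of_le (by norm_num)] at h3
  refine Integrable.mono' h3 gO_meas.aestronglyMeasurable ?_
  refine (ae_restrict_iff' measurableSet_Icc).2 (ae_of_all _ fun x hx => ?_)
  obtain ⟨hx0, hx1⟩ := hx
  rw [Real.norm_of_nonneg (gO_nonneg x)]
  rcases eq_or_lt_of_le hx1 with h | h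
  · subst h
    simp [gO, Real.log_zero]
  · have hpos : 0 < 1 - x := by linarith
    have hle : 1 - x ≤ 1 - x ^ 2 := by nlinarith
    have l1 : -Real.log (1 - x ^ 2) ≤ -Real.log (1 - x) := by
      have := Real.log_le_log hpos hle
      linarith
    have l2 : -Real.log (1 - x) ≤ (1 - x)⁻¹ := by
      have h5 := Real.log_le_sub_one_of_pos (inv_pos.2 hpos)
      rw [Real.log_inv] at h5
      have : 0 < (1 - x)⁻¹ := inv_pos.2 hpos
      linarith
    rw [rpow_half _ hpos]
    exact Real.sqrt_le_sqrt (le_trans l1 l2)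


/-- the inner profile integrand -/
noncomputable def gI (c ξ : ℝ) : ℝ := Real.sqrt (c - Real.log (ξ ^ 2 - 1))

lemma gI_nonneg (c ξ : ℝ) : 0 ≤ gI c ξ := Real.sqrt_nonneg _

lemma gI_contAt {c ξ : ℝ} (h : ξ ^ 2 - 1 ≠ 0) : ContinuousAt (gI c) ξ := by
  unfold gI
  have hc : ContinuousAt (fun ξ : ℝ => ξ ^ 2 - 1) ξ := by fun_prop
  exact ((continuousAt_const.sub (hc.log h))).sqrt

lemma gI_meas (c : ℝ) : Measurable (gI c) := by
  unfold gI
  exact Real.continuous_sqrt.measurable.comp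
    ((measurable_const.sub (Real.measurable_log.comp (by fun_prop))))

lemma sqrt_add_le' (a b : ℝ) (ha : 0 ≤ a) (hb : 0 ≤ b) :
    Real.sqrt (a + b) ≤ Real.sqrt a + Real.sqrt b := by
  have h1 := Real.sq_sqrt ha
  have h2 := Real.sq_sqrt hb
  have h3 := Real.sqrt_nonneg a
  have h4 := Real.sqrt_nonneg b
  have h : a + b ≤ (Real.sqrt a + Real.sqrt b) ^ 2 := by nlinarith
  calc Real.sqrt (a + b) ≤ Real.sqrt ((Real.sqrt a + Real.sqrt b) ^ 2) :=
        Real.sqrt_le_sqrt h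
    _ = Real.sqrt a + Real.sqrt b := Real.sqrt_sq (by linarith)

lemma rpow_half' (t : ℝ) (ht : 0 < t) :
    t ^ (-(1/2) : ℝ) = Real.sqrt t⁻¹ := by
  rw [Real.rpow_neg ht.le, ← Real.sqrt_eq_rpow, Real.sqrt_inv]

lemma gI_int (c M : ℝ) (hM : 1 ≤ M) : IntegrableOn (gI c) (Icc 1 M) := by
  have h1 : IntervalIntegrable (fun x : ℝ => x ^ (-(1/2) : ℝ)) volume 0 (M - 1) :=
    intervalIntegral.intervalIntegrable_rpow' (by norm_num)
  have h2 : IntervalIntegrable (fun x : ℝ => (x - 1) ^ (-(1/2) : ℝ)) volume 1 M := by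
    have := h1.comp_sub_right 1
    simpa using this
  rw [intervalIntegrable_iff_integrableOn_Icc_of_le hM] at h2
  have hb : IntegrableOn (fun ξ : ℝ => Real.sqrt |c| + (ξ - 1) ^ (-(1/2) : ℝ)) (Icc 1 M) :=
    (integrableOn_const measure_Icc_lt_top.ne).add h2
  refine Integrable.mono' hb (gI_meas c).aestronglyMeasurable ?_
  refine (ae_restrict_iff' measurableSet_Icc).2 (ae_of_all _ fun x hx => ?_)
  obtain ⟨hx1, hxM⟩ := hx
  rw [Real.norm_of_nonneg (gI_nonneg c x)]
  rcases eq_or_lt_of_le hx1 with h | h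
  · subst h
    have : gI c 1 = Real.sqrt c := by simp [gI, Real.log_zero]
    rw [this]
    have h0 : ((1:ℝ) - 1) ^ (-(1/2) : ℝ) = 0 := by
      rw [sub_self, Real.zero_rpow (by norm_num)]
    rw [h0, add_zero]
    exact Real.sqrt_le_sqrt (le_abs_self c)
  · have hpos : 0 < x - 1 := by linarith
    have hle : x - 1 ≤ x ^ 2 - 1 := by nlinarith
    have l1 : c - Real.log (x ^ 2 - 1) ≤ c - Real.log (x - 1) := by
      have := Real.log_le_log hpos hle
      linarith
    have l2 : -Real.log (x - 1) ≤ (x - 1)⁻¹ := by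
      have h5 := Real.log_le_sub_one_of_pos (inv_pos.2 hpos)
      rw [Real.log_inv] at h5
      have : 0 < (x - 1)⁻¹ := inv_pos.2 hpos
      linarith
    have l3 : c - Real.log (x ^ 2 - 1) ≤ |c| + (x - 1)⁻¹ := by
      have := le_abs_self c
      linarith
    calc gI c x ≤ Real.sqrt (|c| + (x - 1)⁻¹) := Real.sqrt_le_sqrt l3
      _ ≤ Real.sqrt |c| + Real.sqrt (x - 1)⁻¹ :=
          sqrt_add_le' _ _ (abs_nonneg c) (by positivity)
      _ = Real.sqrt |c| + (x - 1) ^ (-(1/2) : ℝ) := by rw [rpow_half' _ hpos]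



lemma outer (v : ℝ → ℝ) (a : ℝ) (hv : Continuous v) (hva : v a = 1)
    (hd : ∀ x ∈ Ioi a, DifferentiableAt ℝ v x)
    (hneg : ∀ x ∈ Ioi a, deriv v x < 0)
    (hr : ∀ x ∈ Ioi a, 0 < v x ∧ v x < 1)
    (hinv : ∀ x ∈ Ioi a, (deriv v x) ^ 2 = -Real.log (1 - v x ^ 2))
    (hdec : Tendsto v atTop (𝓝 0)) :
    IntegrableOn (fun x => (deriv v x) ^ 2) (Ioi a) ∧
      ∫ x in Ioi a, (deriv v x) ^ 2 = ∫ ξ in (0:ℝ)..1, gO ξ := by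
  set f : ℝ → ℝ := fun x => (deriv v x) ^ 2 with hfdef
  set G : ℝ → ℝ := fun t => ∫ ξ in (0:ℝ)..t, gO ξ with hGdef
  have hG0 : G 0 = 0 := intervalIntegral.integral_same
  have hvmem : ∀ x ∈ Ioi a, v x ∈ Icc (0:ℝ) 1 :=
    fun x hx => ⟨(hr x hx).1.le, (hr x hx).2.le⟩
  have hGc : ContinuousOn G (Icc 0 1) := by
    have h := intervalIntegral.continuousOn_primitive_interval
      (a := (0:ℝ)) (b := (1:ℝ)) (μ := volume) (f := gO)
      (by rw [uIcc_of_le (by norm_num : (0:ℝ) ≤ 1)]; exact gO_int)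
    rwa [uIcc_of_le (by norm_num : (0:ℝ) ≤ 1)] at h
  have hGd : ∀ t ∈ Ioo (-1:ℝ) 1, HasDerivAt G (gO t) t := by
    intro t ht
    have hne : ∀ s ∈ uIcc (0:ℝ) t, 1 - s ^ 2 ≠ 0 := by
      intro s hs
      have h1 : -1 < s ∧ s < 1 := by
        rcases le_total 0 t with h | h
        · rw [uIcc_of_le h] at hs
          exact ⟨by nlinarith [hs.1, hs.2, ht.1, ht.2], by nlinarith [hs.1, hs.2, ht.1, ht.2]⟩
        · rw [uIcc_of_ge h] at hs
          exact ⟨by nlinarith [hs.1, hs.2, ht.1, ht.2], by nlinarith [hs.1, hs.2, ht.1, ht.2]⟩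
      nlinarith [h1.1, h1.2]
    have hint : IntervalIntegrable gO volume 0 t :=
      ContinuousOn.intervalIntegrable (fun s hs => (gO_contAt (hne s hs)).continuousWithinAt)
    exact intervalIntegral.integral_hasDerivAt_right hint
      ⟨univ, univ_mem, gO_meas.aestronglyMeasurable.restrict⟩
      (gO_contAt (by nlinarith [ht.1, ht.2]))
  have hH : ∀ x ∈ Ioi a, HasDerivAt (fun y => G (v y)) (-(f x)) x := by
    intro x hx
    obtain ⟨h0, h1⟩ := hr x hx
    have hvd : HasDerivAt v (deriv v x) x := (hd x hx).hasDerivAt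
    have hcomp := (hGd (v x) ⟨by linarith, h1⟩).comp x hvd
    have hgv : gO (v x) = -(deriv v x) := by
      have h2 : gO (v x) = Real.sqrt ((deriv v x) ^ 2) := by rw [gO, hinv x hx]
      rw [h2, Real.sqrt_sq_eq_abs, abs_of_neg (hneg x hx)]
    rw [hgv] at hcomp
    refine hcomp.congr_deriv ?_
    simp only [hfdef]; ring
  have hfc : ContinuousOn f (Ioi a) := by
    have hcg : ContinuousOn (fun x => -Real.log (1 - v x ^ 2)) (Ioi a) := by
      intro x hx
      obtain ⟨h0, h1⟩ := hr x hx
      have hc : ContinuousAt (fun x : ℝ => 1 - v x ^ 2) x := by fun_prop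
      exact ((hc.log (by nlinarith)).neg).continuousWithinAt
    exact ContinuousOn.congr hcg (fun x hx => hinv x hx)
  have key : ∀ s ∈ Ioi a, ∀ b, s ≤ b → ∫ x in s..b, f x = G (v s) - G (v b) := by
    intro s hs b hb
    have h1 : ∀ x ∈ uIcc s b, HasDerivAt (fun y => -(G (v y))) (f x) x := by
      intro x hx
      rw [uIcc_of_le hb] at hx
      have hx' : x ∈ Ioi a := lt_of_lt_of_le hs hx.1
      have := (hH x hx').neg; rw [neg_neg] at this; exact this
    have h2 : IntervalIntegrable f volume s b := by
      apply ContinuousOn.intervalIntegrable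
      apply hfc.mono
      rw [uIcc_of_le hb]
      exact fun x hx => lt_of_lt_of_le hs hx.1
    have h3 := intervalIntegral.integral_eq_sub_of_hasDerivAt h1 h2
    rw [h3]; ring
  have hnorm : ∀ s b : ℝ, (∫ x in s..b, ‖f x‖) = ∫ x in s..b, f x :=
    fun s b => intervalIntegral.integral_congr fun x _ => Real.norm_of_nonneg (sq_nonneg _)
  have hGv_top : Tendsto (fun b => G (v b)) atTop (𝓝 0) := by
    have hc : ContinuousAt G 0 := (hGd 0 (by norm_num)).continuousAt
    have h4 := hc.tendsto.comp hdec
    rwa [hG0] at h4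
  have hstep : ∀ s ∈ Ioi a, IntegrableOn f (Ioi s) ∧ ∫ x in Ioi s, f x = G (v s) := by
    intro s hs
    have hbseq : Tendsto (fun n : ℕ => s + (n:ℝ)) atTop atTop :=
      tendsto_atTop_add_const_left _ _ tendsto_natCast_atTop_atTop
    have hfi : ∀ n : ℕ, IntegrableOn f (Ioc s (s + (n:ℝ))) := by
      intro n
      refine ((hfc.mono ?_).integrableOn_Icc).mono_set Ioc_subset_Icc_self
      exact fun x hx => lt_of_lt_of_le hs hx.1
    have hvals : ∀ n : ℕ, (∫ x in s..(s + (n:ℝ)), f x) = G (v s) - G (v (s + (n:ℝ))) :=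
      fun n => key s hs _ (le_add_of_nonneg_right (Nat.cast_nonneg n))
    have htend0 : Tendsto (fun n : ℕ => G (v s) - G (v (s + (n:ℝ)))) atTop (𝓝 (G (v s))) := by
      have h11 : Tendsto (fun n : ℕ => G (v (s + (n:ℝ)))) atTop (𝓝 0) := hGv_top.comp hbseq
      simpa using Tendsto.sub
        (tendsto_const_nhds : Tendsto (fun _ : ℕ => G (v s)) atTop (𝓝 (G (v s)))) h11
    have htend : Tendsto (fun n : ℕ => ∫ x in s..(s + (n:ℝ)), ‖f x‖) atTop (𝓝 (G (v s))) := by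
      refine htend0.congr fun n => ?_
      rw [← hvals n, hnorm]
    have hint : IntegrableOn f (Ioi s) :=
      integrableOn_Ioi_of_intervalIntegral_norm_tendsto (G (v s)) s hfi hbseq htend
    refine ⟨hint, ?_⟩
    have h5 := intervalIntegral_tendsto_integral_Ioi s hint hbseq
    have h6 : Tendsto (fun n : ℕ => ∫ x in s..(s + (n:ℝ)), f x) atTop (𝓝 (G (v s))) :=
      htend0.congr fun n => (hvals n).symm
    exact tendsto_nhds_unique h5 h6
  -- G is between 0 and G 1 on [0,1]
  have hii : ∀ p q : ℝ, p ∈ Icc (0:ℝ) 1 → q ∈ Icc (0:ℝ) 1 → IntervalIntegrable gO volume p q := by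
    intro p q hp hq
    rw [intervalIntegrable_iff]
    exact gO_int.mono_set (uIoc_subset_uIcc.trans (uIcc_subset_Icc hp hq))
  have hGbound : ∀ t ∈ Icc (0:ℝ) 1, 0 ≤ G t ∧ G t ≤ G 1 := by
    intro t ht
    constructor
    · exact intervalIntegral.integral_nonneg ht.1 (fun x _ => gO_nonneg x)
    · have hadd := intervalIntegral.integral_add_adjacent_intervals
        (hii 0 t (by norm_num) ht) (hii t 1 ht (by norm_num))
      have h7 : 0 ≤ ∫ ξ in t..(1:ℝ), gO ξ :=
        intervalIntegral.integral_nonneg ht.2 (fun x _ => gO_nonneg x)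
      simp only [hGdef]
      linarith [hadd, h7]
  -- integrability near a
  set aseq : ℕ → ℝ := fun n => a + 1 / (n + 1) with haseq
  have haseq_mem : ∀ n : ℕ, aseq n ∈ Ioi a := by
    intro n
    have : (0:ℝ) < 1 / (n + 1) := by positivity
    simpa [haseq] using this
  have ha_tend : Tendsto aseq atTop (𝓝 a) := by
    have h8 : Tendsto (fun n : ℕ => 1 / ((n:ℝ) + 1)) atTop (𝓝 0) :=
      tendsto_one_div_add_atTop_nhds_zero_nat
    have h9 := Tendsto.add
      (tendsto_const_nhds : Tendsto (fun _ : ℕ => a) atTop (𝓝 a)) h8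
    simpa [haseq] using h9
  have hIoc : IntegrableOn f (Ioc a (a + 1)) := by
    have hfi2 : ∀ n : ℕ, IntegrableOn f (Ioc (aseq n) (a + 1)) := by
      intro n
      refine ((hfc.mono ?_).integrableOn_Icc).mono_set Ioc_subset_Icc_self
      exact fun x hx => lt_of_lt_of_le (haseq_mem n) hx.1
    refine integrableOn_Ioc_of_intervalIntegral_norm_bounded_left
      (I := G 1) hfi2 ha_tend (Eventually.of_forall fun n => ?_)
    have hle : aseq n ≤ a + 1 := by
      have h9 : (1:ℝ) / (n + 1) ≤ 1 := by
        rw [div_le_one (by positivity)]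
        simp
      simp only [haseq]
      linarith
    have h10 : (∫ x in Ioc (aseq n) (a+1), ‖f x‖) = ∫ x in (aseq n)..(a+1), ‖f x‖ :=
      (intervalIntegral.integral_of_le hle).symm
    rw [h10, hnorm, key (aseq n) (haseq_mem n) _ hle]
    have hb1 := hGbound (v (aseq n)) (hvmem _ (haseq_mem n))
    have hb2 := hGbound (v (a+1)) (hvmem _ (mem_Ioi.2 (lt_add_one a)))
    linarith [hb1.2, hb2.1]
  have hIoi : IntegrableOn f (Ioi a) := by
    rw [← Ioc_union_Ioi_eq_Ioi (le_add_of_nonneg_right (zero_le_one))]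
    exact hIoc.union (hstep (a + 1) (mem_Ioi.2 (lt_add_one a))).1
  refine ⟨hIoi, ?_⟩
  have hsm : ∀ n : ℕ, MeasurableSet (Ioi (aseq n)) := fun n => measurableSet_Ioi
  have hmono : Monotone (fun n : ℕ => Ioi (aseq n)) := by
    intro n m hnm
    apply Ioi_subset_Ioi
    have h12 : (1:ℝ) / (m + 1) ≤ 1 / (n + 1) := by
      apply one_div_le_one_div_of_le (by positivity)
      have : (n:ℝ) ≤ (m:ℝ) := by exact_mod_cast hnm
      linarith
    simp only [haseq]
    linarith
  have hun : (⋃ n : ℕ, Ioi (aseq n)) = Ioi a := by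
    ext x
    simp only [mem_iUnion, mem_Ioi]
    constructor
    · rintro ⟨n, hn⟩
      have := haseq_mem n
      rw [mem_Ioi] at this
      linarith
    · intro hx
      obtain ⟨n, hn⟩ := exists_nat_one_div_lt (sub_pos.2 hx)
      exact ⟨n, by simp only [haseq]; linarith⟩
  have ht1 : Tendsto (fun n : ℕ => ∫ x in Ioi (aseq n), f x) atTop
      (𝓝 (∫ x in Ioi a, f x)) := by
    have h13 := tendsto_setIntegral_of_monotone hsm hmono (by rw [hun]; exact hIoi)
    rwa [hun] at h13
  have ht2 : Tendsto (fun n : ℕ => ∫ x in Ioi (aseq n), f x) atTop (𝓝 (G 1)) := by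
    have hv1 : Tendsto (fun n : ℕ => v (aseq n)) atTop (𝓝 1) := by
      have h14 := (hv.continuousAt (x := a)).tendsto.comp ha_tend
      rwa [hva] at h14
    have hG1 : Tendsto (fun n : ℕ => G (v (aseq n))) atTop (𝓝 (G 1)) := by
      have hcw : ContinuousWithinAt G (Icc 0 1) 1 := hGc 1 (by norm_num)
      apply hcw.tendsto.comp
      rw [tendsto_nhdsWithin_iff]
      exact ⟨hv1, Eventually.of_forall fun n => hvmem _ (haseq_mem n)⟩
    refine hG1.congr fun n => ?_
    exact ((hstep (aseq n) (haseq_mem n)).2).symm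
  exact tendsto_nhds_unique ht1 ht2

lemma inner (v : ℝ → ℝ) (b M c : ℝ) (hb : 0 < b) (hM : 1 < M)
    (hv : Continuous v) (hv0 : v 0 = M) (hvb : v b = 1)
    (hexp : Real.exp c = M ^ 2 - 1)
    (hd : ∀ x ∈ Ico 0 b, DifferentiableAt ℝ v x)
    (hd0 : deriv v 0 = 0)
    (hneg : ∀ x ∈ Ioo 0 b, deriv v x < 0)
    (hr : ∀ x ∈ Ioo 0 b, 1 < v x ∧ v x ≤ M)
    (hinv : ∀ x ∈ Ioo 0 b, (deriv v x) ^ 2 = c - Real.log (v x ^ 2 - 1))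
    (hfc : ContinuousOn (fun x => (deriv v x) ^ 2) (Ico 0 b)) :
    IntegrableOn (fun x => (deriv v x) ^ 2) (Ioc 0 b) ∧
      ∫ x in Ioc 0 b, (deriv v x) ^ 2 = ∫ ξ in (1:ℝ)..M, gI c ξ := by
  set f : ℝ → ℝ := fun x => (deriv v x) ^ 2 with hfdef
  set G : ℝ → ℝ := fun t => ∫ ξ in t..M, gI c ξ with hGdef
  have hGM : G M = 0 := intervalIntegral.integral_same
  have hgIM : gI c M = 0 := by
    unfold gI
    rw [← hexp, Real.log_exp, sub_self, Real.sqrt_zero]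
  have hGd : ∀ t ∈ Ioi (1:ℝ), HasDerivAt G (-(gI c t)) t := by
    intro t ht
    rw [mem_Ioi] at ht
    have hsub : uIcc t M ⊆ Ioi 1 := by
      rw [uIcc_eq_union]
      rintro s (hs | hs)
      · exact mem_Ioi.2 (lt_of_lt_of_le ht hs.1)
      · exact mem_Ioi.2 (lt_of_lt_of_le hM hs.1)
    have hne : ∀ s ∈ uIcc t M, s ^ 2 - 1 ≠ 0 := by
      intro s hs
      have := mem_Ioi.1 (hsub hs)
      nlinarith
    have hint : IntervalIntegrable (gI c) volume t M :=
      ContinuousOn.intervalIntegrable (fun s hs => (gI_contAt (hne s hs)).continuousWithinAt)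
    exact intervalIntegral.integral_hasDerivAt_left hint
      ⟨univ, univ_mem, (gI_meas c).aestronglyMeasurable.restrict⟩
      (gI_contAt (by nlinarith))
  have hH : ∀ x ∈ Ico 0 b, HasDerivAt (fun y => G (v y)) (f x) x := by
    intro x hx
    have hvd : HasDerivAt v (deriv v x) x := (hd x hx).hasDerivAt
    rcases eq_or_lt_of_le hx.1 with h0 | h0
    · subst h0
      have hcomp := (hGd (v 0) (by rw [hv0]; exact mem_Ioi.2 hM)).comp 0 hvd
      refine hcomp.congr_deriv ?_
      rw [hd0, hv0, hgIM]
      simp [hfdef, hd0]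
    · have hx' : x ∈ Ioo 0 b := ⟨h0, hx.2⟩
      obtain ⟨h1, h2⟩ := hr x hx'
      have hcomp := (hGd (v x) (mem_Ioi.2 h1)).comp x hvd
      have hgv : gI c (v x) = -(deriv v x) := by
        have h3 : gI c (v x) = Real.sqrt ((deriv v x) ^ 2) := by rw [gI, hinv x hx']
        rw [h3, Real.sqrt_sq_eq_abs, abs_of_neg (hneg x hx')]
      rw [hgv] at hcomp
      refine hcomp.congr_deriv ?_
      simp only [hfdef]
      ring
  have key : ∀ t ∈ Ico 0 b, ∫ x in (0:ℝ)..t, f x = G (v t) := by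
    intro t ht
    have h1 : ∀ x ∈ uIcc 0 t, HasDerivAt (fun y => G (v y)) (f x) x := by
      intro x hx
      rw [uIcc_of_le ht.1] at hx
      exact hH x ⟨hx.1, lt_of_le_of_lt hx.2 ht.2⟩
    have h2 : IntervalIntegrable f volume 0 t := by
      apply ContinuousOn.intervalIntegrable
      apply hfc.mono
      rw [uIcc_of_le ht.1]
      exact fun x hx => ⟨hx.1, lt_of_le_of_lt hx.2 ht.2⟩
    have h3 := intervalIntegral.integral_eq_sub_of_hasDerivAt h1 h2
    rw [h3, hv0, hGM, sub_zero]
  have hii : ∀ p q : ℝ, p ∈ Icc (1:ℝ) M → q ∈ Icc (1:ℝ) M →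
      IntervalIntegrable (gI c) volume p q := by
    intro p q hp hq
    rw [intervalIntegrable_iff]
    exact (gI_int c M hM.le).mono_set (uIoc_subset_uIcc.trans (uIcc_subset_Icc hp hq))
  have hGbound : ∀ t ∈ Icc (1:ℝ) M, 0 ≤ G t ∧ G t ≤ G 1 := by
    intro t ht
    constructor
    · exact intervalIntegral.integral_nonneg ht.2 (fun x _ => gI_nonneg c x)
    · have hadd := intervalIntegral.integral_add_adjacent_intervals
        (hii 1 t ⟨le_refl 1, hM.le⟩ ht) (hii t M ht ⟨hM.le, le_refl M⟩)
      have h7 : 0 ≤ ∫ ξ in (1:ℝ)..t, gI c ξ :=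
        intervalIntegral.integral_nonneg ht.1 (fun x _ => gI_nonneg c x)
      simp only [hGdef]
      linarith [hadd, h7]
  have hnorm : ∀ s t : ℝ, (∫ x in s..t, ‖f x‖) = ∫ x in s..t, f x :=
    fun s t => intervalIntegral.integral_congr fun x _ => Real.norm_of_nonneg (sq_nonneg _)
  set tseq : ℕ → ℝ := fun n => b - b / (n + 2) with htseq
  have htseq_mem : ∀ n : ℕ, tseq n ∈ Ioo 0 b := by
    intro n
    constructor
    · have h1 : b / ((n:ℝ) + 2) ≤ b / 2 := by
        apply div_le_div_of_nonneg_left hb.le (by norm_num)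
        have : (0:ℝ) ≤ (n:ℝ) := Nat.cast_nonneg n
        linarith
      simp only [htseq]
      linarith
    · have h1 : 0 < b / ((n:ℝ) + 2) := by positivity
      simp only [htseq]
      linarith
  have htseq_tend : Tendsto tseq atTop (𝓝 b) := by
    have h1 : Tendsto (fun n : ℕ => b / ((n:ℝ) + 2)) atTop (𝓝 0) := by
      apply Tendsto.div_atTop (tendsto_const_nhds : Tendsto (fun _ : ℕ => b) atTop (𝓝 b))
      exact tendsto_atTop_add_const_right _ _ tendsto_natCast_atTop_atTop
    have h2 := Tendsto.sub
      (tendsto_const_nhds : Tendsto (fun _ : ℕ => b) atTop (𝓝 b)) h1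
    simpa [htseq] using h2
  have hvmem : ∀ x ∈ Ioo 0 b, v x ∈ Icc (1:ℝ) M :=
    fun x hx => ⟨(hr x hx).1.le, (hr x hx).2⟩
  have hfi : ∀ n : ℕ, IntegrableOn f (Ioc 0 (tseq n)) := by
    intro n
    refine ((hfc.mono ?_).integrableOn_Icc).mono_set Ioc_subset_Icc_self
    exact fun x hx => ⟨hx.1, lt_of_le_of_lt hx.2 (htseq_mem n).2⟩
  have hvals : ∀ n : ℕ, (∫ x in Ioc 0 (tseq n), f x) = G (v (tseq n)) := by
    intro n
    rw [← intervalIntegral.integral_of_le (htseq_mem n).1.le]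
    exact key (tseq n) ⟨(htseq_mem n).1.le, (htseq_mem n).2⟩
  have hIoc : IntegrableOn f (Ioc 0 b) := by
    refine integrableOn_Ioc_of_intervalIntegral_norm_bounded_right
      (I := G 1) hfi htseq_tend (Eventually.of_forall fun n => ?_)
    have h1 : (∫ x in Ioc 0 (tseq n), ‖f x‖) = ∫ x in Ioc 0 (tseq n), f x := by
      rw [← intervalIntegral.integral_of_le (htseq_mem n).1.le, hnorm,
        intervalIntegral.integral_of_le (htseq_mem n).1.le]
    rw [h1, hvals n]
    exact (hGbound _ (hvmem _ (htseq_mem n))).2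
  refine ⟨hIoc, ?_⟩
  have hsm : ∀ n : ℕ, MeasurableSet (Ioc (0:ℝ) (tseq n)) := fun n => measurableSet_Ioc
  have hmono : Monotone (fun n : ℕ => Ioc (0:ℝ) (tseq n)) := by
    intro n m hnm
    apply Ioc_subset_Ioc_right
    have h1 : b / ((m:ℝ) + 2) ≤ b / ((n:ℝ) + 2) := by
      apply div_le_div_of_nonneg_left hb.le (by positivity)
      have : (n:ℝ) ≤ (m:ℝ) := by exact_mod_cast hnm
      linarith
    simp only [htseq]
    linarith
  have hun : (⋃ n : ℕ, Ioc (0:ℝ) (tseq n)) = Ioo 0 b := by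
    ext x
    simp only [mem_iUnion, mem_Ioc, mem_Ioo]
    constructor
    · rintro ⟨n, hn1, hn2⟩
      exact ⟨hn1, lt_of_le_of_lt hn2 (htseq_mem n).2⟩
    · rintro ⟨hx1, hx2⟩
      have hbx : 0 < b - x := by linarith
      have hpos : 0 < (b - x) / b := div_pos hbx hb
      obtain ⟨n, hn⟩ := exists_nat_one_div_lt hpos
      refine ⟨n, hx1, ?_⟩
      have h2 : b / ((n:ℝ) + 1) < b - x := by
        have h3 := mul_lt_mul_of_pos_left hn hb
        rw [mul_div_cancel₀ _ (ne_of_gt hb)] at h3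
        calc b / ((n:ℝ) + 1) = b * (1 / ((n:ℝ) + 1)) := by ring
          _ < b - x := h3
      have h4 : b / ((n:ℝ) + 2) ≤ b / ((n:ℝ) + 1) :=
        div_le_div_of_nonneg_left hb.le (by positivity) (by linarith)
      simp only [htseq]
      linarith
  have hIoo : IntegrableOn f (Ioo 0 b) := hIoc.mono_set Ioo_subset_Ioc_self
  have ht1 : Tendsto (fun n : ℕ => ∫ x in Ioc (0:ℝ) (tseq n), f x) atTop
      (𝓝 (∫ x in Ioo (0:ℝ) b, f x)) := by
    have h13 := tendsto_setIntegral_of_monotone hsm hmono (by rw [hun]; exact hIoo)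
    rwa [hun] at h13
  have hGc : ContinuousOn G (Icc 1 M) := by
    have h := intervalIntegral.continuousOn_primitive_interval_left
      (a := (1:ℝ)) (b := M) (μ := volume) (f := gI c)
      (by rw [uIcc_of_le hM.le]; exact gI_int c M hM.le)
    rwa [uIcc_of_le hM.le] at h
  have ht2 : Tendsto (fun n : ℕ => ∫ x in Ioc (0:ℝ) (tseq n), f x) atTop (𝓝 (G 1)) := by
    have hv1 : Tendsto (fun n : ℕ => v (tseq n)) atTop (𝓝 1) := by
      have h14 := (hv.continuousAt (x := b)).tendsto.comp htseq_tend
      rwa [hvb] at h14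
    have hG1 : Tendsto (fun n : ℕ => G (v (tseq n))) atTop (𝓝 (G 1)) := by
      have hcw : ContinuousWithinAt G (Icc 1 M) 1 := hGc 1 ⟨le_refl 1, hM.le⟩
      apply hcw.tendsto.comp
      rw [tendsto_nhdsWithin_iff]
      exact ⟨hv1, Eventually.of_forall fun n => hvmem _ (htseq_mem n)⟩
    exact hG1.congr fun n => (hvals n).symm
  rw [integral_Ioc_eq_integral_Ioo]
  exact tendsto_nhds_unique ht1 ht2

lemma derivNegOut (v : ℝ → ℝ) (a : ℝ) (hv : Continuous v)
    (hcd : ContinuousOn (deriv v) (Ioi a))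
    (hdd : ∀ x ∈ Ioi a, deriv (deriv v) x = v x / (1 - v x ^ 2))
    (hr : ∀ x ∈ Ioi a, 0 < v x ∧ v x < 1)
    (hdec : Tendsto v atTop (𝓝 0)) :
    ∀ x ∈ Ioi a, deriv v x < 0 := by
  have hmono : StrictMonoOn (deriv v) (Ioi a) := by
    apply strictMonoOn_of_deriv_pos (convex_Ioi a) hcd
    intro x hx
    rw [interior_Ioi] at hx
    rw [hdd x hx]
    obtain ⟨h0, h1⟩ := hr x hx
    exact div_pos h0 (by nlinarith)
  by_contra hcon
  push_neg at hcon
  obtain ⟨x0, hx0, hge⟩ := hcon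
  rw [mem_Ioi] at hx0
  have hx1 : x0 + 1 ∈ Ioi a := mem_Ioi.2 (by linarith)
  have hd1 : 0 < deriv v (x0 + 1) :=
    lt_of_le_of_lt hge (hmono (mem_Ioi.2 hx0) hx1 (lt_add_one x0))
  have hvmono : StrictMonoOn v (Ici (x0 + 1)) := by
    apply strictMonoOn_of_deriv_pos (convex_Ici _) hv.continuousOn
    intro x hx
    rw [interior_Ici, mem_Ioi] at hx
    have hxa : x ∈ Ioi a := mem_Ioi.2 (by linarith)
    exact lt_trans hd1 (hmono hx1 hxa hx)
  have hle : v (x0 + 2) ≤ 0 := by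
    refine ge_of_tendsto hdec ?_
    filter_upwards [eventually_ge_atTop (x0 + 2)] with t ht
    exact hvmono.monotoneOn (mem_Ici.2 (by linarith))
      (mem_Ici.2 (by linarith)) ht
  exact absurd hle (not_le.2 (hr (x0 + 2) (mem_Ioi.2 (by linarith))).1)

end EnergyAux

open EnergyAux

/-- energy of the member u_C of the family of solitary waves:
∫_ℝ u'² dx = 2∫_0^1 √(−log(1−ξ²)) dξ + 2∫_1^{√(1+e^{2C})} √(2C − log(ξ²−1)) dξ.
In particular the energy is ≥ 2∫_0^1 √(−log(1−ξ²)) dξ, which equals the energy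
of the cusped soliton; hence the cusped soliton is the lowest energy state. -/
theorem energy_of_family_and_cusped_is_minimum
    (C lC : ℝ)
    (hlC : lC = ∫ ξ in (1 : ℝ)..Real.sqrt (1 + Real.exp (2 * C)),
      1 / Real.sqrt (2 * C - Real.log (ξ ^ 2 - 1)))
    (u : ℝ → ℝ)
    (hcont : Continuous u)
    (heven : ∀ x : ℝ, u (-x) = u x)
    (h0 : u 0 = Real.sqrt (1 + Real.exp (2 * C)))
    (hl : u lC = 1) (hml : u (-lC) = 1)
    (hin : ∀ x : ℝ, |x| < lC → 1 < u x ∧ u x ≤ Real.sqrt (1 + Real.exp (2 * C)))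
    (hout : ∀ x : ℝ, lC < |x| → 0 < u x ∧ u x < 1)
    (hdecay : Tendsto u (cocompact ℝ) (nhds 0))
    (hsmooth : ContDiffOn ℝ 2 u ({-lC, lC} : Set ℝ)ᶜ)
    (heq : ∀ x : ℝ, x ∉ ({-lC, lC} : Set ℝ) → (1 - u x ^ 2) * deriv (deriv u) x = u x)
    (hinvin : ∀ x : ℝ, 0 < |x| → |x| < lC →
      (deriv u x) ^ 2 = 2 * C - Real.log (u x ^ 2 - 1))
    (hinvout : ∀ x : ℝ, lC < |x| → (deriv u x) ^ 2 = -Real.log (1 - u x ^ 2))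
    (ucusp : ℝ → ℝ)
    (hccont : Continuous ucusp)
    (hceven : ∀ x : ℝ, ucusp (-x) = ucusp x)
    (hc0 : ucusp 0 = 1)
    (hcrange : ∀ x : ℝ, x ≠ 0 → 0 < ucusp x ∧ ucusp x < 1)
    (hcdecay : Tendsto ucusp (cocompact ℝ) (nhds 0))
    (hcsmooth : ContDiffOn ℝ 2 ucusp {(0 : ℝ)}ᶜ)
    (hceq : ∀ x : ℝ, x ≠ 0 → (1 - ucusp x ^ 2) * deriv (deriv ucusp) x = ucusp x)
    (hcinv : ∀ x : ℝ, x ≠ 0 → (deriv ucusp x) ^ 2 = -Real.log (1 - ucusp x ^ 2)) :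
    (∫ x : ℝ, (deriv u x) ^ 2) =
        2 * (∫ ξ in (0 : ℝ)..1, Real.sqrt (-Real.log (1 - ξ ^ 2))) +
          2 * (∫ ξ in (1 : ℝ)..Real.sqrt (1 + Real.exp (2 * C)),
            Real.sqrt (2 * C - Real.log (ξ ^ 2 - 1))) ∧
    (∫ x : ℝ, (deriv ucusp x) ^ 2) =
        2 * (∫ ξ in (0 : ℝ)..1, Real.sqrt (-Real.log (1 - ξ ^ 2))) ∧
    (∫ x : ℝ, (deriv ucusp x) ^ 2) ≤ ∫ x : ℝ, (deriv u x) ^ 2 := by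
  have hexppos := Real.exp_pos (2 * C)
  set M : ℝ := Real.sqrt (1 + Real.exp (2 * C)) with hMdef
  have hM2 : M ^ 2 = 1 + Real.exp (2 * C) := Real.sq_sqrt (by positivity)
  have hM1 : 1 < M := by
    have h1 := Real.sqrt_lt_sqrt (by norm_num : (0:ℝ) ≤ 1)
      (by linarith : (1:ℝ) < 1 + Real.exp (2 * C))
    rwa [Real.sqrt_one] at h1
  -- decay along atTop
  have hdec_top : Tendsto u atTop (𝓝 0) := by
    rw [cocompact_eq_atBot_atTop] at hdecay
    exact hdecay.mono_left le_sup_right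
  have hcdec_top : Tendsto ucusp atTop (𝓝 0) := by
    rw [cocompact_eq_atBot_atTop] at hcdecay
    exact hcdecay.mono_left le_sup_right
  -- positivity of lC
  have hlC0 : 0 < lC := by
    rcases lt_trichotomy lC 0 with h | h | h
    · exfalso
      have h2 := hout 0 (by rwa [abs_zero])
      rw [h0] at h2
      linarith [h2.2]
    · exfalso
      have key : ∀ x : ℝ, x ≠ 0 → u x < 1 := fun x hx =>
        (hout x (by rw [h]; exact abs_pos.2 hx)).2
      have htend : Tendsto u (𝓝[≠] (0:ℝ)) (𝓝 (u 0)) :=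
        (hcont.continuousAt).continuousWithinAt.tendsto
      have hle := le_of_tendsto htend
        (eventually_mem_nhdsWithin.mono fun x hx => (key x hx).le)
      rw [h0] at hle
      linarith
    · exact h
  -- membership helper
  have hnot : ∀ x : ℝ, x ≠ -lC → x ≠ lC → x ∉ ({-lC, lC} : Set ℝ) := by
    intro x h1 h2
    simp [h1, h2]
  have hΩopen : IsOpen (({-lC, lC} : Set ℝ)ᶜ) :=
    ((Set.finite_singleton lC).insert (-lC)).isClosed.isOpen_compl
  have hdiff : ∀ x : ℝ, x ∉ ({-lC, lC} : Set ℝ) → DifferentiableAt ℝ u x := fun x hx =>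
    (hsmooth.differentiableOn (by norm_num)).differentiableAt (hΩopen.mem_nhds hx)
  have hderivC : ContinuousOn (deriv u) (({-lC, lC} : Set ℝ)ᶜ) :=
    hsmooth.continuousOn_deriv_of_isOpen hΩopen (by norm_num)
  -- oddness of deriv u
  have hueq : (fun x => u (-x)) = u := funext heven
  have hodd : ∀ x : ℝ, deriv u x = -deriv u (-x) := by
    intro x
    have h1 := deriv_comp_neg u x
    rwa [hueq] at h1
  have hd0 : deriv u 0 = 0 := by
    have h1 := hodd 0
    rw [neg_zero] at h1
    linarith
  -- inner region: x ∈ Ico 0 lC is a regular point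
  have hIcoΩ : Ico 0 lC ⊆ ({-lC, lC} : Set ℝ)ᶜ := by
    intro x hx
    exact hnot x (by intro h; rw [h] at hx; linarith [hx.1]) (ne_of_lt hx.2)
  have hIoiΩ : Ioi lC ⊆ ({-lC, lC} : Set ℝ)ᶜ := by
    intro x hx
    rw [mem_Ioi] at hx
    exact hnot x (by intro h; rw [h] at hx; linarith) (by intro h; rw [h] at hx; linarith)
  -- second derivative formula
  have hddf : ∀ x : ℝ, x ∉ ({-lC, lC} : Set ℝ) → (1 - u x ^ 2) ≠ 0 →
      deriv (deriv u) x = u x / (1 - u x ^ 2) := by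
    intro x hx hne
    have h1 := heq x hx
    field_simp
    linarith [h1]
  -- deriv u < 0 on Ioo 0 lC
  have hanti : StrictAntiOn (deriv u) (Ico 0 lC) := by
    apply strictAntiOn_of_deriv_neg (convex_Ico 0 lC) (hderivC.mono hIcoΩ)
    intro x hx
    rw [interior_Ico] at hx
    have hxmem : x ∉ ({-lC, lC} : Set ℝ) := hIcoΩ ⟨hx.1.le, hx.2⟩
    have h1 : 1 < u x := (hin x (by rw [abs_of_pos hx.1]; exact hx.2)).1
    have hne : (1 - u x ^ 2) ≠ 0 := by nlinarith
    rw [hddf x hxmem hne]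
    exact div_neg_of_pos_of_neg (by linarith) (by nlinarith)
  have hneg_in : ∀ x ∈ Ioo 0 lC, deriv u x < 0 := by
    intro x hx
    have h1 := hanti (left_mem_Ico.2 hlC0) ⟨hx.1.le, hx.2⟩ hx.1
    rwa [hd0] at h1
  -- deriv u < 0 on Ioi lC
  have hr_out : ∀ x ∈ Ioi lC, 0 < u x ∧ u x < 1 := by
    intro x hx
    rw [mem_Ioi] at hx
    exact hout x (by rw [abs_of_pos (by linarith)]; exact hx)
  have hneg_out : ∀ x ∈ Ioi lC, deriv u x < 0 := by
    apply derivNegOut u lC hcont (hderivC.mono hIoiΩ)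
    · intro x hx
      obtain ⟨hp, hq⟩ := hr_out x hx
      exact hddf x (hIoiΩ hx) (by nlinarith)
    · exact hr_out
    · exact hdec_top
  -- outer computation for u
  have hinv_out' : ∀ x ∈ Ioi lC, (deriv u x) ^ 2 = -Real.log (1 - u x ^ 2) := by
    intro x hx
    rw [mem_Ioi] at hx
    exact hinvout x (by rw [abs_of_pos (lt_trans hlC0 hx)]; exact hx)
  have houter := outer u lC hcont hl
    (fun x hx => hdiff x (hIoiΩ hx)) hneg_out hr_out hinv_out' hdec_top
  -- inner computation for u
  have hinner := inner u lC M (2 * C) hlC0 hM1 hcont h0 hl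
    (by linarith [hM2])
    (fun x hx => hdiff x (hIcoΩ hx)) hd0 hneg_in
    (fun x hx => hin x (by rw [abs_of_pos hx.1]; exact hx.2))
    (fun x hx => hinvin x (by rw [abs_of_pos hx.1]; exact hx.1)
      (by rw [abs_of_pos hx.1]; exact hx.2))
    ((hderivC.mono hIcoΩ).pow 2)
  -- cusp
  have hcdiff : ∀ x : ℝ, x ≠ 0 → DifferentiableAt ℝ ucusp x := fun x hx =>
    (hcsmooth.differentiableOn (by norm_num)).differentiableAt
      (isOpen_compl_singleton.mem_nhds hx)
  have hcderivC : ContinuousOn (deriv ucusp) ({(0:ℝ)}ᶜ) :=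
    hcsmooth.continuousOn_deriv_of_isOpen isOpen_compl_singleton (by norm_num)
  have hcIoi : Ioi (0:ℝ) ⊆ ({(0:ℝ)}ᶜ : Set ℝ) := fun x hx => ne_of_gt (mem_Ioi.1 hx)
  have hcneg : ∀ x ∈ Ioi (0:ℝ), deriv ucusp x < 0 := by
    apply derivNegOut ucusp 0 hccont (hcderivC.mono hcIoi)
    · intro x hx
      have hx0 : x ≠ 0 := ne_of_gt (mem_Ioi.1 hx)
      obtain ⟨hp, hq⟩ := hcrange x hx0
      have h1 := hceq x hx0
      have hne : (1 - ucusp x ^ 2) ≠ 0 := by nlinarith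
      field_simp
      linarith [h1]
    · exact fun x hx => hcrange x (ne_of_gt (mem_Ioi.1 hx))
    · exact hcdec_top
  have hcouter := outer ucusp 0 hccont hc0
    (fun x hx => hcdiff x (ne_of_gt (mem_Ioi.1 hx))) hcneg
    (fun x hx => hcrange x (ne_of_gt (mem_Ioi.1 hx)))
    (fun x hx => hcinv x (ne_of_gt (mem_Ioi.1 hx)))
    hcdec_top
  -- evenness of squared derivatives
  have hsqeven : ∀ w : ℝ → ℝ, (∀ x : ℝ, w (-x) = w x) →
      ∀ x : ℝ, (deriv w |x|) ^ 2 = (deriv w x) ^ 2 := by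
    intro w hw x
    rcases le_or_gt 0 x with h | h
    · rw [abs_of_nonneg h]
    · rw [abs_of_neg h]
      have h1 := deriv_comp_neg w x
      rw [funext hw] at h1
      rw [h1]
      ring
  have hdouble : ∀ w : ℝ → ℝ, (∀ x : ℝ, w (-x) = w x) →
      (∫ x : ℝ, (deriv w x) ^ 2) = 2 * ∫ x in Ioi (0:ℝ), (deriv w x) ^ 2 := by
    intro w hw
    have h1 : (∫ x : ℝ, (deriv w x) ^ 2) = ∫ x : ℝ, (deriv w |x|) ^ 2 := by
      congr 1
      funext x
      rw [hsqeven w hw x]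
    rw [h1]
    exact integral_comp_abs (f := fun x => (deriv w x) ^ 2)
  -- split Ioi 0 for u
  have hsplit : (∫ x in Ioi (0:ℝ), (deriv u x) ^ 2) =
      (∫ x in Ioc (0:ℝ) lC, (deriv u x) ^ 2) + ∫ x in Ioi lC, (deriv u x) ^ 2 := by
    rw [← Ioc_union_Ioi_eq_Ioi hlC0.le]
    exact setIntegral_union (Ioc_disjoint_Ioi le_rfl) measurableSet_Ioi hinner.1 houter.1
  have hB : 0 ≤ ∫ ξ in (1:ℝ)..M, Real.sqrt (2 * C - Real.log (ξ ^ 2 - 1)) :=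
    intervalIntegral.integral_nonneg hM1.le (fun x _ => Real.sqrt_nonneg _)
  have hgO : (∫ ξ in (0:ℝ)..1, gO ξ) = ∫ ξ in (0:ℝ)..1, Real.sqrt (-Real.log (1 - ξ ^ 2)) := rfl
  have hgI : (∫ ξ in (1:ℝ)..M, gI (2 * C) ξ) =
      ∫ ξ in (1:ℝ)..M, Real.sqrt (2 * C - Real.log (ξ ^ 2 - 1)) := rfl
  refine ⟨?_, ?_, ?_⟩
  · rw [hdouble u heven, hsplit, hinner.2, houter.2, hgO, hgI]
    ring
  · rw [hdouble ucusp hceven, hcouter.2, hgO]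
  · rw [hdouble u heven, hsplit, hinner.2, houter.2, hgO, hgI,
      hdouble ucusp hceven, hcouter.2, hgO]
    linarith
end
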